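/- arXiv:1201.0626 — 6 statements merged into one kernel-verified Lean document; each statement's English description precedes it below -/
import Mathlib

section
/- Let Ṽ(a,n) be the clairvoyant value of the Chow–Robbins game from position (a,n). Then for every position (a,n), Ṽ(a,n) ≤ max(a/n, 1/2) + (1/4)·√(π/n). -/
open MeasureTheory ProbabilityTheory Real

/-- `X` is an i.i.d. sequence of fair coin flips taking values in `{0,1}`,
with probability `1/2` of heads (`= 1`). -/
def IsFairCoinSeq {Ω : Type*} [MeasurableSpace Ω] (μ : Measure Ω) (X : ℕ → Ω → ℝ) : Prop :=
  (∀ i, Measurable (X i)) ∧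
  (∀ i ω, X i ω = 0 ∨ X i ω = 1) ∧
  (∀ i, μ {ω | X i ω = 1} = 1/2) ∧
  iIndepFun X μ

/-- `headsProp X a n k ω` is the proportion of heads `R_k` after `k` further flips,
starting from position `(a,n)`: `a` heads out of `n` flips. -/
noncomputable def headsProp {Ω : Type*} (X : ℕ → Ω → ℝ) (a n k : ℕ) (ω : Ω) : ℝ :=
  ((a : ℝ) + ∑ i ∈ Finset.range k, X i ω) / ((n : ℝ) + k)

/-- The clairvoyant value `Ṽ(a,n) = E[sup_k R_k]`. -/
noncomputable def clairvoyantValue {Ω : Type*} [MeasurableSpace Ω] (μ : Measure Ω)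
    (X : ℕ → Ω → ℝ) (a n : ℕ) : ℝ :=
  ∫ ω, (⨆ k : ℕ, headsProp X a n k ω) ∂μ

open scoped ENNReal

namespace CRaux


/-- partial sum of the first `k` values -/
def psum (u : ℕ → ℝ) (k : ℕ) : ℝ := ∑ i ∈ Finset.range k, u i

/-- crossing the line `x * (n + k)` at time `k` -/
def crossD (x : ℝ) (n : ℕ) (u : ℕ → ℝ) (k : ℕ) : Prop :=
  x * ((n : ℝ) + k) ≤ psum u k - k / 2

open Classical in
/-- stopped exponential supermartingale value at time `N` -/
noncomputable def F (x : ℝ) (n : ℕ) : ℕ → (ℕ → ℝ) → ℝ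
  | 0, _ => 1
  | (N+1), u => if ∃ k ≤ N, crossD x n u k then F x n N u
      else Real.exp (4*x*(psum u (N+1) - (N+1)/2) - 2*x^2*(N+1))

lemma measurable_psum (k : ℕ) : Measurable (fun u : ℕ → ℝ => psum u k) :=
  Finset.measurable_sum _ (fun i _ => measurable_pi_apply i)

lemma measurableSet_crossSet (x : ℝ) (n N : ℕ) :
    MeasurableSet {u : ℕ → ℝ | ∃ k ≤ N, crossD x n u k} := by
  have : {u : ℕ → ℝ | ∃ k ≤ N, crossD x n u k}
      = ⋃ k, ⋃ (_ : k ≤ N), {u : ℕ → ℝ | x * ((n : ℝ) + k) ≤ psum u k - k / 2} := by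
    ext u; simp [crossD]
  rw [this]
  exact MeasurableSet.iUnion fun k => MeasurableSet.iUnion fun _ =>
    measurableSet_le measurable_const ((measurable_psum k).sub measurable_const)

lemma measurable_F (x : ℝ) (n N : ℕ) : Measurable (F x n N) := by
  induction N with
  | zero => simpa [F] using measurable_const
  | succ N ih =>
      have hg : Measurable (fun u : ℕ → ℝ =>
          Real.exp (4*x*(psum u (N+1) - (N+1)/2) - 2*x^2*(N+1))) := by
        exact (((measurable_psum (N+1)).sub measurable_const).const_mul _ |>.sub
          measurable_const).exp
      exact Measurable.ite (measurableSet_crossSet x n N) ih hg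

lemma F_congr (x : ℝ) (n : ℕ) : ∀ (N : ℕ) (u v : ℕ → ℝ), (∀ i < N, u i = v i) →
    F x n N u = F x n N v := by
  intro N
  induction N with
  | zero => intro u v _; simp [F]
  | succ N ih =>
      intro u v h
      have hps : ∀ k ≤ N + 1, psum u k = psum v k := by
        intro k hk
        exact Finset.sum_congr rfl fun i hi => h i (lt_of_lt_of_le (Finset.mem_range.mp hi) hk)
      have hc : (∃ k ≤ N, crossD x n u k) ↔ (∃ k ≤ N, crossD x n v k) := by
        constructor <;> rintro ⟨k, hk, hck⟩ <;> refine ⟨k, hk, ?_⟩ <;>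
          simpa [crossD, hps k (hk.trans (Nat.le_succ N))] using hck
      by_cases hcase : ∃ k ≤ N, crossD x n u k
      · rw [F, F, if_pos hcase, if_pos (hc.mp hcase)]
        exact ih u v fun i hi => h i (hi.trans (Nat.lt_succ_self N))
      · rw [F, F, if_neg hcase, if_neg (fun hcv => hcase (hc.mpr hcv)), hps (N+1) le_rfl]

lemma psum_nonneg {u : ℕ → ℝ} (hu : ∀ i, u i = 0 ∨ u i = 1) (k : ℕ) : 0 ≤ psum u k :=
  Finset.sum_nonneg fun i _ => by rcases hu i with h | h <;> simp [h]

lemma psum_le {u : ℕ → ℝ} (hu : ∀ i, u i = 0 ∨ u i = 1) (k : ℕ) : psum u k ≤ k := by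
  calc psum u k ≤ ∑ _i ∈ Finset.range k, (1:ℝ) :=
        Finset.sum_le_sum fun i _ => by rcases hu i with h | h <;> simp [h]
    _ = k := by simp

lemma F_nonneg (x : ℝ) (n : ℕ) : ∀ (N : ℕ) (u : ℕ → ℝ), 0 ≤ F x n N u := by
  intro N u
  induction N with
  | zero => simp [F]
  | succ N ih =>
      rw [F]
      split
      · exact ih
      · positivity

lemma F_le (x : ℝ) (hx : 0 ≤ x) (n : ℕ) {u : ℕ → ℝ} (hu : ∀ i, u i = 0 ∨ u i = 1) :
    ∀ N : ℕ, F x n N u ≤ Real.exp (2*x*N) := by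
  intro N
  induction N with
  | zero => simp [F]
  | succ N ih =>
      rw [F]
      split
      · refine ih.trans (Real.exp_le_exp.mpr ?_)
        push_cast
        nlinarith
      · apply Real.exp_le_exp.mpr
        have h1 : psum u (N+1) ≤ (N+1 : ℝ) := by exact_mod_cast psum_le hu (N+1)
        have h2 : (0:ℝ) ≤ 2*x^2*((N:ℝ)+1) := by positivity
        push_cast
        nlinarith

lemma F_on_cross {x : ℝ} (hx : 0 < x) {n : ℕ} (hn : 1 ≤ n) {u : ℕ → ℝ} :
    ∀ N : ℕ, (∃ k ≤ N, crossD x n u k) → Real.exp (4*x^2*n) ≤ F x n N u := by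
  intro N
  induction N with
  | zero =>
      rintro ⟨k, hk, hck⟩
      interval_cases k
      exfalso
      have : psum u 0 = 0 := by simp [psum]
      rw [crossD, this] at hck
      have hn' : (1:ℝ) ≤ n := by exact_mod_cast hn
      nlinarith
  | succ N ih =>
      rintro ⟨k, hk, hck⟩
      rw [F]
      split
      · next h => exact ih h
      · next h =>
          have hkN : k = N + 1 := by
            rcases Nat.lt_succ_iff_lt_or_eq.mp (Nat.lt_succ_of_le hk) with h' | h'
            · exact absurd ⟨k, Nat.lt_succ_iff.mp h', hck⟩ h
            · exact h'
          subst hkN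
          apply Real.exp_le_exp.mpr
          rw [crossD] at hck
          push_cast at hck ⊢
          have hn' : (1:ℝ) ≤ n := by exact_mod_cast hn
          nlinarith [hck]

lemma F_off_cross (x : ℝ) (n : ℕ) {u : ℕ → ℝ} :
    ∀ N : ℕ, (¬ ∃ k ≤ N, crossD x n u k) →
      F x n N u = Real.exp (4*x*(psum u N - N/2) - 2*x^2*N) := by
  intro N
  induction N with
  | zero => intro _; simp [F, psum]
  | succ N _ =>
      intro h
      rw [F, if_neg (fun ⟨k, hk, hck⟩ => h ⟨k, hk.trans (Nat.le_succ N), hck⟩)]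
      push_cast
      ring_nf


lemma F_zero (x : ℝ) (n : ℕ) (u : ℕ → ℝ) : F x n 0 u = 1 := rfl

open Classical in
lemma F_succ (x : ℝ) (n N : ℕ) (u : ℕ → ℝ) :
    F x n (N+1) u = if ∃ k ≤ N, crossD x n u k then F x n N u
      else Real.exp (4*x*(psum u (N+1) - (N+1)/2) - 2*x^2*(N+1)) := by
  rw [F]

-- probabilistic layer
section Prob
variable {Ω : Type*} [MeasurableSpace Ω] (μ : Measure Ω) [IsProbabilityMeasure μ]
  (X : ℕ → Ω → ℝ)

/-- the path of partial observations -/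
def pth (X : ℕ → Ω → ℝ) (ω : Ω) : ℕ → ℝ := fun i => X i ω

lemma measurable_pth (hm : ∀ i, Measurable (X i)) : Measurable (pth X) :=
  measurable_pi_lambda _ hm

lemma integrable_of_bdd {f : Ω → ℝ} (hf : Measurable f) (h0 : ∀ ω, 0 ≤ f ω) {C : ℝ}
    (hC : ∀ ω, f ω ≤ C) : Integrable f μ :=
  (integrable_const C).mono' hf.aestronglyMeasurable
    (ae_of_all _ fun ω => by rw [Real.norm_eq_abs, abs_of_nonneg (h0 ω)]; exact hC ω)

variable {X}

open Classical in
lemma integral_F_succ_le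
    (hm : ∀ i, Measurable (X i)) (hvals : ∀ i ω, X i ω = 0 ∨ X i ω = 1)
    (hhalf : ∀ i, μ {ω | X i ω = 1} = 1/2)
    (hind : iIndepFun X μ)
    {x : ℝ} (hx : 0 < x) (n N : ℕ) :
    ∫ ω, F x n (N+1) (pth X ω) ∂μ ≤ ∫ ω, F x n N (pth X ω) ∂μ := by
  set A : Set Ω := {ω | ∃ k ≤ N, crossD x n (pth X ω) k} with hA
  have hAmeas : MeasurableSet A := (measurable_pth X hm) (measurableSet_crossSet x n N)
  set g : Ω → ℝ := fun ω => Real.exp (4*x*(X N ω - 1/2) - 2*x^2) with hg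
  set Y : Ω → ℝ := fun ω => F x n N (pth X ω) with hY
  have hYmeas : Measurable Y := (measurable_F x n N).comp (measurable_pth X hm)
  have hY0 : ∀ ω, 0 ≤ Y ω := fun ω => F_nonneg x n N _
  have hYle : ∀ ω, Y ω ≤ Real.exp (2*x*N) := fun ω =>
    F_le x hx.le n (fun i => hvals i ω) N
  -- decomposition
  have hdecomp : ∀ ω, F x n (N+1) (pth X ω)
      = A.indicator Y ω + (Aᶜ.indicator Y ω) * g ω := by
    intro ω
    by_cases hω : ω ∈ A
    · have hωP : ∃ k ≤ N, crossD x n (pth X ω) k := hω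
      rw [F_succ, if_pos hωP, Set.indicator_of_mem hω,
        Set.indicator_of_notMem (by simpa using hω), zero_mul, add_zero]
    · have hωP : ¬ ∃ k ≤ N, crossD x n (pth X ω) k := hω
      have hYω : Y ω = Real.exp (4*x*(psum (pth X ω) N - (N:ℝ)/2) - 2*x^2*N) :=
        F_off_cross x n N hωP
      rw [F_succ, if_neg hωP, Set.indicator_of_notMem hω,
        Set.indicator_of_mem (by simpa using hω), zero_add, hYω]
      simp only [hg]
      rw [← Real.exp_add]
      congr 1
      have : psum (pth X ω) (N+1) = psum (pth X ω) N + X N ω := by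
        simp [psum, Finset.sum_range_succ, pth]
      rw [this]
      push_cast
      ring
  -- independence
  have hindep : IndepFun (Aᶜ.indicator Y) g μ := by
    classical
    set Hfun : (ℕ → ℝ) → ℝ :=
      fun u => if ∃ k ≤ N, crossD x n u k then 0 else F x n N u with hHfun
    have hHmeas : Measurable Hfun :=
      Measurable.ite (measurableSet_crossSet x n N) measurable_const (measurable_F x n N)
    have hHcongr : ∀ u v : ℕ → ℝ, (∀ i < N, u i = v i) → Hfun u = Hfun v := by
      intro u v h
      have hps : ∀ k ≤ N, psum u k = psum v k := fun k hk =>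
        Finset.sum_congr rfl fun i hi => h i (lt_of_lt_of_le (Finset.mem_range.mp hi) hk)
      have hc : (∃ k ≤ N, crossD x n u k) ↔ (∃ k ≤ N, crossD x n v k) := by
        constructor <;> rintro ⟨k, hk, hck⟩ <;> exact ⟨k, hk, by
          simpa [crossD, hps k hk] using hck⟩
      rw [hHfun]
      by_cases hcase : ∃ k ≤ N, crossD x n u k
      · simp only [if_pos hcase, if_pos (hc.mp hcase)]
      · simp only [if_neg hcase, if_neg (fun hv => hcase (hc.mpr hv))]
        exact F_congr x n N u v h
    have hI := hind.indepFun_finset (Finset.range N) {N}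
      (by simp +contextual [Finset.disjoint_left, Nat.ne_of_lt]) hm
    set φ : (↥(Finset.range N) → ℝ) → ℝ :=
      fun v => Hfun (fun i => if h : i ∈ Finset.range N then v ⟨i, h⟩ else 0) with hφ
    set ψ : (↥({N} : Finset ℕ) → ℝ) → ℝ :=
      fun v => Real.exp (4*x*(v ⟨N, by simp⟩ - 1/2) - 2*x^2) with hψ
    have hφm : Measurable φ := by
      apply hHmeas.comp
      apply measurable_pi_lambda
      intro i
      by_cases h : i ∈ Finset.range N
      · simpa [h] using (measurable_pi_apply (⟨i, h⟩ : ↥(Finset.range N)))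
      · simpa [h] using measurable_const
    have hψm : Measurable ψ := by
      apply Real.measurable_exp.comp
      exact (((measurable_pi_apply _).sub measurable_const).const_mul _).sub measurable_const
    have hfun1 : Aᶜ.indicator Y = φ ∘ (fun a (i : ↥(Finset.range N)) => X i a) := by
      funext ω
      have hφH : φ (fun i : ↥(Finset.range N) => X i ω) = Hfun (pth X ω) := by
        apply hHcongr
        intro i hi
        simp [Finset.mem_range.mpr hi, pth]
      show Aᶜ.indicator Y ω = φ (fun i : ↥(Finset.range N) => X i ω)
      rw [hφH]
      by_cases hω : ω ∈ A
      · have hωP : ∃ k ≤ N, crossD x n (pth X ω) k := hω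
        rw [Set.indicator_of_notMem (by simpa using hω)]
        simp only [hHfun]
        rw [if_pos hωP]
      · have hωP : ¬ ∃ k ≤ N, crossD x n (pth X ω) k := hω
        rw [Set.indicator_of_mem (by simpa using hω)]
        simp only [hHfun, hY]
        rw [if_neg hωP]
    have hfun2 : g = ψ ∘ (fun a (i : ↥({N} : Finset ℕ)) => X i a) := by
      funext ω
      simp [hψ, hg]
    rw [hfun1, hfun2]
    exact hI.comp hφm hψm
  -- integrability
  have hgmeas : Measurable g := (((hm N).sub measurable_const).const_mul _).sub
    measurable_const |>.exp
  have hg0 : ∀ ω, 0 ≤ g ω := fun ω => (Real.exp_pos _).le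
  have hgle : ∀ ω, g ω ≤ Real.exp (2*x) := by
    intro ω
    apply Real.exp_le_exp.mpr
    rcases hvals N ω with h | h <;> rw [h] <;> nlinarith
  have hYint : Integrable Y μ := integrable_of_bdd μ hYmeas hY0 hYle
  have hAYint : Integrable (A.indicator Y) μ :=
    integrable_of_bdd μ (hYmeas.indicator hAmeas)
      (fun ω => Set.indicator_nonneg (fun ω _ => hY0 ω) ω)
      (fun ω => Set.indicator_le' (fun ω _ => hYle ω) (fun ω _ => (Real.exp_pos _).le) ω)
  have hAcYint : Integrable (Aᶜ.indicator Y) μ :=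
    integrable_of_bdd μ (hYmeas.indicator hAmeas.compl)
      (fun ω => Set.indicator_nonneg (fun ω _ => hY0 ω) ω)
      (fun ω => Set.indicator_le' (fun ω _ => hYle ω) (fun ω _ => (Real.exp_pos _).le) ω)
  have hgint : Integrable g μ := integrable_of_bdd μ hgmeas hg0 hgle
  -- the expectation of g is at most 1
  have hgval : ∫ ω, g ω ∂μ ≤ 1 := by
    have hset : MeasurableSet {ω | X N ω = 1} := (hm N) (measurableSet_singleton 1)
    have hdg : g = {ω | X N ω = 1}.indicator (fun _ => Real.exp (2*x - 2*x^2))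
        + {ω | X N ω = 1}ᶜ.indicator (fun _ => Real.exp (-(2*x) - 2*x^2)) := by
      funext ω
      by_cases hω : X N ω = 1
      · have hmem : ω ∈ {ω | X N ω = 1} := hω
        rw [Pi.add_apply, Set.indicator_of_mem hmem,
          Set.indicator_of_notMem (s := {ω | X N ω = 1}ᶜ) (fun hc => hc hmem), add_zero]
        simp only [hg]
        rw [hω]
        congr 1
        ring
      · have hz : X N ω = 0 := (hvals N ω).resolve_right hω
        have hmem : ω ∈ {ω | X N ω = 1}ᶜ := hω
        rw [Pi.add_apply, Set.indicator_of_notMem (s := {ω | X N ω = 1}) hω,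
          Set.indicator_of_mem hmem, zero_add]
        simp only [hg]
        rw [hz]
        congr 1
        ring
    have hcompl : μ {ω | X N ω = 1}ᶜ = 1/2 := by
      rw [measure_compl hset (measure_ne_top μ _), hhalf N, measure_univ]
      simpa using ENNReal.sub_half (a := 1) one_ne_top
    rw [hdg]
    simp only [Pi.add_apply]
    rw [integral_add
        ((integrable_const _).indicator hset) ((integrable_const _).indicator hset.compl),
      integral_indicator_const _ hset, integral_indicator_const _ hset.compl,
      measureReal_def, measureReal_def, hhalf N, hcompl]
    have htor : ((1:ℝ≥0∞)/2).toReal = 1/2 := by simp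
    rw [htor, smul_eq_mul, smul_eq_mul]
    have hcosh : Real.exp (2*x - 2*x^2) + Real.exp (-(2*x) - 2*x^2)
        = 2 * Real.exp (-(2*x^2)) * Real.cosh (2*x) := by
      rw [Real.cosh_eq]
      rw [show 2*x - 2*x^2 = -(2*x^2) + 2*x by ring, show -(2*x) - 2*x^2 = -(2*x^2) + -(2*x) by ring,
        Real.exp_add, Real.exp_add]
      ring
    have hch : Real.cosh (2*x) ≤ Real.exp (2*x^2) := by
      have := Real.cosh_le_exp_half_sq (2*x)
      calc Real.cosh (2*x) ≤ Real.exp ((2*x)^2/2) := this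
        _ = Real.exp (2*x^2) := by ring_nf
    calc (1:ℝ)/2 * Real.exp (2*x - 2*x^2) + 1/2 * Real.exp (-(2*x) - 2*x^2)
        = Real.exp (-(2*x^2)) * Real.cosh (2*x) := by rw [← mul_comm]; nlinarith [hcosh]
      _ ≤ Real.exp (-(2*x^2)) * Real.exp (2*x^2) :=
          mul_le_mul_of_nonneg_left hch (Real.exp_pos _).le
      _ = 1 := by rw [← Real.exp_add]; simp
  have hPint : Integrable (fun ω => (Aᶜ.indicator Y ω) * g ω) μ := by
    refine integrable_of_bdd μ ((hYmeas.indicator hAmeas.compl).mul hgmeas)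
      (fun ω => mul_nonneg (Set.indicator_nonneg (fun ω _ => hY0 ω) ω) (hg0 ω))
      (C := Real.exp (2*x*N) * Real.exp (2*x)) (fun ω => ?_)
    exact mul_le_mul
      (Set.indicator_le' (fun ω _ => hYle ω) (fun ω _ => (Real.exp_pos _).le) ω)
      (hgle ω) (hg0 ω) (Real.exp_pos _).le
  -- put it together
  calc ∫ ω, F x n (N+1) (pth X ω) ∂μ
      = ∫ ω, (A.indicator Y ω + (Aᶜ.indicator Y ω) * g ω) ∂μ :=
        integral_congr_ae (ae_of_all _ hdecomp)
    _ = (∫ ω, A.indicator Y ω ∂μ) + ∫ ω, (Aᶜ.indicator Y ω) * g ω ∂μ :=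
        integral_add hAYint hPint
    _ = (∫ ω, A.indicator Y ω ∂μ) + (∫ ω, Aᶜ.indicator Y ω ∂μ) * ∫ ω, g ω ∂μ := by
        congr 1
        exact hindep.integral_fun_mul_eq_mul_integral hAcYint.aestronglyMeasurable hgint.aestronglyMeasurable
    _ ≤ (∫ ω, A.indicator Y ω ∂μ) + (∫ ω, Aᶜ.indicator Y ω ∂μ) * 1 := by
        gcongr
        exact integral_nonneg fun ω => Set.indicator_nonneg (fun ω _ => hY0 ω) ω
    _ = ∫ ω, (A.indicator Y ω + Aᶜ.indicator Y ω) ∂μ := by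
        rw [mul_one, ← integral_add hAYint hAcYint]
    _ = ∫ ω, Y ω ∂μ := by
        apply integral_congr_ae (ae_of_all _ fun ω => ?_)
        conv_rhs => rw [← Set.indicator_self_add_compl A Y]
        rfl

lemma integral_F_le_one
    (hm : ∀ i, Measurable (X i)) (hvals : ∀ i ω, X i ω = 0 ∨ X i ω = 1)
    (hhalf : ∀ i, μ {ω | X i ω = 1} = 1/2)
    (hind : iIndepFun X μ)
    {x : ℝ} (hx : 0 < x) (n N : ℕ) :
    ∫ ω, F x n N (pth X ω) ∂μ ≤ 1 := by
  induction N with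
  | zero =>
      have : ∀ ω, F x n 0 (pth X ω) = 1 := fun ω => F_zero x n _
      rw [integral_congr_ae (ae_of_all _ this), integral_const, probReal_univ]
      simp
  | succ N ih => exact (integral_F_succ_le μ hm hvals hhalf hind hx n N).trans ih

lemma meas_cross_le
    (hm : ∀ i, Measurable (X i)) (hvals : ∀ i ω, X i ω = 0 ∨ X i ω = 1)
    (hhalf : ∀ i, μ {ω | X i ω = 1} = 1/2)
    (hind : iIndepFun X μ)
    {x : ℝ} (hx : 0 < x) {n : ℕ} (hn : 1 ≤ n) :
    μ {ω | ∃ k, crossD x n (pth X ω) k} ≤ ENNReal.ofReal (Real.exp (-(4*x^2*n))) := by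
  set Aset : ℕ → Set Ω := fun N => {ω | ∃ k ≤ N, crossD x n (pth X ω) k} with hAset
  have hAmeas : ∀ N, MeasurableSet (Aset N) := fun N =>
    (measurable_pth X hm) (measurableSet_crossSet x n N)
  have hbound : ∀ N, μ (Aset N) ≤ ENNReal.ofReal (Real.exp (-(4*x^2*n))) := by
    intro N
    have hYint : Integrable (fun ω => F x n N (pth X ω)) μ :=
      integrable_of_bdd μ ((measurable_F x n N).comp (measurable_pth X hm))
        (fun ω => F_nonneg x n N _) (fun ω => F_le x hx.le n (fun i => hvals i ω) N)
    have h1 : ∀ ω, (Aset N).indicator (fun _ => Real.exp (4*x^2*n)) ω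
        ≤ F x n N (pth X ω) := by
      intro ω
      by_cases hω : ω ∈ Aset N
      · rw [Set.indicator_of_mem hω]
        exact F_on_cross hx hn N hω
      · rw [Set.indicator_of_notMem hω]
        exact F_nonneg x n N _
    have h2 := integral_mono ((integrable_const _).indicator (hAmeas N)) hYint h1
    rw [integral_indicator_const _ (hAmeas N), smul_eq_mul] at h2
    have h3 := h2.trans (integral_F_le_one μ hm hvals hhalf hind hx n N)
    have h4 : (μ (Aset N)).toReal ≤ Real.exp (-(4*x^2*n)) := by
      have hE : Real.exp (-(4*x^2*(n:ℝ))) * Real.exp (4*x^2*(n:ℝ)) = 1 := by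
        rw [← Real.exp_add]; simp
      rw [measureReal_def] at h3
      nlinarith [Real.exp_pos (4*x^2*(n:ℝ)), ENNReal.toReal_nonneg (a := μ (Aset N))]
    exact (ENNReal.le_ofReal_iff_toReal_le (measure_ne_top μ _) (Real.exp_pos _).le).mpr h4
  have hunion : {ω | ∃ k, crossD x n (pth X ω) k} = ⋃ N, Aset N := by
    ext ω
    simp only [Set.mem_setOf_eq, Set.mem_iUnion, hAset]
    exact ⟨fun ⟨k, hk⟩ => ⟨k, k, le_rfl, hk⟩, fun ⟨N, k, _, hk⟩ => ⟨k, hk⟩⟩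
  have hdir : Directed (· ⊆ ·) Aset := by
    have hmono : Monotone Aset := fun M N hMN ω ⟨k, hk, hck⟩ => ⟨k, hk.trans hMN, hck⟩
    exact hmono.directed_le
  rw [hunion, hdir.measure_iUnion]
  exact iSup_le hbound

/-- the supremum of the centered drift terms -/
noncomputable def Gfun (X : ℕ → Ω → ℝ) (n : ℕ) (ω : Ω) : ℝ :=
  ⨆ k : ℕ, (psum (pth X ω) k - k/2) / ((n:ℝ) + k)

lemma Gterm_le_half {n : ℕ} (hn : 1 ≤ n) {ω : Ω} (hvals : ∀ i, X i ω = 0 ∨ X i ω = 1)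
    (k : ℕ) : (psum (pth X ω) k - k/2) / ((n:ℝ) + k) ≤ 1/2 := by
  have hpos : (0:ℝ) < (n:ℝ) + k := by
    have : (1:ℝ) ≤ (n:ℝ) := by exact_mod_cast hn
    positivity
  rw [div_le_iff₀ hpos]
  have h1 : psum (pth X ω) k ≤ k := psum_le hvals k
  have : (1:ℝ) ≤ (n:ℝ) := by exact_mod_cast hn
  nlinarith

lemma Gfun_bddAbove {n : ℕ} (hn : 1 ≤ n) {ω : Ω} (hvals : ∀ i, X i ω = 0 ∨ X i ω = 1) :
    BddAbove (Set.range fun k : ℕ => (psum (pth X ω) k - k/2) / ((n:ℝ) + k)) :=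
  ⟨1/2, by rintro y ⟨k, rfl⟩; exact Gterm_le_half hn hvals k⟩

lemma Gfun_nonneg {n : ℕ} (hn : 1 ≤ n) {ω : Ω} (hvals : ∀ i, X i ω = 0 ∨ X i ω = 1) :
    0 ≤ Gfun X n ω := by
  have h0 : (psum (pth X ω) 0 - (0:ℕ)/2) / ((n:ℝ) + (0:ℕ)) = 0 := by
    simp [psum]
  calc (0:ℝ) = (psum (pth X ω) 0 - (0:ℕ)/2) / ((n:ℝ) + (0:ℕ)) := h0.symm
    _ ≤ Gfun X n ω := le_ciSup (Gfun_bddAbove hn hvals) 0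

lemma Gfun_le_half {n : ℕ} (hn : 1 ≤ n) {ω : Ω} (hvals : ∀ i, X i ω = 0 ∨ X i ω = 1) :
    Gfun X n ω ≤ 1/2 :=
  ciSup_le fun k => Gterm_le_half hn hvals k

lemma measurable_Gfun (hm : ∀ i, Measurable (X i)) (n : ℕ) :
    Measurable (Gfun X n) :=
  Measurable.iSup fun k =>
    (((measurable_psum k).comp (measurable_pth X hm)).sub measurable_const).div_const _

lemma tail_Gfun
    (hm : ∀ i, Measurable (X i)) (hvals : ∀ i ω, X i ω = 0 ∨ X i ω = 1)
    (hhalf : ∀ i, μ {ω | X i ω = 1} = 1/2)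
    (hind : iIndepFun X μ)
    {n : ℕ} (hn : 1 ≤ n) {t : ℝ} (ht : 0 < t) :
    (μ {ω | t < Gfun X n ω}).toReal ≤ Real.exp (-(4*t^2*n)) := by
  have hsub : {ω | t < Gfun X n ω} ⊆ {ω | ∃ k, crossD t n (pth X ω) k} := by
    intro ω hω
    obtain ⟨k, hk⟩ := (lt_ciSup_iff (Gfun_bddAbove hn (fun i => hvals i ω))).mp hω
    refine ⟨k, ?_⟩
    have hpos : (0:ℝ) < (n:ℝ) + k := by
      have : (1:ℝ) ≤ (n:ℝ) := by exact_mod_cast hn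
      positivity
    rw [crossD]
    rw [lt_div_iff₀ hpos] at hk
    linarith [hk]
  calc (μ {ω | t < Gfun X n ω}).toReal
      ≤ (μ {ω | ∃ k, crossD t n (pth X ω) k}).toReal :=
        ENNReal.toReal_mono (measure_ne_top μ _) (measure_mono hsub)
    _ ≤ Real.exp (-(4*t^2*n)) :=
        ENNReal.toReal_le_of_le_ofReal (Real.exp_pos _).le
          (meas_cross_le μ hm hvals hhalf hind ht hn)

lemma integral_Gfun_le
    (hm : ∀ i, Measurable (X i)) (hvals : ∀ i ω, X i ω = 0 ∨ X i ω = 1)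
    (hhalf : ∀ i, μ {ω | X i ω = 1} = 1/2)
    (hind : iIndepFun X μ)
    {n : ℕ} (hn : 1 ≤ n) :
    ∫ ω, Gfun X n ω ∂μ ≤ Real.sqrt (π / n) / 4 := by
  have hGint : Integrable (Gfun X n) μ :=
    integrable_of_bdd μ (measurable_Gfun hm n)
      (fun ω => Gfun_nonneg hn (fun i => hvals i ω))
      (fun ω => Gfun_le_half hn (fun i => hvals i ω))
  rw [hGint.integral_eq_integral_meas_lt
    (ae_of_all _ (fun ω => Gfun_nonneg hn (fun i => hvals i ω)))]
  have hnpos : (0:ℝ) < 4 * n := by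
    have : (1:ℝ) ≤ (n:ℝ) := by exact_mod_cast hn
    positivity
  have hint2 : IntegrableOn (fun t : ℝ => Real.exp (-(4*(n:ℝ)) * t^2)) (Set.Ioi 0) :=
    (integrable_exp_neg_mul_sq hnpos).integrableOn
  have hmeas1 : Measurable (fun t : ℝ => (μ {ω | t < Gfun X n ω}).toReal) := by
    apply Measurable.ennreal_toReal
    exact Antitone.measurable (fun s t hst => measure_mono (fun ω h => lt_of_le_of_lt hst h))
  have hptwise : ∀ t ∈ Set.Ioi (0:ℝ),
      (μ {ω | t < Gfun X n ω}).toReal ≤ Real.exp (-(4*(n:ℝ)) * t^2) := by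
    intro t ht
    have := tail_Gfun μ hm hvals hhalf hind hn ht
    calc (μ {ω | t < Gfun X n ω}).toReal ≤ Real.exp (-(4*t^2*n)) := this
      _ = Real.exp (-(4*(n:ℝ)) * t^2) := by ring_nf
  have hint1 : IntegrableOn (fun t : ℝ => (μ {ω | t < Gfun X n ω}).toReal) (Set.Ioi 0) := by
    refine hint2.mono' hmeas1.aestronglyMeasurable ?_
    rw [ae_restrict_iff' measurableSet_Ioi]
    refine ae_of_all _ (fun t ht => ?_)
    rw [Real.norm_eq_abs, abs_of_nonneg ENNReal.toReal_nonneg]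
    exact hptwise t ht
  calc ∫ t in Set.Ioi 0, (μ {ω | t < Gfun X n ω}).toReal
      ≤ ∫ t in Set.Ioi 0, Real.exp (-(4*(n:ℝ)) * t^2) :=
        setIntegral_mono_on hint1 hint2 measurableSet_Ioi hptwise
    _ = Real.sqrt (π / (4*(n:ℝ))) / 2 := integral_gaussian_Ioi _
    _ = Real.sqrt (π / n) / 4 := by
        rw [show π / (4*(n:ℝ)) = (π / n) * (1/4) by ring,
          Real.sqrt_mul (by positivity) (1/4),
          show Real.sqrt (1/4) = 1/2 by
            rw [show (1/4:ℝ) = (1/2)^2 by norm_num, Real.sqrt_sq (by norm_num)]]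
        ring

end Prob
end CRaux

/-- For every position `(a,n)`, `Ṽ(a,n) ≤ max(a/n, 1/2) + (1/4)·√(π/n)`. -/
theorem clairvoyant_le_add_sqrt {Ω : Type*} [MeasurableSpace Ω] (μ : Measure Ω)
    [IsProbabilityMeasure μ] (X : ℕ → Ω → ℝ) (hX : IsFairCoinSeq μ X)
    (a n : ℕ) (hn : 1 ≤ n) (han : a ≤ n) :
    clairvoyantValue μ X a n ≤
      max ((a : ℝ) / n) (1 / 2) + (1 / 4) * Real.sqrt (π / n) := by
  obtain ⟨hm, hvals, hhalf, hind⟩ := hX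
  set C := max ((a:ℝ)/n) (1/2) with hC
  have hn1 : (1:ℝ) ≤ (n:ℝ) := by exact_mod_cast hn
  have hnpos : (0:ℝ) < n := by linarith
  -- pointwise bound by C + Gfun
  have hpt : ∀ ω, (⨆ k : ℕ, headsProp X a n k ω) ≤ C + CRaux.Gfun X n ω := by
    intro ω
    apply ciSup_le
    intro k
    have hpos : (0:ℝ) < (n:ℝ) + k := by positivity
    have hCn : (a:ℝ) ≤ C * n := by
      have h1 : (a:ℝ)/n ≤ C := le_max_left _ _
      calc (a:ℝ) = ((a:ℝ)/n) * n := by field_simp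
        _ ≤ C * n := by nlinarith
    have hCk : (k:ℝ)/2 ≤ C * k := by
      have h2 : (1:ℝ)/2 ≤ C := le_max_right _ _
      nlinarith [Nat.cast_nonneg (α := ℝ) k]
    have hterm : (CRaux.psum (CRaux.pth X ω) k - (k:ℝ)/2) / ((n:ℝ)+k) ≤ CRaux.Gfun X n ω :=
      le_ciSup (CRaux.Gfun_bddAbove hn (fun i => hvals i ω)) k
    have hps : CRaux.psum (CRaux.pth X ω) k = ∑ i ∈ Finset.range k, X i ω := rfl
    have heq : headsProp X a n k ω
        = ((a:ℝ) + (k:ℝ)/2)/((n:ℝ)+k)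
          + (CRaux.psum (CRaux.pth X ω) k - (k:ℝ)/2)/((n:ℝ)+k) := by
      rw [headsProp, ← add_div, hps]
      congr 1
      ring
    rw [heq]
    have h1 : ((a:ℝ) + (k:ℝ)/2)/((n:ℝ)+k) ≤ C := by
      rw [div_le_iff₀ hpos]
      nlinarith
    linarith
  -- integrability
  have hsupmeas : Measurable (fun ω => ⨆ k : ℕ, headsProp X a n k ω) := by
    apply Measurable.iSup
    intro k
    exact (measurable_const.add
      ((CRaux.measurable_psum k).comp (CRaux.measurable_pth X hm))).div_const _
  have h0 : ∀ k (ω : Ω), 0 ≤ headsProp X a n k ω := by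
    intro k ω
    have hpos : (0:ℝ) < (n:ℝ) + k := by positivity
    have hs0 : 0 ≤ ∑ i ∈ Finset.range k, X i ω := CRaux.psum_nonneg (fun i => hvals i ω) k
    rw [headsProp]
    apply div_nonneg _ hpos.le
    positivity
  have h1b : ∀ k (ω : Ω), headsProp X a n k ω ≤ 1 := by
    intro k ω
    have hpos : (0:ℝ) < (n:ℝ) + k := by positivity
    have hsk : ∑ i ∈ Finset.range k, X i ω ≤ k := CRaux.psum_le (fun i => hvals i ω) k
    rw [headsProp, div_le_one hpos]
    have : (a:ℝ) ≤ n := by exact_mod_cast han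
    linarith
  have hbdd : ∀ ω : Ω, BddAbove (Set.range fun k : ℕ => headsProp X a n k ω) :=
    fun ω => ⟨1, by rintro y ⟨k, rfl⟩; exact h1b k ω⟩
  have hsup0 : ∀ ω : Ω, 0 ≤ ⨆ k : ℕ, headsProp X a n k ω :=
    fun ω => (h0 0 ω).trans (le_ciSup (hbdd ω) 0)
  have hsup1 : ∀ ω : Ω, (⨆ k : ℕ, headsProp X a n k ω) ≤ 1 :=
    fun ω => ciSup_le fun k => h1b k ω
  have hsupint : Integrable (fun ω => ⨆ k : ℕ, headsProp X a n k ω) μ :=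
    CRaux.integrable_of_bdd μ hsupmeas hsup0 hsup1
  have hGint : Integrable (CRaux.Gfun X n) μ :=
    CRaux.integrable_of_bdd μ (CRaux.measurable_Gfun hm n)
      (fun ω => CRaux.Gfun_nonneg hn (fun i => hvals i ω))
      (fun ω => CRaux.Gfun_le_half hn (fun i => hvals i ω))
  rw [clairvoyantValue]
  calc ∫ ω, (⨆ k : ℕ, headsProp X a n k ω) ∂μ
      ≤ ∫ ω, (C + CRaux.Gfun X n ω) ∂μ :=
        integral_mono hsupint ((integrable_const C).add hGint) hpt
    _ = C + ∫ ω, CRaux.Gfun X n ω ∂μ := by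
        rw [integral_add (integrable_const C) hGint, integral_const, probReal_univ]
        simp
    _ ≤ C + Real.sqrt (π/n)/4 := by
        linarith [CRaux.integral_Gfun_le μ hm hvals hhalf hind hn]
    _ = C + 1/4 * Real.sqrt (π/n) := by ring
end

section
/- Let Ṽ(a,n) be the clairvoyant value of the Chow–Robbins game from position (a,n). Then for every position (a,n) with 2a ≠ n, Ṽ(a,n) ≤ max(a/n, 1/2) + 1/(2·|2a − n|). -/
open MeasureTheory ProbabilityTheory Real

lemma key_exp (r : ℝ) (hr : 1/2 ≤ r) :
    (1 + Real.exp (8*(r-1/2))) / 2 ≤ Real.exp (r * (8*(r-1/2))) := by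
  set t := 8*(r-1/2) with ht
  have ht0 : 0 ≤ t := by simp [ht]; linarith
  have h1 : (1 + Real.exp t) / 2 = Real.exp (t/2) * Real.cosh (t/2) := by
    rw [Real.cosh_eq]
    have e1 : Real.exp (t/2) * Real.exp (t/2) = Real.exp t := by
      rw [← Real.exp_add]; ring_nf
    have e2 : Real.exp (t/2) * Real.exp (-t/2) = 1 := by
      rw [← Real.exp_add]; ring_nf; exact Real.exp_zero
    field_simp
    rw [neg_div] at e2
    nlinarith [e1, e2]
  have h2 : Real.cosh (t/2) ≤ Real.exp ((t/2)^2/2) := Real.cosh_le_exp_half_sq _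
  have h3 : Real.exp (t/2) * Real.exp ((t/2)^2/2) = Real.exp (t/2 + t^2/8) := by
    rw [← Real.exp_add]; ring_nf
  have h4 : r * t = t/2 + t^2/8 := by rw [ht]; ring
  calc (1 + Real.exp t) / 2 = Real.exp (t/2) * Real.cosh (t/2) := h1
    _ ≤ Real.exp (t/2) * Real.exp ((t/2)^2/2) := by
        have := Real.exp_pos (t/2); nlinarith [Real.cosh_pos (t/2)]
    _ = Real.exp (r*t) := by rw [h3, h4]

section Hitting

variable {Ω : Type*} [MeasurableSpace Ω] {μ : Measure Ω} [IsProbabilityMeasure μ]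
  {X : ℕ → Ω → ℝ}

lemma hit_le (hX : IsFairCoinSeq μ X) (a n : ℕ) (hn : 1 ≤ n) {r : ℝ} (hr : 1/2 < r) :
    (μ {ω | ∃ k, r < headsProp X a n k ω}).toReal
      ≤ Real.exp (-(8*(r-1/2)*(r*n - a))) := by
  obtain ⟨hXm, h01, hhalf, hind⟩ := hX
  have hX0 : ∀ i ω, 0 ≤ X i ω := fun i ω => by rcases h01 i ω with h|h <;> simp [h]
  have hX1 : ∀ i ω, X i ω ≤ 1 := fun i ω => by rcases h01 i ω with h|h <;> simp [h]
  set t : ℝ := 8*(r-1/2) with htdef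
  have ht : 0 < t := by rw [htdef]; linarith
  set l : ℝ := Real.exp t with hldef
  have hl1 : 1 < l := by rw [hldef]; exact Real.one_lt_exp_iff.mpr ht
  have hl0 : 0 < l := lt_trans one_pos hl1
  set c : ℝ := 2/(1+l) with hcdef
  have hc0 : 0 < c := by positivity
  -- the exponential weight functions
  set g : ℕ → Ω → ℝ := fun i ω => c * Real.exp (t * X i ω) with hgdef
  have gmeas : ∀ i, Measurable (g i) := fun i =>
    (measurable_const.mul ((Real.measurable_exp.comp (measurable_const.mul (hXm i)))))
  have g0 : ∀ i ω, 0 < g i ω := fun i ω => by positivity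
  have gbd : ∀ i ω, g i ω ≤ c * l := fun i ω => by
    have : Real.exp (t * X i ω) ≤ Real.exp t := by
      apply Real.exp_le_exp.mpr
      nlinarith [hX1 i ω, hX0 i ω]
    rw [hldef]
    exact mul_le_mul_of_nonneg_left this hc0.le
  have gint : ∀ i, Integrable (g i) μ := fun i => by
    apply Integrable.mono' (integrable_const (c * l)) (gmeas i).aestronglyMeasurable
    filter_upwards with ω
    rw [Real.norm_eq_abs, abs_of_pos (g0 i ω)]
    exact gbd i ω
  -- expectation one
  have intX : ∀ i, Integrable (X i) μ := fun i => by
    apply Integrable.mono' (integrable_const 1) (hXm i).aestronglyMeasurable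
    filter_upwards with ω
    rw [Real.norm_eq_abs, abs_of_nonneg (hX0 i ω)]
    exact hX1 i ω
  have intXval : ∀ i, ∫ ω, X i ω ∂μ = 1/2 := fun i => by
    have hptw : ∀ ω, X i ω = Set.indicator {ω | X i ω = 1} (fun _ => (1:ℝ)) ω := fun ω => by
      rcases h01 i ω with h|h
      · rw [h, Set.indicator_apply_eq_zero.mpr]
        intro hmem
        exfalso
        simp only [Set.mem_setOf_eq] at hmem
        rw [h] at hmem
        norm_num at hmem
      · rw [h, Set.indicator_apply_eq_self.mpr]
        intro hmem
        exfalso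
        exact hmem h
    have hms : MeasurableSet {ω | X i ω = 1} := hXm i (measurableSet_singleton 1)
    rw [integral_congr_ae (Filter.Eventually.of_forall hptw), integral_indicator_const _ hms,
      measureReal_def, hhalf i]
    simp
  have gintegral : ∀ i, ∫ ω, g i ω ∂μ = 1 := fun i => by
    have hptw : ∀ ω, g i ω = c * (1 + (l - 1) * X i ω) := fun ω => by
      rcases h01 i ω with h|h <;> simp [hgdef, h, hldef]
    rw [integral_congr_ae (Filter.Eventually.of_forall hptw)]
    rw [integral_const_mul]
    rw [integral_add (integrable_const 1) ((intX i).const_mul _)]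
    rw [integral_const, integral_const_mul, intXval i]
    simp only [measureReal_def, measure_univ, ENNReal.toReal_one, smul_eq_mul, one_mul]
    rw [hcdef]
    field_simp
    ring
  -- independence of the weights
  have gind : iIndepFun g μ := by
    have := hind.comp (fun _ (x : ℝ) => c * Real.exp (t * x))
      (fun _ => measurable_const.mul (Real.measurable_exp.comp (measurable_const.mul measurable_id)))
    exact this
  -- products over finsets
  have prodmeas : ∀ s : Finset ℕ, Measurable (∏ i ∈ s, g i) := fun s => by
    have := s.measurable_prod (fun i _ => gmeas i)
    convert this using 1
    ext ω
    simp [Finset.prod_apply]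
  have prodpos : ∀ (s : Finset ℕ) ω, 0 < (∏ i ∈ s, g i) ω := fun s ω => by
    rw [Finset.prod_apply]
    exact Finset.prod_pos (fun i _ => g0 i ω)
  have prodbd : ∀ (s : Finset ℕ) ω, (∏ i ∈ s, g i) ω ≤ (c * l)^s.card := fun s ω => by
    rw [Finset.prod_apply, ← Finset.prod_const]
    exact Finset.prod_le_prod (fun i _ => (g0 i ω).le) (fun i _ => gbd i ω)
  have prodintg : ∀ s : Finset ℕ, Integrable (∏ i ∈ s, g i) μ := fun s => by
    apply Integrable.mono' (integrable_const ((c*l)^s.card)) (prodmeas s).aestronglyMeasurable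
    filter_upwards with ω
    rw [Real.norm_eq_abs, abs_of_pos (prodpos s ω)]
    exact prodbd s ω
  have prodint1 : ∀ s : Finset ℕ, ∫ ω, (∏ i ∈ s, g i) ω ∂μ = 1 := fun s => by
    induction s using Finset.induction_on with
    | empty => simp
    | @insert j s' hj ih =>
      have hI : IndepFun (∏ i ∈ s', g i) (g j) μ :=
        gind.indepFun_finsetProd_of_notMem gmeas hj
      have : (∏ i ∈ insert j s', g i) = (∏ i ∈ s', g i) * g j := by
        rw [Finset.prod_insert hj]; ring
      rw [this, hI.integral_mul_eq_mul_integral (prodintg s').aestronglyMeasurable (gint j).aestronglyMeasurable, ih, gintegral j, one_mul]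
  -- measurability of the proportions
  have Rmeas : ∀ k, Measurable (headsProp X a n k) := fun k => by
    unfold headsProp
    exact (measurable_const.add (Finset.measurable_sum _ (fun i _ => hXm i))).div_const _
  classical
  -- first-hitting events
  set A : ℕ → Set Ω := fun k =>
    {ω | r < headsProp X a n k ω ∧ ∀ j < k, headsProp X a n j ω ≤ r} with hAdef
  have Ameas : ∀ k, MeasurableSet (A k) := fun k => by
    have h1 : MeasurableSet {ω | r < headsProp X a n k ω} :=
      measurableSet_lt measurable_const (Rmeas k)
    have h2 : MeasurableSet {ω | ∀ j < k, headsProp X a n j ω ≤ r} := by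
      have : {ω | ∀ j < k, headsProp X a n j ω ≤ r}
          = ⋂ j ∈ Set.Iio k, {ω | headsProp X a n j ω ≤ r} := by
        ext ω; simp
      rw [this]
      exact MeasurableSet.biInter ((Set.to_countable _))
        (fun j _ => measurableSet_le (Rmeas j) measurable_const)
    exact h1.inter h2
  have hpair : Pairwise (Function.onFun Disjoint A) := by
    have key : ∀ j k, j < k → Disjoint (A j) (A k) := by
      intro j k hjk
      rw [Set.disjoint_left]
      rintro ω ⟨hj1, -⟩ ⟨-, hk2⟩
      exact absurd hj1 (not_lt.mpr (hk2 j hjk))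
    intro j k hjk
    rcases hjk.lt_or_gt with h | h
    · exact key j k h
    · exact (key k j h).symm
  have Aunion : {ω | ∃ k, r < headsProp X a n k ω} = ⋃ k, A k := by
    ext ω
    simp only [Set.mem_setOf_eq, Set.mem_iUnion]
    constructor
    · intro h
      exact ⟨Nat.find h, Nat.find_spec h, fun j hj => not_lt.mp (Nat.find_min h hj)⟩
    · rintro ⟨k, hk, -⟩; exact ⟨k, hk⟩
  -- pointwise lower bound for the weight on A k
  set q : ℝ := Real.exp (t * (r * n - a)) with hqdef
  have hq0 : 0 < q := Real.exp_pos _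
  have hkey1 : 1 ≤ c * Real.exp (t * r) := by
    have h' := key_exp r hr.le
    rw [← htdef] at h'
    rw [hcdef, ← hldef] at *
    rw [mul_comm t r]
    rw [div_mul_eq_mul_div, le_div_iff₀ (by linarith), one_mul]
    linarith
  have hGk : ∀ k ω, ω ∈ A k → q ≤ (∏ i ∈ Finset.range k, g i) ω := by
    intro k ω hω
    obtain ⟨h1, -⟩ := hω
    have hden : (0:ℝ) < (n:ℝ) + k := by
      have : (1:ℝ) ≤ (n:ℝ) := by exact_mod_cast hn
      have := Nat.cast_nonneg (α := ℝ) k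
      linarith
    have hsum : r * ((n:ℝ) + k) - a ≤ ∑ i ∈ Finset.range k, X i ω := by
      unfold headsProp at h1
      rw [lt_div_iff₀ hden] at h1
      linarith
    have hprod : (∏ i ∈ Finset.range k, g i) ω
        = c ^ k * Real.exp (t * ∑ i ∈ Finset.range k, X i ω) := by
      rw [Finset.prod_apply, hgdef]
      rw [Finset.prod_mul_distrib, Finset.prod_const, Finset.card_range]
      rw [← Real.exp_sum, Finset.mul_sum]
    rw [hprod]
    have e1 : Real.exp (t * (r * ((n:ℝ)+k) - a)) ≤ Real.exp (t * ∑ i ∈ Finset.range k, X i ω) :=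
      Real.exp_le_exp.mpr (by nlinarith)
    have e2 : Real.exp (t * (r * ((n:ℝ)+k) - a)) = q * Real.exp (t*r) ^ k := by
      rw [hqdef, ← Real.exp_nat_mul, ← Real.exp_add]
      ring_nf
    calc q = q * 1 := (mul_one q).symm
      _ ≤ q * (c * Real.exp (t*r)) ^ k := by
          have : (1:ℝ) ≤ (c * Real.exp (t*r)) ^ k := one_le_pow₀ hkey1
          nlinarith
      _ = c ^ k * (q * Real.exp (t*r) ^ k) := by rw [mul_pow]; ring
      _ = c ^ k * Real.exp (t * (r * ((n:ℝ)+k) - a)) := by rw [e2]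
      _ ≤ c ^ k * Real.exp (t * ∑ i ∈ Finset.range k, X i ω) := by
          have : (0:ℝ) ≤ c ^ k := (pow_pos hc0 k).le
          nlinarith [Real.exp_pos (t * (r * ((n:ℝ)+k) - a))]
  -- integrability of indicator times product
  have indint : ∀ (B : Set Ω), MeasurableSet B → ∀ s : Finset ℕ,
      Integrable (fun ω => Set.indicator B (fun _ => (1:ℝ)) ω * (∏ i ∈ s, g i) ω) μ := by
    intro B hB s
    apply Integrable.mono' (prodintg s)
      (((measurable_const.indicator hB)).mul (prodmeas s)).aestronglyMeasurable
    filter_upwards with ω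
    rw [Real.norm_eq_abs]
    by_cases h : ω ∈ B
    · rw [Pi.mul_apply, Set.indicator_of_mem h, one_mul, abs_of_pos (prodpos s ω)]
    · rw [Pi.mul_apply, Set.indicator_of_notMem h, zero_mul, abs_zero]
      exact (prodpos s ω).le
  -- step 2: replacing the weight product over `range k` by one over `range N`
  have step2 : ∀ N k, k ≤ N →
      ∫ ω, Set.indicator (A k) (fun _ => (1:ℝ)) ω * (∏ i ∈ Finset.range k, g i) ω ∂μ
        = ∫ ω, Set.indicator (A k) (fun _ => (1:ℝ)) ω * (∏ i ∈ Finset.range N, g i) ω ∂μ := by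
    intro N k hkN
    set S : Finset ℕ := Finset.range k with hSdef
    set T : Finset ℕ := Finset.Ico k N with hTdef
    have hdisj : Disjoint S T := by
      rw [Finset.disjoint_left]
      intro i hi hi'
      rw [hSdef, Finset.mem_range] at hi
      rw [hTdef, Finset.mem_Ico] at hi'
      omega
    have base := hind.indepFun_finset S T hdisj hXm
    set Sv : ℕ → (↥S → ℝ) → ℝ :=
      fun j v => ∑ i : S, if (i:ℕ) < j then v i else 0 with hSvdef
    have Svmeas : ∀ j, Measurable (Sv j) := by
      intro j
      apply Finset.measurable_sum
      intro i _
      by_cases h : (i:ℕ) < j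
      · simpa [h] using measurable_pi_apply i
      · simpa [h] using (measurable_const : Measurable fun _ : ↥S → ℝ => (0:ℝ))
    set Av : Set (↥S → ℝ) :=
      {v | r < ((a:ℝ) + Sv k v)/((n:ℝ)+(k:ℕ)) ∧
        ∀ j < k, ((a:ℝ) + Sv j v)/((n:ℝ)+(j:ℕ)) ≤ r} with hAvdef
    have Avmeas : MeasurableSet Av := by
      have h1 : MeasurableSet {v : ↥S → ℝ | r < ((a:ℝ) + Sv k v)/((n:ℝ)+(k:ℕ))} :=
        measurableSet_lt measurable_const ((measurable_const.add (Svmeas k)).div_const _)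
      have h2 : MeasurableSet {v : ↥S → ℝ |
          ∀ j < k, ((a:ℝ) + Sv j v)/((n:ℝ)+(j:ℕ)) ≤ r} := by
        have : {v : ↥S → ℝ | ∀ j < k, ((a:ℝ) + Sv j v)/((n:ℝ)+(j:ℕ)) ≤ r}
            = ⋂ j ∈ Set.Iio k, {v | ((a:ℝ) + Sv j v)/((n:ℝ)+(j:ℕ)) ≤ r} := by
          ext v; simp
        rw [this]
        exact MeasurableSet.biInter (Set.to_countable _)
          (fun j _ => measurableSet_le ((measurable_const.add (Svmeas j)).div_const _)
            measurable_const)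
      exact h1.inter h2
    set φ : (↥S → ℝ) → ℝ :=
      fun v => Set.indicator Av (fun _ => (1:ℝ)) v * ∏ i : S, (c * Real.exp (t * v i))
      with hφdef
    have φmeas : Measurable φ :=
      (measurable_const.indicator Avmeas).mul
        (Finset.measurable_prod Finset.univ (fun i _ =>
          measurable_const.mul (Real.measurable_exp.comp
            (measurable_const.mul (measurable_pi_apply i)))))
    set ψ : (↥T → ℝ) → ℝ :=
      fun w => ∏ i : T, (c * Real.exp (t * w i)) with hψdef
    have ψmeas : Measurable ψ :=
      Finset.measurable_prod Finset.univ (fun i _ =>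
        measurable_const.mul (Real.measurable_exp.comp
          (measurable_const.mul (measurable_pi_apply i))))
    have hI := base.comp φmeas ψmeas
    -- identify the composed functions
    have sum_eq : ∀ (ω : Ω) (j : ℕ), j ≤ k →
        Sv j (fun i : S => X i ω) = ∑ i ∈ Finset.range j, X i ω := by
      intro ω j hj
      simp only [hSvdef]
      rw [Finset.sum_coe_sort S (fun i => if i < j then X i ω else 0)]
      rw [← Finset.sum_filter]
      congr 1
      ext i
      simp only [Finset.mem_filter, hSdef, Finset.mem_range]
      omega
    have hmem : ∀ ω : Ω, ((fun i : S => X i ω) ∈ Av ↔ ω ∈ A k) := by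
      intro ω
      rw [hAvdef, hAdef]
      simp only [Set.mem_setOf_eq, headsProp]
      rw [sum_eq ω k le_rfl]
      refine and_congr Iff.rfl (forall_congr' fun j => ?_)
      refine imp_congr_right fun hj => ?_
      rw [sum_eq ω j hj.le]
    have hφcomp : (φ ∘ fun ω (i : S) => X i ω)
        = fun ω => Set.indicator (A k) (fun _ => (1:ℝ)) ω * (∏ i ∈ Finset.range k, g i) ω := by
      funext ω
      simp only [Function.comp_apply, hφdef]
      congr 1
      · by_cases h : ω ∈ A k
        · rw [Set.indicator_of_mem h, Set.indicator_of_mem ((hmem ω).mpr h)]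
        · rw [Set.indicator_of_notMem h,
            Set.indicator_of_notMem (fun hc => h ((hmem ω).mp hc))]
      · rw [Finset.prod_coe_sort S (fun i => c * Real.exp (t * X i ω)), Finset.prod_apply]
    have hψcomp : (ψ ∘ fun ω (i : T) => X i ω) = ∏ i ∈ T, g i := by
      funext ω
      simp only [Function.comp_apply, hψdef]
      rw [Finset.prod_coe_sort T (fun i => c * Real.exp (t * X i ω)), Finset.prod_apply]
    rw [hφcomp, hψcomp] at hI
    have hGsplit : ∀ ω, (∏ i ∈ Finset.range N, g i) ω
        = (∏ i ∈ Finset.range k, g i) ω * (∏ i ∈ T, g i) ω := by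
      intro ω
      rw [Finset.prod_apply, Finset.prod_apply, Finset.prod_apply,
        ← Finset.prod_range_mul_prod_Ico (fun i => g i ω) hkN]
    have hrhs : (fun ω => Set.indicator (A k) (fun _ => (1:ℝ)) ω * (∏ i ∈ Finset.range N, g i) ω)
        = (fun ω => Set.indicator (A k) (fun _ => (1:ℝ)) ω * (∏ i ∈ Finset.range k, g i) ω)
          * (∏ i ∈ T, g i) := by
      funext ω
      simp only [Pi.mul_apply]
      rw [hGsplit ω]
      ring
    calc ∫ ω, Set.indicator (A k) (fun _ => (1:ℝ)) ω * (∏ i ∈ Finset.range k, g i) ω ∂μ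
        = (∫ ω, Set.indicator (A k) (fun _ => (1:ℝ)) ω * (∏ i ∈ Finset.range k, g i) ω ∂μ)
            * ∫ ω, (∏ i ∈ T, g i) ω ∂μ := by rw [prodint1 T, mul_one]
      _ = ∫ ω, ((fun ω => Set.indicator (A k) (fun _ => (1:ℝ)) ω
            * (∏ i ∈ Finset.range k, g i) ω) * (∏ i ∈ T, g i)) ω ∂μ := by
          rw [hI.integral_mul_eq_mul_integral (indint (A k) (Ameas k) (Finset.range k)).aestronglyMeasurable
            (prodintg T).aestronglyMeasurable]
      _ = ∫ ω, Set.indicator (A k) (fun _ => (1:ℝ)) ω * (∏ i ∈ Finset.range N, g i) ω ∂μ := by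
          rw [← hrhs]
  -- step 1: per-event lower bound
  have step1 : ∀ k, q * (μ (A k)).toReal
      ≤ ∫ ω, Set.indicator (A k) (fun _ => (1:ℝ)) ω * (∏ i ∈ Finset.range k, g i) ω ∂μ := by
    intro k
    have hle : ∀ ω, q * Set.indicator (A k) (fun _ => (1:ℝ)) ω
        ≤ Set.indicator (A k) (fun _ => (1:ℝ)) ω * (∏ i ∈ Finset.range k, g i) ω := by
      intro ω
      by_cases h : ω ∈ A k
      · simp only [Set.indicator_of_mem h, mul_one, one_mul]
        exact hGk k ω h
      · simp [Set.indicator_of_notMem h]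
    have h1 : ∫ ω, q * Set.indicator (A k) (fun _ => (1:ℝ)) ω ∂μ = q * (μ (A k)).toReal := by
      rw [integral_const_mul, integral_indicator_const _ (Ameas k)]
      simp [measureReal_def]
    rw [← h1]
    exact integral_mono (((integrable_const (1:ℝ)).indicator (Ameas k)).const_mul q)
      (indint (A k) (Ameas k) _) hle
  -- combine
  have main : ∀ N, q * ∑ k ∈ Finset.range N, (μ (A k)).toReal ≤ 1 := by
    intro N
    have h1 : ∀ k ∈ Finset.range N, q * (μ (A k)).toReal
        ≤ ∫ ω, Set.indicator (A k) (fun _ => (1:ℝ)) ω * (∏ i ∈ Finset.range N, g i) ω ∂μ := by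
      intro k hk
      rw [← step2 N k (Finset.mem_range.mp hk).le]
      exact step1 k
    calc q * ∑ k ∈ Finset.range N, (μ (A k)).toReal
        = ∑ k ∈ Finset.range N, q * (μ (A k)).toReal := by rw [Finset.mul_sum]
      _ ≤ ∑ k ∈ Finset.range N, ∫ ω, Set.indicator (A k) (fun _ => (1:ℝ)) ω
            * (∏ i ∈ Finset.range N, g i) ω ∂μ := Finset.sum_le_sum h1
      _ = ∫ ω, ∑ k ∈ Finset.range N, Set.indicator (A k) (fun _ => (1:ℝ)) ω
            * (∏ i ∈ Finset.range N, g i) ω ∂μ :=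
          (integral_finset_sum _ (fun k _ => indint (A k) (Ameas k) _)).symm
      _ ≤ ∫ ω, (∏ i ∈ Finset.range N, g i) ω ∂μ := by
          apply integral_mono (integrable_finset_sum _ (fun k _ => indint (A k) (Ameas k) _))
            (prodintg _)
          intro ω
          simp only
          rw [← Finset.sum_mul]
          have hs : ∑ k ∈ Finset.range N, Set.indicator (A k) (fun _ => (1:ℝ)) ω ≤ 1 := by
            by_cases h : ∃ k ∈ Finset.range N, ω ∈ A k
            · obtain ⟨k₀, hk₀, hω⟩ := h
              rw [Finset.sum_eq_single_of_mem k₀ hk₀]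
              · rw [Set.indicator_of_mem hω]
              · intro b hb hbne
                rw [Set.indicator_of_notMem]
                intro hωb
                exact absurd hω (Set.disjoint_left.mp (hpair hbne) hωb)
            · push_neg at h
              rw [Finset.sum_eq_zero (fun k hk => Set.indicator_of_notMem (h k hk) _)]
              norm_num
          nlinarith [prodpos (Finset.range N) ω]
      _ = 1 := prodint1 _
  -- conclude
  rw [Aunion]
  have hμU : μ (⋃ k, A k) = ∑' k, μ (A k) := measure_iUnion hpair Ameas
  have hbound : μ (⋃ k, A k) ≤ ENNReal.ofReal (1/q) := by
    rw [hμU, ENNReal.tsum_eq_iSup_nat]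
    apply iSup_le
    intro N
    have hfin : ∀ k ∈ Finset.range N, μ (A k) ≠ ⊤ := fun k _ => measure_ne_top μ _
    rw [← ENNReal.ofReal_toReal (a := ∑ k ∈ Finset.range N, μ (A k))
      (ENNReal.sum_lt_top.mpr (fun k hk => (hfin k hk).lt_top)).ne]
    apply ENNReal.ofReal_le_ofReal
    rw [ENNReal.toReal_sum hfin]
    rw [le_div_iff₀ hq0]
    nlinarith [main N]
  calc (μ (⋃ k, A k)).toReal
      ≤ (ENNReal.ofReal (1/q)).toReal := ENNReal.toReal_mono ENNReal.ofReal_ne_top hbound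
    _ = 1/q := ENNReal.toReal_ofReal (by positivity)
    _ = Real.exp (-(t * (r * ↑n - ↑a))) := by rw [Real.exp_neg, one_div, hqdef]

end Hitting


set_option maxHeartbeats 2000000 in
/-- For every position `(a,n)` with `2a ≠ n`,
`Ṽ(a,n) ≤ max(a/n, 1/2) + 1/(2·|2a − n|)`. -/
theorem clairvoyant_le_add_inv_diff {Ω : Type*} [MeasurableSpace Ω] (μ : Measure Ω)
    [IsProbabilityMeasure μ] (X : ℕ → Ω → ℝ) (hX : IsFairCoinSeq μ X)
    (a n : ℕ) (hn : 1 ≤ n) (han : a ≤ n) (hd : 2 * a ≠ n) :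
    clairvoyantValue μ X a n ≤
      max ((a : ℝ) / n) (1 / 2) + 1 / (2 * |2 * (a : ℝ) - n|) := by
  obtain ⟨hXm, h01, hhalf, hind⟩ := id hX
  have hX0 : ∀ i ω, 0 ≤ X i ω := fun i ω => by rcases h01 i ω with h|h <;> simp [h]
  have hX1 : ∀ i ω, X i ω ≤ 1 := fun i ω => by rcases h01 i ω with h|h <;> simp [h]
  have hn0 : (0:ℝ) < (n:ℝ) := by exact_mod_cast Nat.pos_of_ne_zero (by omega)
  have han' : (a:ℝ) ≤ (n:ℝ) := by exact_mod_cast han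
  have ha0 : (0:ℝ) ≤ (a:ℝ) := Nat.cast_nonneg a
  -- bounds on the proportions
  have Rle1 : ∀ k ω, headsProp X a n k ω ≤ 1 := by
    intro k ω
    unfold headsProp
    have hden : (0:ℝ) < (n:ℝ) + k := by
      have := Nat.cast_nonneg (α := ℝ) k; linarith
    rw [div_le_one hden]
    have hsum : ∑ i ∈ Finset.range k, X i ω ≤ (k:ℝ) := by
      calc ∑ i ∈ Finset.range k, X i ω ≤ ∑ i ∈ Finset.range k, (1:ℝ) :=
          Finset.sum_le_sum (fun i _ => hX1 i ω)
        _ = (k:ℝ) := by simp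
    linarith
  have Rge0 : ∀ k ω, 0 ≤ headsProp X a n k ω := by
    intro k ω
    unfold headsProp
    have hden : (0:ℝ) ≤ (n:ℝ) + k := by
      have := Nat.cast_nonneg (α := ℝ) k; linarith
    have hsum : (0:ℝ) ≤ ∑ i ∈ Finset.range k, X i ω :=
      Finset.sum_nonneg (fun i _ => hX0 i ω)
    positivity
  have hbdd : ∀ ω, BddAbove (Set.range fun k => headsProp X a n k ω) := by
    intro ω
    refine ⟨1, ?_⟩
    rintro x ⟨k, rfl⟩
    exact Rle1 k ω
  have Rmeas : ∀ k, Measurable (headsProp X a n k) := fun k => by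
    unfold headsProp
    exact (measurable_const.add (Finset.measurable_sum _ (fun i _ => hXm i))).div_const _
  set M : Ω → ℝ := fun ω => ⨆ k, headsProp X a n k ω with hMdef
  have Mmeas : Measurable M := Measurable.iSup (fun k => Rmeas k)
  have Mle1 : ∀ ω, M ω ≤ 1 := fun ω => ciSup_le (fun k => Rle1 k ω)
  have Mge0 : ∀ ω, 0 ≤ M ω := fun ω =>
    le_trans (Rge0 0 ω) (le_ciSup (hbdd ω) 0)
  -- the key quantities
  set D : ℝ := |2 * (a:ℝ) - n| with hDdef
  have hD1 : (1:ℝ) ≤ D := by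
    have hz : (2 * (a:ℤ) - (n:ℤ)) ≠ 0 := by
      intro hcon
      apply hd
      omega
    have hcast : 2 * (a:ℝ) - n = ((2 * (a:ℤ) - (n:ℤ) : ℤ) : ℝ) := by push_cast; ring
    rw [hDdef, hcast, ← Int.cast_abs]
    exact_mod_cast Int.one_le_abs hz
  have hD0 : (0:ℝ) < D := lt_of_lt_of_le one_pos hD1
  set r0 : ℝ := max ((a:ℝ)/n) (1/2) with hr0def
  have hr0half : (1:ℝ)/2 ≤ r0 := le_max_right _ _
  have hr0a : (a:ℝ)/n ≤ r0 := le_max_left _ _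
  have hr0le1 : r0 ≤ 1 := by
    apply max_le _ (by norm_num)
    rw [div_le_one hn0]; exact han'
  set u : ℝ := r0 - 1/2 with hudef
  set v : ℝ := r0 - (a:ℝ)/n with hvdef
  have hu0 : 0 ≤ u := by rw [hudef]; linarith
  have hv0 : 0 ≤ v := by rw [hvdef]; linarith
  have huv : u + v = D / (2*n) := by
    rw [hudef, hvdef, hDdef, hr0def]
    rcases le_total ((a:ℝ)/n) (1/2) with h | h
    · rw [max_eq_right h, abs_of_nonpos (by nlinarith [div_le_iff₀ hn0 |>.mp h])]
      field_simp
      try ring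
    · rw [max_eq_left h, abs_of_nonneg (by nlinarith [le_div_iff₀ hn0 |>.mp h])]
      field_simp
      try ring
  set δ : ℝ := 1/(8*D) with hδdef
  have hδ0 : 0 < δ := by rw [hδdef]; positivity
  set J : ℕ := ⌈4*D⌉₊ with hJdef
  have hJD : 4*D ≤ (J:ℝ) := Nat.le_ceil _
  -- the exceedance events
  set E : ℕ → Set Ω := fun j : ℕ => {ω | ∃ k, r0 + (j:ℝ)*δ < headsProp X a n k ω} with hEdef
  have Emeas : ∀ j, MeasurableSet (E j) := fun j => by
    have : E j = ⋃ k, {ω | r0 + j*δ < headsProp X a n k ω} := by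
      ext ω; simp only [hEdef, Set.mem_iUnion, Set.mem_setOf_eq]
    rw [this]
    exact MeasurableSet.iUnion (fun k => measurableSet_lt measurable_const (Rmeas k))
  -- the pointwise layercake bound
  have hptw : ∀ ω, M ω ≤ r0 + δ + ∑ j ∈ Finset.Icc 1 J,
      δ * Set.indicator (E j) (fun _ => (1:ℝ)) ω := by
    intro ω
    set x := M ω with hxdef
    set m : ℕ := ((Finset.Icc 1 J).filter (fun j : ℕ => r0 + (j:ℝ)*δ < x)).card with hmdef
    have harith : x ≤ r0 + δ + δ * m := by
      by_contra hcon
      push_neg at hcon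
      have hsub : Finset.Icc 1 (m+1) ⊆ (Finset.Icc 1 J).filter (fun j : ℕ => r0 + (j:ℝ)*δ < x) := by
        intro j hj
        rw [Finset.mem_Icc] at hj
        have hjm : (j:ℝ) ≤ (m:ℝ) + 1 := by exact_mod_cast hj.2
        have hjx : r0 + (j:ℝ)*δ < x := by nlinarith
        have hmJ : j ≤ J := by
          have hx1 : x ≤ 1 := Mle1 ω
          have : ((m:ℝ)+1) * δ < 1/2 := by nlinarith
          have hmlt : ((m:ℝ)+1) < 4*D := by
            have h8 : (0:ℝ) < 8*D := by linarith
            rw [hδdef, mul_one_div, div_lt_iff₀ h8] at this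
            linarith
          have : ((j:ℝ)) < (J:ℝ) := by linarith
          exact_mod_cast this.le
        rw [Finset.mem_filter, Finset.mem_Icc]
        exact ⟨⟨hj.1, hmJ⟩, hjx⟩
      have := Finset.card_le_card hsub
      rw [Nat.card_Icc] at this
      omega
    have hsum : δ * m ≤ ∑ j ∈ Finset.Icc 1 J, δ * Set.indicator (E j) (fun _ => (1:ℝ)) ω := by
      have h1 : δ * m = ∑ j ∈ (Finset.Icc 1 J).filter (fun j : ℕ => r0 + (j:ℝ)*δ < x), δ := by
        rw [Finset.sum_const, hmdef, nsmul_eq_mul, mul_comm]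
      rw [h1]
      have h2 : ∀ j ∈ (Finset.Icc 1 J).filter (fun j : ℕ => r0 + (j:ℝ)*δ < x),
          δ = δ * Set.indicator (E j) (fun _ => (1:ℝ)) ω := by
        intro j hj
        rw [Finset.mem_filter] at hj
        have hωE : ω ∈ E j := by
          by_contra hnot
          have hall : ∀ k, headsProp X a n k ω ≤ r0 + (j:ℝ)*δ := by
            intro k
            by_contra hk
            exact hnot ⟨k, lt_of_not_ge hk⟩
          have hsup : x ≤ r0 + (j:ℝ)*δ := ciSup_le hall
          linarith [hj.2]
        rw [Set.indicator_of_mem hωE, mul_one]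
      rw [Finset.sum_congr rfl h2]
      exact Finset.sum_le_sum_of_subset_of_nonneg (Finset.filter_subset _ _)
        (fun j _ _ => mul_nonneg hδ0.le (Set.indicator_apply_nonneg (fun _ => zero_le_one)))
    linarith
  -- integrability
  have Mint : Integrable M μ := by
    apply Integrable.mono' (integrable_const 1) Mmeas.aestronglyMeasurable
    filter_upwards with ω
    rw [Real.norm_eq_abs, abs_of_nonneg (Mge0 ω)]
    exact Mle1 ω
  have sumint : Integrable (fun ω => ∑ j ∈ Finset.Icc 1 J,
      δ * Set.indicator (E j) (fun _ => (1:ℝ)) ω) μ :=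
    integrable_finset_sum _ (fun j _ => ((integrable_const (1:ℝ)).indicator (Emeas j)).const_mul δ)
  have hint : ∫ ω, M ω ∂μ ≤ r0 + δ + ∑ j ∈ Finset.Icc 1 J, δ * (μ (E j)).toReal := by
    have hRHS : ∫ ω, (r0 + δ + ∑ j ∈ Finset.Icc 1 J,
        δ * Set.indicator (E j) (fun _ => (1:ℝ)) ω) ∂μ
        = r0 + δ + ∑ j ∈ Finset.Icc 1 J, δ * (μ (E j)).toReal := by
      rw [integral_add (integrable_const _) sumint, integral_const,
        integral_finset_sum _ (fun j _ =>
          ((integrable_const (1:ℝ)).indicator (Emeas j)).const_mul δ)]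
      simp only [measureReal_def, measure_univ, ENNReal.toReal_one, smul_eq_mul, one_mul]
      have h2 : ∀ j ∈ Finset.Icc 1 J,
          ∫ ω, δ * Set.indicator (E j) (fun _ => (1:ℝ)) ω ∂μ = δ * (μ (E j)).toReal := by
        intro j _
        rw [integral_const_mul, integral_indicator_const _ (Emeas j)]
        simp [measureReal_def]
      rw [Finset.sum_congr rfl h2]
    rw [← hRHS]
    exact integral_mono Mint ((integrable_const (r0 + δ)).add sumint) (fun ω => hptw ω)
  -- bound on each exceedance probability
  have hEbound : ∀ j ∈ Finset.Icc 1 J, (μ (E j)).toReal ≤ Real.exp (-(1/2:ℝ)) ^ j := by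
    intro j hj
    rw [Finset.mem_Icc] at hj
    have hjR : (1:ℝ) ≤ (j:ℝ) := by exact_mod_cast hj.1
    have hjδ : δ ≤ (j:ℝ)*δ := by nlinarith
    have hr : 1/2 < r0 + (j:ℝ)*δ := by nlinarith
    have h1 := hit_le hX a n hn hr
    have hEeq : E j = {ω | ∃ k, r0 + (j:ℝ)*δ < headsProp X a n k ω} := by rw [hEdef]
    rw [← hEeq] at h1
    refine h1.trans ?_
    rw [← Real.exp_nat_mul]
    apply Real.exp_le_exp.mpr
    have e3 : δ*D = 1/8 := by rw [hδdef]; field_simp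
    have hs0 : (0:ℝ) ≤ (j:ℝ)*δ := by positivity
    have e1 : r0 + (j:ℝ)*δ - 1/2 = (j:ℝ)*δ + u := by rw [hudef]; ring
    have e2 : (r0 + (j:ℝ)*δ)*(n:ℝ) - a = ((j:ℝ)*δ + v)*n := by
      rw [hvdef]
      field_simp
      ring
    rw [e1, e2]
    have step : 8*((j:ℝ)*δ)*((u+v)*(n:ℝ)) ≤ 8*((j:ℝ)*δ + u)*(((j:ℝ)*δ + v)*(n:ℝ)) := by
      nlinarith [mul_nonneg hu0 hv0, mul_nonneg hs0 hv0, mul_nonneg hu0 hs0,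
        mul_nonneg (mul_nonneg hu0 hv0) hn0.le, mul_nonneg (mul_nonneg hs0 hs0) hn0.le,
        mul_nonneg (mul_nonneg hs0 hv0) hn0.le, mul_nonneg (mul_nonneg hu0 hs0) hn0.le]
    have step2 : 8*((j:ℝ)*δ)*((u+v)*(n:ℝ)) = (j:ℝ)/2 := by
      rw [huv, hδdef]
      field_simp
    clear_value D r0 u v δ
    nlinarith [step, step2]
  -- geometric series bound
  have hqe1 : Real.exp (-(1/2:ℝ)) < 1 := by
    rw [← Real.exp_zero]
    exact Real.exp_lt_exp.mpr (by norm_num)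
  have hqe0 : 0 < Real.exp (-(1/2:ℝ)) := Real.exp_pos _
  have hgeom : ∑ j ∈ Finset.Icc 1 J, Real.exp (-(1/2:ℝ)) ^ j ≤ 2 := by
    set qe := Real.exp (-(1/2:ℝ)) with hqe
    have hqe23 : qe ≤ 2/3 := by
      have h32 : (3:ℝ)/2 ≤ Real.exp (1/2) := by
        have := Real.add_one_le_exp (1/2:ℝ); linarith
      have hmul : qe * Real.exp (1/2 : ℝ) = 1 := by
        rw [hqe, ← Real.exp_add]; norm_num
      nlinarith [Real.exp_pos (1/2:ℝ)]
    have hins : Finset.range (J+1) = insert 0 (Finset.Icc 1 J) := by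
      ext i; simp only [Finset.mem_range, Finset.mem_insert, Finset.mem_Icc]; omega
    have h0 : (0:ℕ) ∉ Finset.Icc 1 J := by simp
    have hsum0 : ∑ j ∈ Finset.range (J+1), qe ^ j = 1 + ∑ j ∈ Finset.Icc 1 J, qe ^ j := by
      rw [hins, Finset.sum_insert h0, pow_zero]
    have hgeq : ∑ j ∈ Finset.range (J+1), qe ^ j = (qe^(J+1) - 1)/(qe - 1) :=
      geom_sum_eq (by linarith) (J+1)
    have hb : (qe^(J+1) - 1)/(qe - 1) ≤ 3 := by
      rw [div_le_iff_of_neg (by linarith : qe - 1 < 0)]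
      have hp : (0:ℝ) ≤ qe^(J+1) := by positivity
      nlinarith
    linarith
  have htail : ∑ j ∈ Finset.Icc 1 J, δ * (μ (E j)).toReal ≤ 2*δ := by
    calc ∑ j ∈ Finset.Icc 1 J, δ * (μ (E j)).toReal
        ≤ ∑ j ∈ Finset.Icc 1 J, δ * Real.exp (-(1/2:ℝ)) ^ j :=
          Finset.sum_le_sum (fun j hj => mul_le_mul_of_nonneg_left (hEbound j hj) hδ0.le)
      _ = δ * ∑ j ∈ Finset.Icc 1 J, Real.exp (-(1/2:ℝ)) ^ j := by rw [Finset.mul_sum]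
      _ ≤ δ * 2 := mul_le_mul_of_nonneg_left hgeom hδ0.le
      _ = 2*δ := by ring
  have hfinal : r0 + δ + 2*δ ≤ r0 + 1/(2*D) := by
    have h3δ : (3:ℝ)*δ ≤ 1/(2*D) := by
      rw [hδdef, mul_one_div, div_le_div_iff₀ (by linarith) (by linarith)]
      nlinarith
    linarith
  have hM : clairvoyantValue μ X a n = ∫ ω, M ω ∂μ := rfl
  rw [hM]
  calc ∫ ω, M ω ∂μ ≤ r0 + δ + ∑ j ∈ Finset.Icc 1 J, δ * (μ (E j)).toReal := hint
    _ ≤ r0 + δ + 2*δ := by linarith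
    _ ≤ r0 + 1/(2*D) := hfinal
end

section
/- Let (a,n) be a position and let p be a real number with max(a/n, 1/2) < p < 1. Then P(a,n,p) ≤ (2p)^{−(np−a)/(1−p)}. -/
open MeasureTheory ProbabilityTheory Real

/-- `hitProb μ X a n p = P(a,n,p)`, the probability that the proportion of heads
strictly exceeds `p` at some present or future time. -/
noncomputable def hitProb {Ω : Type*} [MeasurableSpace Ω] (μ : Measure Ω)
    (X : ℕ → Ω → ℝ) (a n : ℕ) (p : ℝ) : ℝ :=
  (μ {ω | ∃ k : ℕ, p < headsProp X a n k ω}).toReal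

namespace FairCoinAux

/-! ### Real-analytic lemmas -/

/-- Entropy inequality: for 1/2 < p < 1, `(2p)^(-p/(1-p)) ≤ 2(1-p)`. -/
lemma entropy_ineq {p : ℝ} (hp : 1/2 < p) (hp1 : p < 1) :
    (2*p) ^ (-(p/(1-p))) ≤ 2*(1-p) := by
  have hp0 : (0:ℝ) < p := by linarith
  have h2p : (0:ℝ) < 2*p := by linarith
  have hq : (0:ℝ) < 1 - p := by linarith
  have h2q : (0:ℝ) < 2*(1-p) := by linarith
  have l1 : 1 - (2*p)⁻¹ ≤ Real.log (2*p) := Real.one_sub_inv_le_log_of_pos h2p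
  have l2 : 1 - (2*(1-p))⁻¹ ≤ Real.log (2*(1-p)) := Real.one_sub_inv_le_log_of_pos h2q
  have key : 0 ≤ p * Real.log (2*p) + (1-p) * Real.log (2*(1-p)) := by
    have e1 : p * (1 - (2*p)⁻¹) = p - 1/2 := by field_simp
    have e2 : (1-p) * (1 - (2*(1-p))⁻¹) = (1-p) - 1/2 := by field_simp
    nlinarith [mul_le_mul_of_nonneg_left l1 hp0.le, mul_le_mul_of_nonneg_left l2 hq.le]
  rw [Real.rpow_def_of_pos h2p, ← Real.exp_log h2q]
  apply Real.exp_le_exp.2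
  have e : Real.log (2*p) * -(p/(1-p)) = -(p * Real.log (2*p))/(1-p) := by ring
  rw [e, div_le_iff₀ hq]
  nlinarith [key]

/-- Step inequality: `(2p)^(x+1) + (2p)^(x - p/(1-p)) ≤ 2 (2p)^x`. -/
lemma step_ineq {p : ℝ} (hp : 1/2 < p) (hp1 : p < 1) (x : ℝ) :
    (2*p) ^ (x+1) + (2*p) ^ (x - p/(1-p)) ≤ 2 * (2*p) ^ x := by
  have h2p : (0:ℝ) < 2*p := by linarith
  have h1 : (2*p) ^ (x+1) = (2*p) ^ x * (2*p) := by
    rw [Real.rpow_add h2p, Real.rpow_one]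
  have h2 : (2*p) ^ (x - p/(1-p)) = (2*p) ^ x * (2*p) ^ (-(p/(1-p))) := by
    rw [← Real.rpow_add h2p]; ring_nf
  rw [h1, h2]
  have hb := entropy_ineq hp hp1
  have hx : (0:ℝ) ≤ (2*p) ^ x := (Real.rpow_pos_of_pos h2p x).le
  nlinarith [mul_le_mul_of_nonneg_left hb hx]

/-! ### Combinatorics of coin-flip patterns -/

/-- real value of a boolean coin flip -/
def bval (c : Bool) : ℝ := if c then 1 else 0

/-- value of the `i`-th flip in the pattern `v` (0 out of range) -/
def bvalF {N : ℕ} (v : Fin N → Bool) (i : ℕ) : ℝ := if h : i < N then bval (v ⟨i, h⟩) else 0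

/-- the pattern `v` leads to a head proportion above `p` at some time `≤ N`,
starting from `b` heads out of `m`. -/
def Qpred (p : ℝ) (b m : ℕ) {N : ℕ} (v : Fin N → Bool) : Prop :=
  ∃ k ≤ N, p < ((b:ℝ) + ∑ i ∈ Finset.range k, bvalF v i) / ((m:ℝ) + k)

/-- set of patterns of length `N` leading above `p` -/
noncomputable def Vfin (p : ℝ) (b m N : ℕ) : Finset (Fin N → Bool) :=
  @Finset.filter _ (Qpred p b m) (Classical.decPred _) (Finset.univ : Finset (Fin N → Bool))

lemma bvalF_succ {N : ℕ} (v : Fin (N+1) → Bool) (i : ℕ) :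
    bvalF v (i+1) = bvalF (Fin.tail v) i := by
  by_cases h : i < N
  · rw [bvalF, bvalF, dif_pos h, dif_pos (Nat.succ_lt_succ h)]
    rfl
  · rw [bvalF, bvalF, dif_neg h, dif_neg (fun hh => h (Nat.lt_of_succ_lt_succ hh))]

lemma sum_bvalF_succ {N : ℕ} (v : Fin (N+1) → Bool) (k : ℕ) :
    ∑ i ∈ Finset.range (k+1), bvalF v i
      = bval (v 0) + ∑ i ∈ Finset.range k, bvalF (Fin.tail v) i := by
  rw [Finset.sum_range_succ']
  have h0 : bvalF v 0 = bval (v 0) := by simp [bvalF]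
  rw [Finset.sum_congr rfl (fun i _ => bvalF_succ v i), h0, add_comm]

lemma Qpred_succ_iff {p : ℝ} {b m N : ℕ} (hbm : ¬ p < (b:ℝ)/m)
    (v : Fin (N+1) → Bool) :
    Qpred p b m v ↔ Qpred p (b + if v 0 then 1 else 0) (m+1) (Fin.tail v) := by
  have hcast : ((b + if v 0 then 1 else 0 : ℕ) : ℝ) = (b:ℝ) + bval (v 0) := by
    cases h : v 0 <;> simp [bval, h]
  constructor
  · rintro ⟨k, hk, hlt⟩
    match k with
    | 0 => simp only [Finset.range_zero, Finset.sum_empty, add_zero, Nat.cast_zero] at hlt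
           exact absurd hlt hbm
    | (k'+1) =>
      refine ⟨k', Nat.lt_succ_iff.mp hk, ?_⟩
      have hm' : ((m+1:ℕ):ℝ) + (k':ℝ) = (m:ℝ) + ((k'+1:ℕ):ℝ) := by push_cast; ring
      rw [hcast, hm', add_assoc, ← sum_bvalF_succ v k']
      exact hlt
  · rintro ⟨k, hk, hlt⟩
    refine ⟨k+1, Nat.succ_le_succ hk, ?_⟩
    have hm' : (m:ℝ) + ((k+1:ℕ):ℝ) = ((m+1:ℕ):ℝ) + (k:ℝ) := by push_cast; ring
    rw [sum_bvalF_succ v k, ← add_assoc, ← hcast, hm']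
    exact hlt

/-- splitting a count over patterns of length N+1 by the first flip -/
lemma card_filter_cons {N : ℕ} (R : Bool → (Fin N → Bool) → Prop) :
    (@Finset.filter _ (fun v : Fin (N+1) → Bool => R (v 0) (Fin.tail v))
        (Classical.decPred _) Finset.univ).card
      = (@Finset.filter _ (R true) (Classical.decPred _) Finset.univ).card
        + (@Finset.filter _ (R false) (Classical.decPred _) Finset.univ).card := by
  classical
  have h1 : ∀ (M : ℕ) (P : (Fin M → Bool) → Prop),
      (@Finset.filter _ P (Classical.decPred _) Finset.univ).card = Fintype.card {v // P v} := by
    intro M P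
    rw [Fintype.card_subtype]
  rw [h1, h1, h1]
  have e1 : {v : Fin (N+1) → Bool // R (v 0) (Fin.tail v)}
      ≃ {x : Bool × (Fin N → Bool) // R x.1 x.2} := by
    refine (Equiv.subtypeEquiv (Fin.consEquiv (fun _ => Bool)).symm ?_)
    intro v
    simp [Fin.consEquiv]
  have e2 : {x : Bool × (Fin N → Bool) // R x.1 x.2}
      ≃ Σ c : Bool, {w : Fin N → Bool // R c w} := Equiv.subtypeProdEquivSigmaSubtype R
  rw [Fintype.card_congr (e1.trans e2), Fintype.card_sigma]
  rw [Fintype.sum_bool]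

lemma Vcard_rec {p : ℝ} {b m N : ℕ} (hbm : ¬ p < (b:ℝ)/m) :
    (Vfin p b m (N+1)).card = (Vfin p (b+1) (m+1) N).card + (Vfin p b (m+1) N).card := by
  classical
  unfold Vfin
  calc (@Finset.filter _ (Qpred p b m) (Classical.decPred _)
          (Finset.univ : Finset (Fin (N+1) → Bool))).card
      = (@Finset.filter _ (fun v : Fin (N+1) → Bool =>
          (fun c (w : Fin N → Bool) => Qpred p (b + if c then 1 else 0) (m+1) w) (v 0)
            (Fin.tail v)) (Classical.decPred _) Finset.univ).card := by
        congr 1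
        ext v
        simp only [Finset.mem_filter, Finset.mem_univ, true_and]
        exact Qpred_succ_iff hbm v
    _ = (@Finset.filter _ (Qpred p (b+1) (m+1)) (Classical.decPred _)
          (Finset.univ : Finset (Fin N → Bool))).card
        + (@Finset.filter _ (Qpred p b (m+1)) (Classical.decPred _)
          (Finset.univ : Finset (Fin N → Bool))).card := by
        rw [card_filter_cons (fun c (w : Fin N → Bool) =>
          Qpred p (b + if c then 1 else 0) (m+1) w)]
        congr 2

lemma Vcard_le_univ (p : ℝ) (b m N : ℕ) : (Vfin p b m N).card ≤ 2^N := by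
  classical
  calc (Vfin p b m N).card ≤ (Finset.univ : Finset (Fin N → Bool)).card :=
        Finset.card_filter_le _ _
    _ = 2^N := by simp [Finset.card_univ]

lemma one_le_B {p : ℝ} (hp : 1/2 < p) (hp1 : p < 1) {b m : ℕ} (hm : 1 ≤ m)
    (hbm : p < (b:ℝ)/m) : (1:ℝ) ≤ (2*p) ^ (-(((m:ℝ)*p - b)/(1-p))) := by
  have h2p : (1:ℝ) < 2*p := by linarith
  have hq : (0:ℝ) < 1 - p := by linarith
  have hm0 : (0:ℝ) < m := by exact_mod_cast hm
  have hmb : (m:ℝ)*p - b ≤ 0 := by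
    rw [lt_div_iff₀ hm0] at hbm
    nlinarith
  apply Real.one_le_rpow h2p.le
  rw [neg_nonneg]
  exact div_nonpos_iff.2 (Or.inr ⟨hmb, hq.le⟩)

/-- Key counting bound: the number of patterns of length `N` leading above `p` is at most
`2^N (2p)^(-(mp-b)/(1-p))`. -/
lemma Vcard_le (p : ℝ) (hp : 1/2 < p) (hp1 : p < 1) :
    ∀ (N b m : ℕ), 1 ≤ m →
    ((Vfin p b m N).card : ℝ) ≤ 2^N * (2*p) ^ (-(((m:ℝ)*p - b)/(1-p))) := by
  have h2p : (1:ℝ) < 2*p := by linarith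
  have h2p0 : (0:ℝ) < 2*p := by linarith
  have hq : (0:ℝ) < 1 - p := by linarith
  intro N
  induction N with
  | zero =>
    intro b m hm
    by_cases hbm : p < (b:ℝ)/m
    · calc ((Vfin p b m 0).card : ℝ) ≤ 2^0 := by exact_mod_cast Vcard_le_univ p b m 0
        _ ≤ 2^0 * (2*p) ^ (-(((m:ℝ)*p - b)/(1-p))) := by
            have := one_le_B hp hp1 hm hbm; nlinarith
    · have hzero : (Vfin p b m 0).card = 0 := by
        classical
        rw [Vfin, Finset.card_eq_zero, Finset.filter_eq_empty_iff]
        intro v _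
        rintro ⟨k, hk, hlt⟩
        interval_cases k
        simp only [Finset.range_zero, Finset.sum_empty, add_zero, Nat.cast_zero] at hlt
        exact hbm hlt
      rw [hzero]
      push_cast
      positivity
  | succ N ih =>
    intro b m hm
    by_cases hbm : p < (b:ℝ)/m
    · calc ((Vfin p b m (N+1)).card : ℝ) ≤ 2^(N+1) := by
            exact_mod_cast Vcard_le_univ p b m (N+1)
        _ ≤ 2^(N+1) * (2*p) ^ (-(((m:ℝ)*p - b)/(1-p))) := by
            have := one_le_B hp hp1 hm hbm
            have h2 : (0:ℝ) < 2^(N+1) := by positivity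
            nlinarith
    · rw [Vcard_rec hbm]
      push_cast
      set c : ℝ := -(((m:ℝ)*p - b)/(1-p)) with hc
      have h1 := ih (b+1) (m+1) (by omega)
      have h2 := ih b (m+1) (by omega)
      have e1 : -(((((m+1:ℕ)):ℝ)*p - ((b+1:ℕ):ℝ))/(1-p)) = c + 1 := by
        rw [hc]; push_cast; field_simp; ring
      have e2 : -(((((m+1:ℕ)):ℝ)*p - ((b:ℕ):ℝ))/(1-p)) = c - p/(1-p) := by
        rw [hc]; push_cast; field_simp; ring
      have e1' : ((Vfin p (b+1) (m+1) N).card : ℝ) ≤ 2^N * (2*p) ^ (c+1) := by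
        rw [e1] at h1; exact h1
      have e2' : ((Vfin p b (m+1) N).card : ℝ) ≤ 2^N * (2*p) ^ (c - p/(1-p)) := by
        rw [e2] at h2; exact h2
      have hstep := step_ineq hp hp1 c
      have hpow : (0:ℝ) < 2^N := by positivity
      calc ((Vfin p (b+1) (m+1) N).card : ℝ) + ((Vfin p b (m+1) N).card : ℝ)
          ≤ 2^N * (2*p) ^ (c+1) + 2^N * (2*p) ^ (c - p/(1-p)) := add_le_add e1' e2'
        _ = 2^N * ((2*p) ^ (c+1) + (2*p) ^ (c - p/(1-p))) := by ring
        _ ≤ 2^N * (2 * (2*p) ^ c) := by nlinarith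
        _ = 2^(N+1) * (2*p) ^ c := by ring

/-! ### Measure theory -/

section Meas
variable {Ω : Type*} [MeasurableSpace Ω] (μ : Measure Ω) [IsProbabilityMeasure μ]
  (X : ℕ → Ω → ℝ)

/-- cylinder set of a pattern -/
def Ecyl (N : ℕ) (v : Fin N → Bool) : Set Ω := {ω | ∀ i : Fin N, X i ω = bval (v i)}

def cylSet (N : ℕ) (v : Fin N → Bool) (i : ℕ) : Set ℝ :=
  if h : i < N then {bval (v ⟨i, h⟩)} else Set.univ

omit [MeasurableSpace Ω] in
lemma Ecyl_eq (N : ℕ) (v : Fin N → Bool) :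
    Ecyl X N v = ⋂ i ∈ Finset.range N, X i ⁻¹' (cylSet N v i) := by
  ext ω
  simp only [Ecyl, Set.mem_setOf_eq, Set.mem_iInter, Finset.mem_range, Set.mem_preimage]
  constructor
  · intro h i hi
    rw [cylSet, dif_pos hi]
    exact h ⟨i, hi⟩
  · intro h i
    have := h i.1 i.2
    rwa [cylSet, dif_pos i.2] at this

variable {μ X}

lemma meas_flip (hX : IsFairCoinSeq μ X) (i : ℕ) (c : Bool) :
    μ (X i ⁻¹' {bval c}) = 1/2 := by
  obtain ⟨hmeas, h01, hhalf, -⟩ := hX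
  have h1 : X i ⁻¹' {(1:ℝ)} = {ω | X i ω = 1} := rfl
  cases c
  · have h0 : X i ⁻¹' {bval false} = (X i ⁻¹' {(1:ℝ)})ᶜ := by
      ext ω
      simp only [bval, Set.mem_preimage, Set.mem_singleton_iff, Set.mem_compl_iff,
        Set.mem_setOf_eq, if_neg Bool.false_ne_true]
      constructor
      · intro h h1'; rw [h1'] at h; norm_num at h
      · intro h; rcases h01 i ω with h' | h' <;> simp [h'] at *
    rw [h0, measure_compl (hmeas i (measurableSet_singleton 1)) (measure_ne_top μ _), h1, hhalf]
    norm_num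
  · simpa [bval, h1] using hhalf i

lemma meas_Ecyl (hX : IsFairCoinSeq μ X) (N : ℕ) (v : Fin N → Bool) :
    μ (Ecyl X N v) = (1/2 : ENNReal)^N := by
  rw [Ecyl_eq]
  rw [hX.2.2.2.measure_inter_preimage_eq_mul (Finset.range N)
    (sets := cylSet N v) ?_]
  · rw [Finset.prod_congr rfl (fun i hi => ?_), Finset.prod_const, Finset.card_range]
    rw [Finset.mem_range] at hi
    rw [cylSet, dif_pos hi, meas_flip hX]
  · intro i _
    unfold cylSet
    split
    · exact measurableSet_singleton _
    · exact MeasurableSet.univ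

omit [IsProbabilityMeasure μ] in
lemma measurableSet_Ecyl (hmeas : ∀ i, Measurable (X i)) (N : ℕ) (v : Fin N → Bool) :
    MeasurableSet (Ecyl X N v) := by
  rw [Ecyl_eq]
  refine MeasurableSet.biInter (Finset.range N).countable_toSet fun i _ => ?_
  apply (hmeas i)
  unfold cylSet
  split
  · exact measurableSet_singleton _
  · exact MeasurableSet.univ

variable (X) in
/-- the event: proportion of heads rises above `p` at some time `≤ N` -/
def Eev (p : ℝ) (a n N : ℕ) : Set Ω :=
  {ω | ∃ k ≤ N, p < ((a:ℝ) + ∑ i ∈ Finset.range k, X i ω) / ((n:ℝ) + k)}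

omit [MeasurableSpace Ω] in
lemma sum_X_eq {N : ℕ} {v : Fin N → Bool} {ω : Ω} (hω : ω ∈ Ecyl X N v)
    {k : ℕ} (hk : k ≤ N) :
    ∑ i ∈ Finset.range k, X i ω = ∑ i ∈ Finset.range k, bvalF v i := by
  refine Finset.sum_congr rfl fun i hi => ?_
  have hiN : i < N := lt_of_lt_of_le (Finset.mem_range.mp hi) hk
  rw [bvalF, dif_pos hiN]
  exact hω ⟨i, hiN⟩

omit [MeasurableSpace Ω] in
lemma Eev_eq (h01 : ∀ i ω, X i ω = 0 ∨ X i ω = 1) (p : ℝ) (a n N : ℕ) :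
    Eev X p a n N = ⋃ v ∈ Vfin p a n N, Ecyl X N v := by
  classical
  ext ω
  simp only [Eev, Set.mem_setOf_eq, Set.mem_iUnion, exists_prop]
  constructor
  · rintro ⟨k, hk, hlt⟩
    set v : Fin N → Bool := fun i => decide (X i ω = 1) with hv
    have hωv : ω ∈ Ecyl X N v := by
      intro i
      rcases h01 i ω with h' | h' <;> simp [hv, bval, h']
    refine ⟨v, ?_, hωv⟩
    rw [Vfin, Finset.mem_filter]
    exact ⟨Finset.mem_univ _, ⟨k, hk, by rwa [← sum_X_eq hωv hk]⟩⟩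
  · rintro ⟨v, hv, hωv⟩
    rw [Vfin, Finset.mem_filter] at hv
    obtain ⟨k, hk, hlt⟩ := hv.2
    exact ⟨k, hk, by rwa [sum_X_eq hωv hk]⟩

lemma meas_Eev (hX : IsFairCoinSeq μ X) (p : ℝ) (a n N : ℕ) :
    μ (Eev X p a n N) = ((Vfin p a n N).card : ENNReal) * (1/2 : ENNReal)^N := by
  rw [Eev_eq hX.2.1 p a n N]
  rw [measure_biUnion_finset ?_ (fun v _ => measurableSet_Ecyl hX.1 N v)]
  · rw [Finset.sum_congr rfl (fun v _ => meas_Ecyl hX N v), Finset.sum_const, nsmul_eq_mul]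
  · intro v _ w _ hvw
    rw [Function.onFun, Set.disjoint_left]
    intro ω hωv hωw
    apply hvw
    funext i
    have h1 := hωv i
    have h2 := hωw i
    rw [h1] at h2
    cases hvi : v i <;> cases hwi : w i <;> simp_all [bval]

end Meas
end FairCoinAux

open FairCoinAux in
/-- For `max(a/n, 1/2) < p < 1`, `P(a,n,p) ≤ (2p)^(−(np−a)/(1−p))`. -/
theorem hitProb_le_rpow {Ω : Type*} [MeasurableSpace Ω] (μ : Measure Ω)
    [IsProbabilityMeasure μ] (X : ℕ → Ω → ℝ) (hX : IsFairCoinSeq μ X)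
    (a n : ℕ) (hn : 1 ≤ n) (han : a ≤ n) (p : ℝ)
    (hp : max ((a : ℝ) / n) (1 / 2) < p) (hp1 : p < 1) :
    hitProb μ X a n p ≤ (2 * p) ^ (-(((n : ℝ) * p - a) / (1 - p))) := by
  obtain ⟨han', h2⟩ := max_lt_iff.mp hp
  have h2p0 : (0:ℝ) < 2*p := by linarith
  set B : ℝ := (2 * p) ^ (-(((n : ℝ) * p - a) / (1 - p))) with hB
  have hB0 : 0 ≤ B := (Real.rpow_pos_of_pos h2p0 _).le
  rw [hitProb]
  apply ENNReal.toReal_le_of_le_ofReal hB0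
  have hset : {ω | ∃ k : ℕ, p < headsProp X a n k ω} = ⋃ N, Eev X p a n N := by
    ext ω
    simp only [Set.mem_setOf_eq, Set.mem_iUnion, headsProp, Eev]
    constructor
    · rintro ⟨k, h⟩; exact ⟨k, k, le_rfl, h⟩
    · rintro ⟨N, k, _, h⟩; exact ⟨k, h⟩
  have hmono : Monotone (fun N => Eev X p a n N) := by
    intro N M hNM ω hω
    obtain ⟨k, hk, hlt⟩ := hω
    exact ⟨k, hk.trans hNM, hlt⟩
  rw [hset, hmono.directed_le.measure_iUnion]
  apply iSup_le
  intro N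
  rw [meas_Eev hX p a n N]
  have hcount := Vcard_le p h2 hp1 N a n hn
  have hhalf : (1/2 : ENNReal)^N = ENNReal.ofReal ((1/2 : ℝ)^N) := by
    rw [ENNReal.ofReal_pow (by norm_num)]
    norm_num [ENNReal.ofReal_div_of_pos]
  have hcard : ((Vfin p a n N).card : ENNReal)
      = ENNReal.ofReal (((Vfin p a n N).card : ℝ)) := by
    rw [ENNReal.ofReal_natCast]
  rw [hhalf, hcard, ← ENNReal.ofReal_mul (by positivity)]
  apply ENNReal.ofReal_le_ofReal
  have h2N : (2:ℝ)^N * (1/2:ℝ)^N = 1 := by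
    rw [← mul_pow]; norm_num
  have hpowpos : (0:ℝ) < (1/2:ℝ)^N := by positivity
  calc ((Vfin p a n N).card : ℝ) * (1/2:ℝ)^N
      ≤ (2^N * B) * (1/2:ℝ)^N := by nlinarith
    _ = B := by rw [mul_comm ((2:ℝ)^N) B, mul_assoc, h2N, mul_one]
end

section
/- For every position (a,n), the clairvoyant value satisfies Ṽ(a,n) ≤ max(a/n, 1/2) + ∫_{max(a/n, 1/2)}^{1} (2p)^{−(np−a)/(1−p)} dp. -/
open MeasureTheory ProbabilityTheory Real

/-! ### Auxiliary material -/

section Aux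

/-- A measurable function bounded between `0` and a constant is integrable w.r.t. a
probability measure. -/
lemma integrable_of_bounds {Ω : Type*} [MeasurableSpace Ω] {μ : Measure Ω}
    [IsProbabilityMeasure μ] {f : Ω → ℝ} {C : ℝ} (hm : AEStronglyMeasurable f μ)
    (h0 : ∀ ω, 0 ≤ f ω) (hC : ∀ ω, f ω ≤ C) : Integrable f μ :=
  (integrable_const C).mono' hm (Filter.Eventually.of_forall fun ω => by
    rw [Real.norm_eq_abs, abs_of_nonneg (h0 ω)]; exact hC ω)

/-- Nonnegativity of the Kullback-Leibler divergence of `Bernoulli(1/2)` from `Bernoulli(p)`. -/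
lemma kl_nonneg {p : ℝ} (h1 : 1/2 < p) (h2 : p < 1) :
    0 ≤ p * Real.log (2*p) + (1-p) * Real.log (2*(1-p)) := by
  have hp : 0 < p := by linarith
  have hq : 0 < 1 - p := by linarith
  have hA := Real.log_le_sub_one_of_pos (x := (2*p)⁻¹) (by positivity)
  have hB := Real.log_le_sub_one_of_pos (x := (2*(1-p))⁻¹) (by positivity)
  rw [Real.log_inv] at hA hB
  have h2p : p * (2*p)⁻¹ = 1/2 := by field_simp
  have h2q : (1-p) * (2*(1-p))⁻¹ = 1/2 := by field_simp
  nlinarith [mul_le_mul_of_nonneg_left hA hp.le, mul_le_mul_of_nonneg_left hB hq.le]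

/-- The exponential supermartingale value at time `K`, as a function on sequence space. -/
noncomputable def seqM (l p : ℝ) (K : ℕ) (x : ℕ → ℝ) : ℝ :=
  Real.exp (l * ((∑ i ∈ Finset.range K, x i) - p * K))

/-- The event (in sequence space) that the proportion exceeds `p` at time `j`. -/
def seqA (p : ℝ) (a n : ℕ) (j : ℕ) : Set (ℕ → ℝ) :=
  {x | p * ((n:ℝ) + j) < (a:ℝ) + ∑ i ∈ Finset.range j, x i}

/-- The event (in sequence space) that the proportion has not exceeded `p` before time `K`. -/
def seqC (p : ℝ) (a n : ℕ) (K : ℕ) : Set (ℕ → ℝ) :=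
  {x | ∀ j < K, x ∉ seqA p a n j}

lemma measurable_seqSum (K : ℕ) : Measurable (fun x : ℕ → ℝ => ∑ i ∈ Finset.range K, x i) :=
  Finset.measurable_sum _ (fun i _ => measurable_pi_apply i)

lemma measurable_seqM (l p : ℝ) (K : ℕ) : Measurable (seqM l p K) :=
  Real.measurable_exp.comp (((measurable_seqSum K).sub measurable_const).const_mul l)

lemma measurableSet_seqA (p : ℝ) (a n j : ℕ) : MeasurableSet (seqA p a n j) :=
  measurableSet_lt measurable_const (measurable_const.add (measurable_seqSum j))

lemma measurableSet_seqC (p : ℝ) (a n K : ℕ) : MeasurableSet (seqC p a n K) := by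
  have : seqC p a n K = ⋂ j, ⋂ (_ : j < K), (seqA p a n j)ᶜ := by
    ext x; simp [seqC]
  rw [this]
  exact MeasurableSet.iInter fun j => MeasurableSet.iInter fun _ =>
    (measurableSet_seqA p a n j).compl

lemma seqC_succ (p : ℝ) (a n K : ℕ) :
    seqC p a n (K+1) = seqC p a n K ∩ (seqA p a n K)ᶜ := by
  ext x
  constructor
  · intro h
    exact ⟨fun j hj => h j (hj.trans (Nat.lt_succ_self K)), h K (Nat.lt_succ_self K)⟩
  · rintro ⟨h1, h2⟩ j hj
    rcases Nat.lt_succ_iff_lt_or_eq.1 hj with hj' | rfl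
    · exact h1 j hj'
    · exact h2

/-- The value of `seqM l p K` only depends on coordinates `< K`. -/
lemma seqM_congr {l p : ℝ} {K : ℕ} {x y : ℕ → ℝ} (h : ∀ i < K, x i = y i) :
    seqM l p K x = seqM l p K y := by
  unfold seqM
  have hs : ∑ i ∈ Finset.range K, x i = ∑ i ∈ Finset.range K, y i :=
    Finset.sum_congr rfl fun i hi => h i (Finset.mem_range.1 hi)
  rw [hs]

/-- Membership in `seqC p a n (K+1)` only depends on coordinates `< K`. -/
lemma seqC_mem_congr {p : ℝ} {a n K : ℕ} {x y : ℕ → ℝ} (h : ∀ i < K, x i = y i) :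
    x ∈ seqC p a n (K+1) ↔ y ∈ seqC p a n (K+1) := by
  unfold seqC seqA
  refine forall_congr' fun j => ?_
  refine imp_congr_right fun hj => ?_
  simp only [Set.mem_setOf_eq]
  have : ∑ i ∈ Finset.range j, x i = ∑ i ∈ Finset.range j, y i :=
    Finset.sum_congr rfl fun i hi =>
      h i (lt_of_lt_of_le (Finset.mem_range.1 hi) (Nat.lt_succ_iff.1 hj))
  rw [this]

/-- A function of the first `K` coin flips is independent of a function of the `K`-th flip. -/
lemma indep_head {Ω : Type*} [MeasurableSpace Ω] {μ : Measure Ω} {X : ℕ → Ω → ℝ}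
    (hXm : ∀ i, Measurable (X i)) (hXi : iIndepFun X μ)
    (K : ℕ) (G : (ℕ → ℝ) → ℝ) (hG : Measurable G)
    (hGt : ∀ x y : ℕ → ℝ, (∀ i < K, x i = y i) → G x = G y)
    (g : ℝ → ℝ) (hg : Measurable g) :
    IndepFun (fun ω => G (fun i => X i ω)) (fun ω => g (X K ω)) μ := by
  have h := hXi.indepFun_finset (Finset.range K) {K} (by simp) hXm
  have hφ : Measurable (fun v : ↥(Finset.range K) → ℝ =>
      G (fun i => if h : i ∈ Finset.range K then v ⟨i, h⟩ else 0)) := by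
    apply hG.comp
    apply measurable_pi_lambda
    intro i
    by_cases h : i ∈ Finset.range K
    · simp only [dif_pos h]; exact measurable_pi_apply _
    · simp only [dif_neg h]; exact measurable_const
  have hψ : Measurable (fun v : ↥({K} : Finset ℕ) → ℝ =>
      g (v ⟨K, Finset.mem_singleton_self K⟩)) := hg.comp (measurable_pi_apply _)
  have h2 := h.comp hφ hψ
  have e1 : (fun ω => G (fun i => X i ω)) =
      (fun v : ↥(Finset.range K) → ℝ =>
        G (fun i => if h : i ∈ Finset.range K then v ⟨i, h⟩ else 0)) ∘
        (fun ω (i : ↥(Finset.range K)) => X i ω) := by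
    funext ω
    exact hGt _ _ (fun i hi => by simp [Finset.mem_range.2 hi])
  rw [e1]
  exact h2

end Aux

section Maximal

variable {Ω : Type*} [MeasurableSpace Ω] (μ : Measure Ω) [IsProbabilityMeasure μ]
  (X : ℕ → Ω → ℝ)

/-- The maximal inequality: the probability that the proportion of heads ever strictly exceeds
`p` is at most `(2p)^(-(np-a)/(1-p))`. -/
lemma maximal_ineq (hX : IsFairCoinSeq μ X) (a n : ℕ) (hn : 1 ≤ n) {p : ℝ}
    (hp2 : 1/2 < p) (hp1 : p < 1) (hpa : (a:ℝ)/n < p) :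
    (μ {ω | ∃ k : ℕ, p * ((n:ℝ) + k) < (a:ℝ) + ∑ i ∈ Finset.range k, X i ω}).toReal
      ≤ (2*p) ^ (-(((n : ℝ) * p - a) / (1 - p))) := by
  obtain ⟨hXm, hX01, hXp, hXi⟩ := hX
  have hnR : (0:ℝ) < n := by exact_mod_cast hn
  have hq : 0 < 1 - p := by linarith
  have hp0 : 0 < p := by linarith
  set l : ℝ := Real.log (2*p) / (1-p) with hl_def
  have hllog : 0 < Real.log (2*p) := Real.log_pos (by linarith)
  have hl : 0 < l := div_pos hllog hq
  set c : ℝ := (n:ℝ) * p - (a:ℝ) with hc_def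
  have hc : 0 < c := by
    have := (div_lt_iff₀ hnR).1 hpa
    simp only [hc_def]; nlinarith
  -- the exponential of l * (1-p) is 2p
  have hexp2p : Real.exp (l * (1-p)) = 2*p := by
    rw [hl_def, div_mul_cancel₀ _ hq.ne', Real.exp_log (by linarith)]
  -- expectation of one step factor
  have hXint : ∀ K : ℕ, Integrable (X K) μ := fun K =>
    integrable_of_bounds (C := 1) (hXm K).aestronglyMeasurable
      (fun ω => by rcases hX01 K ω with h | h <;> rw [h] <;> norm_num)
      (fun ω => by rcases hX01 K ω with h | h <;> rw [h] <;> norm_num)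
  have hEX : ∀ K : ℕ, ∫ ω, X K ω ∂μ = 1/2 := by
    intro K
    have hs : MeasurableSet {ω | X K ω = 1} := (hXm K) (measurableSet_singleton 1)
    have hpt : (fun ω => X K ω) = fun ω =>
        Set.indicator {ω | X K ω = 1} (fun _ => (1:ℝ)) ω := by
      funext ω
      rcases hX01 K ω with h | h
      · rw [h, Set.indicator_apply_eq_zero.2 (fun hmem => absurd hmem (by simp [h]))]
      · rw [h, Set.indicator_of_mem (by simp [h] : ω ∈ {ω | X K ω = 1})]
    rw [hpt, MeasureTheory.integral_indicator_const (1:ℝ) hs, measureReal_def, hXp K]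
    norm_num [ENNReal.toReal_div]
  set ρ : ℝ := p + Real.exp (-(l*p))/2 with hρ_def
  have hEg : ∀ K : ℕ, ∫ ω, Real.exp (l * (X K ω - p)) ∂μ = ρ := by
    intro K
    have hpt : (fun ω => Real.exp (l * (X K ω - p))) = fun ω =>
        Real.exp (-(l*p)) + (Real.exp (l*(1-p)) - Real.exp (-(l*p))) * X K ω := by
      funext ω
      rcases hX01 K ω with h | h <;> rw [h] <;> ring_nf
    rw [hpt, integral_add (integrable_const _) ((hXint K).const_mul _),
      integral_const, integral_const_mul, hEX K, hexp2p]
    simp only [probReal_univ, ENNReal.toReal_one, smul_eq_mul, one_mul]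
    rw [hρ_def]; ring
  have hρle : ρ ≤ 1 := by
    have hkl := kl_nonneg hp2 hp1
    have hexple : Real.exp (-(l*p)) ≤ 2*(1-p) := by
      rw [show (2:ℝ)*(1-p) = Real.exp (Real.log (2*(1-p))) from
        (Real.exp_log (by linarith)).symm]
      apply Real.exp_le_exp.2
      rw [hl_def, div_mul_eq_mul_div, ← neg_div, div_le_iff₀ hq]
      nlinarith
    rw [hρ_def]; linarith
  set Xv : Ω → ℕ → ℝ := fun ω i => X i ω with hXv_def
  have hXvm : Measurable Xv := measurable_pi_lambda _ hXm
  -- the processes on Ω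
  set B : ℕ → Ω → ℝ := fun j ω => ((seqC p a n j ∩ seqA p a n j).indicator (seqM l p j)) (Xv ω)
    with hB_def
  set F : ℕ → Ω → ℝ := fun K ω => ((seqC p a n K).indicator (seqM l p K)) (Xv ω) with hF_def
  -- basic bounds
  have hMnonneg : ∀ (K : ℕ) (x : ℕ → ℝ), 0 ≤ seqM l p K x := fun K x => (Real.exp_pos _).le
  have hMbound : ∀ (K : ℕ) (ω : Ω), seqM l p K (Xv ω) ≤ Real.exp (l * K) := by
    intro K ω
    apply Real.exp_le_exp.2
    apply mul_le_mul_of_nonneg_left _ hl.le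
    have hsum : ∑ i ∈ Finset.range K, Xv ω i ≤ K := by
      calc ∑ i ∈ Finset.range K, Xv ω i ≤ ∑ i ∈ Finset.range K, 1 :=
            Finset.sum_le_sum fun i _ => by
              rcases hX01 i ω with h | h <;> simp [hXv_def, h]
      _ = K := by simp
    have : 0 ≤ p * K := by positivity
    linarith
  have hBmeas : ∀ j, Measurable (B j) := fun j =>
    (((measurable_seqM l p j).indicator
      ((measurableSet_seqC p a n j).inter (measurableSet_seqA p a n j))).comp hXvm)
  have hFmeas : ∀ K, Measurable (F K) := fun K =>
    (((measurable_seqM l p K).indicator (measurableSet_seqC p a n K)).comp hXvm)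
  have hBnonneg : ∀ j ω, 0 ≤ B j ω := fun j ω =>
    Set.indicator_nonneg (fun x _ => hMnonneg j x) _
  have hFnonneg : ∀ K ω, 0 ≤ F K ω := fun K ω =>
    Set.indicator_nonneg (fun x _ => hMnonneg K x) _
  have hBbound : ∀ j ω, B j ω ≤ Real.exp (l * j) := fun j ω =>
    le_trans (Set.indicator_le_self' (fun x _ => hMnonneg j x) _) (hMbound j ω)
  have hFbound : ∀ K ω, F K ω ≤ Real.exp (l * K) := fun K ω =>
    le_trans (Set.indicator_le_self' (fun x _ => hMnonneg K x) _) (hMbound K ω)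
  have hBint : ∀ j, Integrable (B j) μ := fun j =>
    integrable_of_bounds (hBmeas j).aestronglyMeasurable (hBnonneg j) (hBbound j)
  have hFint : ∀ K, Integrable (F K) μ := fun K =>
    integrable_of_bounds (hFmeas K).aestronglyMeasurable (hFnonneg K) (hFbound K)
  -- the key invariant, proved by induction using independence
  have hinv : ∀ K : ℕ, (∑ j ∈ Finset.range K, ∫ ω, B j ω ∂μ) + ∫ ω, F K ω ∂μ ≤ 1 := by
    intro K
    induction K with
    | zero =>
      simp only [Finset.range_zero, Finset.sum_empty, zero_add]
      have hone : ∀ ω, F 0 ω = 1 := by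
        intro ω
        have hmem : Xv ω ∈ seqC p a n 0 := fun j hj => absurd hj (Nat.not_lt_zero j)
        show ((seqC p a n 0).indicator (seqM l p 0)) (Xv ω) = 1
        rw [Set.indicator_of_mem hmem]
        simp [seqM]
      rw [show F 0 = fun _ => (1:ℝ) from funext hone]
      simp
    | succ K ih =>
      set F' : Ω → ℝ := fun ω => ((seqC p a n (K+1)).indicator (seqM l p K)) (Xv ω) with hF'_def
      have hF'meas : Measurable F' :=
        ((measurable_seqM l p K).indicator (measurableSet_seqC p a n (K+1))).comp hXvm
      have hF'nonneg : ∀ ω, 0 ≤ F' ω := fun ω =>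
        Set.indicator_nonneg (fun x _ => hMnonneg K x) _
      have hF'bound : ∀ ω, F' ω ≤ Real.exp (l * K) := fun ω =>
        le_trans (Set.indicator_le_self' (fun x _ => hMnonneg K x) _) (hMbound K ω)
      have hF'int : Integrable F' μ :=
        integrable_of_bounds hF'meas.aestronglyMeasurable hF'nonneg hF'bound
      -- split F K = B K + F'
      have hsplit : F K = fun ω => B K ω + F' ω := by
        funext ω
        show ((seqC p a n K).indicator (seqM l p K)) (Xv ω)
          = ((seqC p a n K ∩ seqA p a n K).indicator (seqM l p K)) (Xv ω)
            + ((seqC p a n (K+1)).indicator (seqM l p K)) (Xv ω)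
        by_cases h1 : Xv ω ∈ seqC p a n K
        · by_cases h2 : Xv ω ∈ seqA p a n K
          · rw [Set.indicator_of_mem h1, Set.indicator_of_mem (Set.mem_inter h1 h2),
              Set.indicator_of_notMem (by rw [seqC_succ]; exact fun hmem => hmem.2 h2)]
            ring
          · rw [Set.indicator_of_mem h1, Set.indicator_of_notMem (fun hmem => h2 hmem.2),
              Set.indicator_of_mem (by rw [seqC_succ]; exact Set.mem_inter h1 h2)]
            ring
        · rw [Set.indicator_of_notMem h1, Set.indicator_of_notMem (fun hmem => h1 hmem.1),
            Set.indicator_of_notMem (by rw [seqC_succ]; exact fun hmem => h1 hmem.1)]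
          ring
      -- F (K+1) = F' * g(X K)
      have hstep : F (K+1) = fun ω => F' ω * Real.exp (l * (X K ω - p)) := by
        funext ω
        show ((seqC p a n (K+1)).indicator (seqM l p (K+1))) (Xv ω)
          = ((seqC p a n (K+1)).indicator (seqM l p K)) (Xv ω) * Real.exp (l * (X K ω - p))
        by_cases h1 : Xv ω ∈ seqC p a n (K+1)
        · rw [Set.indicator_of_mem h1, Set.indicator_of_mem h1]
          unfold seqM
          rw [← Real.exp_add]
          congr 1
          rw [Finset.sum_range_succ]
          have hXvK : Xv ω K = X K ω := rfl
          rw [hXvK]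
          push_cast
          ring
        · rw [Set.indicator_of_notMem h1, Set.indicator_of_notMem h1, zero_mul]
      -- independence
      have hgmeas : Measurable (fun t : ℝ => Real.exp (l * (t - p))) :=
        Real.measurable_exp.comp ((measurable_id.sub measurable_const).const_mul l)
      have hindep : IndepFun F' (fun ω => Real.exp (l * (X K ω - p))) μ := by
        refine indep_head hXm hXi K ((seqC p a n (K+1)).indicator (seqM l p K))
          ((measurable_seqM l p K).indicator (measurableSet_seqC p a n (K+1)))
          (fun x y hxy => ?_) _ hgmeas
        by_cases hx : x ∈ seqC p a n (K+1)
        · rw [Set.indicator_of_mem hx, Set.indicator_of_mem ((seqC_mem_congr hxy).1 hx)]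
          exact seqM_congr hxy
        · rw [Set.indicator_of_notMem hx,
            Set.indicator_of_notMem (fun hy => hx ((seqC_mem_congr hxy).2 hy))]
      have hmul : ∫ ω, F (K+1) ω ∂μ = (∫ ω, F' ω ∂μ) * ρ := by
        rw [hstep]
        calc ∫ ω, F' ω * Real.exp (l * (X K ω - p)) ∂μ
            = (∫ ω, F' ω ∂μ) * ∫ ω, Real.exp (l * (X K ω - p)) ∂μ :=
              hindep.integral_mul_eq_mul_integral hF'meas.aestronglyMeasurable
                (hgmeas.comp (hXm K)).aestronglyMeasurable
          _ = (∫ ω, F' ω ∂μ) * ρ := by rw [hEg K]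
      have hle : ∫ ω, F (K+1) ω ∂μ ≤ ∫ ω, F' ω ∂μ := by
        rw [hmul]
        exact mul_le_of_le_one_right (integral_nonneg hF'nonneg) hρle
      have hFK : ∫ ω, F K ω ∂μ = ∫ ω, B K ω ∂μ + ∫ ω, F' ω ∂μ := by
        rw [hsplit, integral_add (hBint K) hF'int]
      rw [Finset.sum_range_succ]
      linarith
  -- lower bound each B-term by the hit probability
  set ASet : ℕ → Set Ω := fun j => Xv ⁻¹' (seqA p a n j) with hASet_def
  set BSet : ℕ → Set Ω := fun j => Xv ⁻¹' (seqC p a n j ∩ seqA p a n j) with hBSet_def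
  have hBSetm : ∀ j, MeasurableSet (BSet j) := fun j =>
    hXvm ((measurableSet_seqC p a n j).inter (measurableSet_seqA p a n j))
  have hBlow : ∀ j, Real.exp (l * c) * (μ (BSet j)).toReal ≤ ∫ ω, B j ω ∂μ := by
    intro j
    have hpt : ∀ ω, (BSet j).indicator (fun _ => Real.exp (l * c)) ω ≤ B j ω := by
      intro ω
      by_cases h : ω ∈ BSet j
      · rw [Set.indicator_of_mem h]
        have hA : Xv ω ∈ seqA p a n j := h.2
        have hm' : Xv ω ∈ seqC p a n j ∩ seqA p a n j := h
        show Real.exp (l * c) ≤ ((seqC p a n j ∩ seqA p a n j).indicator (seqM l p j)) (Xv ω)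
        rw [Set.indicator_of_mem hm']
        unfold seqM
        apply Real.exp_le_exp.2
        apply mul_le_mul_of_nonneg_left _ hl.le
        have hlt : p * ((n:ℝ) + j) < (a:ℝ) + ∑ i ∈ Finset.range j, Xv ω i := hA
        rw [hc_def]
        nlinarith
      · rw [Set.indicator_of_notMem h]; exact hBnonneg j ω
    calc Real.exp (l*c) * (μ (BSet j)).toReal
        = ∫ ω, (BSet j).indicator (fun _ => Real.exp (l * c)) ω ∂μ := by
          rw [MeasureTheory.integral_indicator_const _ (hBSetm j), smul_eq_mul, measureReal_def]; ring
      _ ≤ ∫ ω, B j ω ∂μ :=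
          integral_mono ((integrable_const _).indicator (hBSetm j)) (hBint j) hpt
  have hsumB : ∀ K : ℕ, ∑ j ∈ Finset.range K, (μ (BSet j)).toReal ≤ Real.exp (-(l*c)) := by
    intro K
    have h1 : Real.exp (l*c) * ∑ j ∈ Finset.range K, (μ (BSet j)).toReal ≤ 1 := by
      rw [Finset.mul_sum]
      calc ∑ j ∈ Finset.range K, Real.exp (l*c) * (μ (BSet j)).toReal
          ≤ ∑ j ∈ Finset.range K, ∫ ω, B j ω ∂μ := Finset.sum_le_sum fun j _ => hBlow j
        _ ≤ 1 := by
            have h2 : 0 ≤ ∫ ω, F K ω ∂μ := integral_nonneg (hFnonneg K)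
            have := hinv K
            linarith
    have hmul1 : Real.exp (l*c) * Real.exp (-(l*c)) = 1 := by
      rw [← Real.exp_add]; simp
    exact le_of_mul_le_mul_left (h1.trans_eq hmul1.symm) (Real.exp_pos _)
  -- first-hit decomposition: partial unions of `ASet` are covered by the disjointified `BSet`
  have hsub : ∀ K : ℕ, (⋃ j ∈ Finset.range K, ASet j) ⊆ ⋃ j ∈ Finset.range K, BSet j := by
    intro K ω hω
    simp only [Set.mem_iUnion, Finset.mem_range, exists_prop] at hω ⊢
    obtain ⟨j, hjK, hj⟩ := hω
    have hex : ∃ i, Xv ω ∈ seqA p a n i := ⟨j, hj⟩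
    classical
    refine ⟨Nat.find hex, lt_of_le_of_lt (Nat.find_min' hex hj) hjK,
      fun i hi => Nat.find_min hex hi, Nat.find_spec hex⟩
  have hpartial : ∀ K : ℕ, (μ (⋃ j ∈ Finset.range K, ASet j)).toReal ≤ Real.exp (-(l*c)) := by
    intro K
    refine le_trans ?_ (hsumB K)
    have h1 : μ (⋃ j ∈ Finset.range K, ASet j) ≤ ∑ j ∈ Finset.range K, μ (BSet j) :=
      (measure_mono (hsub K)).trans (measure_biUnion_finset_le _ _)
    have h2 : (∑ j ∈ Finset.range K, μ (BSet j)) ≠ ⊤ :=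
      (ENNReal.sum_lt_top.2 fun j _ => measure_lt_top μ _).ne
    calc (μ (⋃ j ∈ Finset.range K, ASet j)).toReal
        ≤ (∑ j ∈ Finset.range K, μ (BSet j)).toReal := ENNReal.toReal_mono h2 h1
      _ = ∑ j ∈ Finset.range K, (μ (BSet j)).toReal :=
          ENNReal.toReal_sum fun j _ => measure_ne_top μ _
  -- pass to the full union
  have hunion : {ω | ∃ k : ℕ, p * ((n:ℝ) + k) < (a:ℝ) + ∑ i ∈ Finset.range k, X i ω}
      = ⋃ K : ℕ, ⋃ j ∈ Finset.range K, ASet j := by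
    ext ω
    constructor
    · rintro ⟨k, hk⟩
      refine Set.mem_iUnion.2 ⟨k+1, Set.mem_biUnion (Finset.self_mem_range_succ k) ?_⟩
      exact hk
    · intro h
      obtain ⟨K, hK⟩ := Set.mem_iUnion.1 h
      obtain ⟨j, _, hj⟩ := Set.mem_iUnion₂.1 hK
      exact ⟨j, hj⟩
  have hmono : Monotone (fun K => ⋃ j ∈ Finset.range K, ASet j) := by
    intro K1 K2 h ω hω
    simp only [Set.mem_iUnion, Finset.mem_range, exists_prop] at hω ⊢
    obtain ⟨j, hj, hmem⟩ := hω
    exact ⟨j, lt_of_lt_of_le hj h, hmem⟩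
  have hμU : μ {ω | ∃ k : ℕ, p * ((n:ℝ) + k) < (a:ℝ) + ∑ i ∈ Finset.range k, X i ω}
      ≤ ENNReal.ofReal (Real.exp (-(l*c))) := by
    rw [hunion, Directed.measure_iUnion hmono.directed_le]
    exact iSup_le fun K => (ENNReal.le_ofReal_iff_toReal_le (measure_ne_top μ _)
      (Real.exp_nonneg _)).2 (hpartial K)
  have hfinal := ENNReal.toReal_le_of_le_ofReal (Real.exp_nonneg _) hμU
  refine hfinal.trans_eq ?_
  rw [Real.rpow_def_of_pos (by linarith : (0:ℝ) < 2*p)]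
  congr 1
  rw [hl_def, hc_def]
  ring

end Maximal

/-- `Ṽ(a,n) ≤ max(a/n, 1/2) + ∫_{max(a/n,1/2)}^1 (2p)^(−(np−a)/(1−p)) dp`. -/
theorem clairvoyant_le_add_integral_rpow {Ω : Type*} [MeasurableSpace Ω] (μ : Measure Ω)
    [IsProbabilityMeasure μ] (X : ℕ → Ω → ℝ) (hX : IsFairCoinSeq μ X)
    (a n : ℕ) (hn : 1 ≤ n) (han : a ≤ n) :
    clairvoyantValue μ X a n ≤
      max ((a : ℝ) / n) (1 / 2) +
        ∫ p in (max ((a : ℝ) / n) (1 / 2))..1,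
          (2 * p) ^ (-(((n : ℝ) * p - a) / (1 - p))) := by
  have hXm := hX.1
  have hX01 := hX.2.1
  set m : ℝ := max ((a:ℝ)/n) (1/2) with hm_def
  have hnR : (0:ℝ) < n := by exact_mod_cast hn
  have han' : (a:ℝ)/n ≤ 1 := by
    rw [div_le_one hnR]; exact_mod_cast han
  have hm0 : (0:ℝ) < m := lt_of_lt_of_le (by norm_num) (le_max_right _ _)
  have hm1 : m ≤ 1 := max_le han' (by norm_num)
  -- bounds on the proportion process
  have hRnonneg : ∀ k ω, 0 ≤ headsProp X a n k ω := by
    intro k ω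
    apply div_nonneg _ (by positivity)
    have : 0 ≤ ∑ i ∈ Finset.range k, X i ω :=
      Finset.sum_nonneg fun i _ => by rcases hX01 i ω with h | h <;> rw [h] <;> norm_num
    positivity
  have hRle1 : ∀ k ω, headsProp X a n k ω ≤ 1 := by
    intro k ω
    rw [headsProp, div_le_one (by positivity)]
    have h1 : ∑ i ∈ Finset.range k, X i ω ≤ k := by
      calc ∑ i ∈ Finset.range k, X i ω ≤ ∑ i ∈ Finset.range k, 1 :=
            Finset.sum_le_sum fun i _ => by rcases hX01 i ω with h | h <;> rw [h] <;> norm_num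
        _ = k := by simp
    have h2 : (a:ℝ) ≤ n := by exact_mod_cast han
    linarith
  have hbdd : ∀ ω, BddAbove (Set.range fun k => headsProp X a n k ω) := fun ω =>
    ⟨1, by rintro _ ⟨k, rfl⟩; exact hRle1 k ω⟩
  set S : Ω → ℝ := fun ω => ⨆ k, headsProp X a n k ω with hS_def
  have hSmeas : Measurable S := Measurable.iSup fun k => by
    apply Measurable.div _ measurable_const
    exact measurable_const.add (Finset.measurable_sum _ fun i _ => hXm i)
  have hS0 : ∀ ω, 0 ≤ S ω := fun ω =>
    le_trans (hRnonneg 0 ω) (le_ciSup (hbdd ω) 0)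
  have hS1 : ∀ ω, S ω ≤ 1 := fun ω => ciSup_le fun k => hRle1 k ω
  have hSint : Integrable S μ :=
    integrable_of_bounds (C := 1) hSmeas.aestronglyMeasurable hS0 hS1
  have hlayer := hSint.integral_eq_integral_meas_lt (Filter.Eventually.of_forall hS0)
  set w : ℝ → ℝ := fun t => (μ {ω | t < S ω}).toReal with hw_def
  have hwanti : Antitone w := fun t1 t2 h =>
    ENNReal.toReal_mono (measure_ne_top μ _) (measure_mono fun ω hω => lt_of_le_of_lt h hω)
  have hwmeas : Measurable w := hwanti.measurable
  have hw0 : ∀ t, 0 ≤ w t := fun t => ENNReal.toReal_nonneg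
  have hw1 : ∀ t, w t ≤ 1 := fun t => by
    apply ENNReal.toReal_le_of_le_ofReal one_pos.le
    simpa using prob_le_one
  have hwzero : ∀ t, 1 ≤ t → w t = 0 := by
    intro t ht
    have hempty : {ω | t < S ω} = ∅ :=
      Set.eq_empty_iff_forall_notMem.2 fun ω hω => absurd hω (not_lt.2 ((hS1 ω).trans ht))
    show (μ {ω | t < S ω}).toReal = 0
    rw [hempty, measure_empty, ENNReal.toReal_zero]
  -- integrability of w on intervals
  have hwint : ∀ u v : ℝ, IntegrableOn w (Set.Ioc u v) := by
    intro u v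
    have hconst : IntegrableOn (fun _ : ℝ => (1:ℝ)) (Set.Ioc u v) :=
      integrableOn_const measure_Ioc_lt_top.ne
    refine hconst.mono' hwmeas.aestronglyMeasurable.restrict ?_
    refine (ae_restrict_iff' measurableSet_Ioc).2 (Filter.Eventually.of_forall fun t _ => ?_)
    rw [Real.norm_eq_abs, abs_of_nonneg (hw0 t)]; exact hw1 t
  have hIoi1 : IntegrableOn w (Set.Ioi 1) := by
    have h0 : IntegrableOn (fun _ : ℝ => (0:ℝ)) (Set.Ioi 1) := integrableOn_zero
    exact h0.congr_fun (fun t ht => (hwzero t (le_of_lt ht)).symm) measurableSet_Ioi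
  have hIoim : IntegrableOn w (Set.Ioi m) := by
    rw [← Set.Ioc_union_Ioi_eq_Ioi hm1]
    exact (hwint m 1).union hIoi1
  have hsplit1 : ∫ t in Set.Ioi 0, w t = (∫ t in Set.Ioc 0 m, w t) + ∫ t in Set.Ioi m, w t := by
    rw [← Set.Ioc_union_Ioi_eq_Ioi hm0.le]
    exact MeasureTheory.setIntegral_union (Set.Ioc_disjoint_Ioi le_rfl) measurableSet_Ioi (hwint 0 m) hIoim
  have hz : ∫ t in Set.Ioi 1, w t = 0 := by
    have heq : Set.EqOn w (fun _ => (0:ℝ)) (Set.Ioi 1) := fun t ht => hwzero t (le_of_lt ht)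
    rw [setIntegral_congr_fun measurableSet_Ioi heq]
    simp
  have hsplit2 : ∫ t in Set.Ioi m, w t = ∫ t in Set.Ioc m 1, w t := by
    rw [← Set.Ioc_union_Ioi_eq_Ioi hm1,
      MeasureTheory.setIntegral_union (Set.Ioc_disjoint_Ioi le_rfl) measurableSet_Ioi (hwint m 1) hIoi1, hz,
      add_zero]
  have hbound1 : ∫ t in Set.Ioc 0 m, w t ≤ m := by
    have hle : ∫ t in Set.Ioc 0 m, w t ≤ ∫ _ in Set.Ioc 0 m, (1:ℝ) :=
      setIntegral_mono_on (hwint 0 m) (integrableOn_const measure_Ioc_lt_top.ne)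
        measurableSet_Ioc fun t _ => hw1 t
    refine hle.trans ?_
    rw [setIntegral_const, measureReal_def, Real.volume_Ioc, smul_eq_mul, mul_one,
      ENNReal.toReal_ofReal (by linarith)]
    linarith
  -- the rpow majorant
  set f : ℝ → ℝ := fun t => (2*t) ^ (-(((n:ℝ)*t - (a:ℝ))/(1-t))) with hf_def
  have hfmeas : Measurable f :=
    (measurable_const.mul measurable_id).pow
      ((((measurable_const.mul measurable_id).sub measurable_const).div
        (measurable_const.sub measurable_id)).neg)
  have hf0 : ∀ t ∈ Set.Ioc m 1, 0 ≤ f t := by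
    intro t ht
    have h2t : (0:ℝ) < 2*t := by
      have := lt_of_lt_of_le hm0 ht.1.le
      linarith
    exact Real.rpow_nonneg h2t.le _
  have hf1 : ∀ t ∈ Set.Ioc m 1, f t ≤ 1 := by
    intro t ht
    have h12 : 1/2 < t := lt_of_le_of_lt (le_max_right _ _) ht.1
    have h2t : (1:ℝ) ≤ 2*t := by linarith
    apply Real.rpow_le_one_of_one_le_of_nonpos h2t
    rcases eq_or_lt_of_le ht.2 with rfl | hlt
    · norm_num
    · have hq : (0:ℝ) < 1 - t := by linarith
      have hat : (a:ℝ)/n < t := lt_of_le_of_lt (le_max_left _ _) ht.1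
      have h3 := (div_lt_iff₀ hnR).1 hat
      have hna : 0 ≤ (n:ℝ)*t - a := by nlinarith
      have h4 := div_nonneg hna hq.le
      linarith
  have hfint : IntegrableOn f (Set.Ioc m 1) := by
    have hconst : IntegrableOn (fun _ : ℝ => (1:ℝ)) (Set.Ioc m 1) :=
      integrableOn_const measure_Ioc_lt_top.ne
    refine hconst.mono' hfmeas.aestronglyMeasurable.restrict ?_
    refine (ae_restrict_iff' measurableSet_Ioc).2 (Filter.Eventually.of_forall fun t ht => ?_)
    rw [Real.norm_eq_abs, abs_of_nonneg (hf0 t ht)]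
    exact hf1 t ht
  -- pointwise comparison via the maximal inequality
  have hwf : ∀ t ∈ Set.Ioc m 1, w t ≤ f t := by
    intro t ht
    rcases eq_or_lt_of_le ht.2 with rfl | hlt
    · rw [hwzero 1 le_rfl]
      exact hf0 1 ht
    · have h12 : 1/2 < t := lt_of_le_of_lt (le_max_right _ _) ht.1
      have hat : (a:ℝ)/n < t := lt_of_le_of_lt (le_max_left _ _) ht.1
      have hset : {ω | t < S ω}
          = {ω | ∃ k : ℕ, t * ((n:ℝ) + k) < (a:ℝ) + ∑ i ∈ Finset.range k, X i ω} := by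
        ext ω
        rw [Set.mem_setOf_eq, Set.mem_setOf_eq]
        simp only [hS_def]
        rw [lt_ciSup_iff (hbdd ω)]
        apply exists_congr
        intro k
        rw [headsProp, lt_div_iff₀ (add_pos_of_pos_of_nonneg hnR (Nat.cast_nonneg k))]
      show (μ {ω | t < S ω}).toReal ≤ f t
      rw [hset]
      exact maximal_ineq μ X hX a n hn h12 hlt hat
  have hbound2 : ∫ t in Set.Ioc m 1, w t ≤ ∫ t in Set.Ioc m 1, f t :=
    setIntegral_mono_on (hwint m 1) hfint measurableSet_Ioc hwf
  have hCV : clairvoyantValue μ X a n = ∫ t in Set.Ioi 0, w t := hlayer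
  have hival : ∫ p in m..1, (2*p) ^ (-(((n:ℝ)*p - (a:ℝ))/(1-p))) = ∫ t in Set.Ioc m 1, f t :=
    intervalIntegral.integral_of_le hm1
  rw [hCV, hsplit1, hsplit2, hival]
  linarith
end

section
/- For every position (a,n), the clairvoyant value satisfies Ṽ(a,n) ≤ max(a/n, 1/2) + (1/2)·∫_{max((2a−n)/n, 0)}^{1} exp(−(1+t)·t·n + 2a·t) dt. -/
open MeasureTheory ProbabilityTheory Real
open scoped ENNReal

section Auxiliary

set_option linter.unusedSectionVars false

variable {Ω : Type*} [MeasurableSpace Ω] {μ : Measure Ω} {X : ℕ → Ω → ℝ}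

lemma exp_add_exp_le (t : ℝ) :
    Real.exp (t - t ^ 2) + Real.exp (-t - t ^ 2) ≤ 2 := by
  have p1 : (0:ℝ) < 1 - t + t ^ 2 := by nlinarith [sq_nonneg (t - 1), sq_nonneg t]
  have p2 : (0:ℝ) < 1 + t + t ^ 2 := by nlinarith [sq_nonneg (t + 1), sq_nonneg t]
  have e1 : Real.exp (t - t ^ 2) * (1 - t + t ^ 2) ≤ 1 := by
    calc Real.exp (t - t ^ 2) * (1 - t + t ^ 2)
        ≤ Real.exp (t - t ^ 2) * Real.exp (t ^ 2 - t) := by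
          have h1 := Real.add_one_le_exp (t ^ 2 - t)
          exact mul_le_mul_of_nonneg_left (by linarith) (Real.exp_nonneg _)
      _ = 1 := by rw [← Real.exp_add, show t - t ^ 2 + (t ^ 2 - t) = 0 by ring, Real.exp_zero]
  have e2 : Real.exp (-t - t ^ 2) * (1 + t + t ^ 2) ≤ 1 := by
    calc Real.exp (-t - t ^ 2) * (1 + t + t ^ 2)
        ≤ Real.exp (-t - t ^ 2) * Real.exp (t ^ 2 + t) := by
          have h2 := Real.add_one_le_exp (t ^ 2 + t)
          exact mul_le_mul_of_nonneg_left (by linarith) (Real.exp_nonneg _)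
      _ = 1 := by rw [← Real.exp_add, show -t - t ^ 2 + (t ^ 2 + t) = 0 by ring, Real.exp_zero]
  have q1 : Real.exp (t - t ^ 2) ≤ 1 / (1 - t + t ^ 2) := (le_div_iff₀ p1).mpr e1
  have q2 : Real.exp (-t - t ^ 2) ≤ 1 / (1 + t + t ^ 2) := (le_div_iff₀ p2).mpr e2
  have key : 1 / (1 - t + t ^ 2) + 1 / (1 + t + t ^ 2) ≤ 2 := by
    rw [div_add_div _ _ (ne_of_gt p1) (ne_of_gt p2), div_le_iff₀ (mul_pos p1 p2)]
    nlinarith [sq_nonneg t, sq_nonneg (t^2)]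
  linarith

lemma step_ineq (x b : ℝ) :
    Real.exp (-(4 * x - 2) * (b + x - 1)) + Real.exp (-(4 * x - 2) * (b + x))
      ≤ 2 * Real.exp (-(4 * x - 2) * b) := by
  have h := exp_add_exp_le (2 * x - 1)
  have e1 : -(4 * x - 2) * (b + x - 1)
      = ((2*x-1) - (2*x-1) ^ 2) + -(4 * x - 2) * b := by ring
  have e2 : -(4 * x - 2) * (b + x)
      = (-(2*x-1) - (2*x-1) ^ 2) + -(4 * x - 2) * b := by ring
  rw [e1, e2, Real.exp_add, Real.exp_add, ← add_mul]
  exact mul_le_mul_of_nonneg_right h (Real.exp_nonneg _)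

lemma IsFairCoinSeq.shift (hX : IsFairCoinSeq μ X) :
    IsFairCoinSeq μ (fun i => X (i + 1)) := by
  obtain ⟨hm, hv, hp, hi⟩ := hX
  refine ⟨fun i => hm _, fun i => hv _, fun i => hp _, ?_⟩
  rw [iIndepFun_iff_measure_inter_preimage_eq_mul] at hi ⊢
  intro S sets hsets
  have key := hi (S.map ⟨fun i => i + 1, add_left_injective 1⟩)
      (sets := fun j => sets (j - 1)) ?_
  · have h1 : (⋂ i ∈ S.map ⟨fun i => i + 1, add_left_injective 1⟩, X i ⁻¹' sets (i - 1))
        = ⋂ i ∈ S, X (i + 1) ⁻¹' sets i := by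
      ext ω
      simp only [Set.mem_iInter, Finset.mem_map, Function.Embedding.coeFn_mk]
      constructor
      · intro h i hiS
        have := h (i + 1) ⟨i, hiS, rfl⟩
        simpa using this
      · rintro h j ⟨i, hiS, rfl⟩
        simpa using h i hiS
    rw [h1, Finset.prod_map] at key
    simpa using key
  · intro j hj
    simp only [Finset.mem_map, Function.Embedding.coeFn_mk] at hj
    obtain ⟨i, hiS, rfl⟩ := hj
    simpa using hsets i hiS

lemma fair_meas_inter (hX : IsFairCoinSeq μ X) {A F : Set Ω}
    (hA : MeasurableSet[MeasurableSpace.comap (X 0) inferInstance] A)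
    (hF : MeasurableSet[⨆ n ∈ ({0}ᶜ : Set ℕ), MeasurableSpace.comap (X n) inferInstance] F) :
    μ (A ∩ F) = μ A * μ F := by
  obtain ⟨hm, -, -, hi⟩ := hX
  have h := indep_biSup_compl (fun n => (hm n).comap_le) hi.iIndep ({0} : Set ℕ)
  rw [Indep_iff] at h
  refine h A F ?_ hF
  have hle : MeasurableSpace.comap (X 0) inferInstance
      ≤ ⨆ n ∈ ({0} : Set ℕ), MeasurableSpace.comap (X n) inferInstance :=
    le_biSup (fun n : ℕ => MeasurableSpace.comap (X n) inferInstance)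
      (Set.mem_singleton 0)
  exact hle A hA

lemma one_le_ofReal_exp {x b : ℝ} (hx : 1 / 2 ≤ x) (hb : b ≤ 0) :
    1 ≤ ENNReal.ofReal (Real.exp (-(4 * x - 2) * b)) := by
  rw [ENNReal.one_le_ofReal]
  exact Real.one_le_exp (by nlinarith)

lemma F_meas {X : ℕ → Ω → ℝ} (x c : ℝ) (N : ℕ) :
    MeasurableSet[⨆ n ∈ ({0}ᶜ : Set ℕ), MeasurableSpace.comap (X n) inferInstance]
      {ω | ∃ k ≤ N, x * k + c ≤ ∑ i ∈ Finset.range k, X (i + 1) ω} := by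
  have hYm : ∀ j : ℕ,
      Measurable[⨆ n ∈ ({0}ᶜ : Set ℕ), MeasurableSpace.comap (X n) inferInstance]
        (X (j + 1)) := fun j =>
    Measurable.mono (measurable_iff_comap_le.mpr le_rfl)
      (le_biSup (fun n : ℕ => MeasurableSpace.comap (X n) inferInstance)
        (by simp : (j + 1 : ℕ) ∈ ({0}ᶜ : Set ℕ))) le_rfl
  have hFeq : {ω | ∃ k ≤ N, x * k + c ≤ ∑ i ∈ Finset.range k, X (i + 1) ω}
      = ⋃ k, ⋃ (_ : k ≤ N), {ω | x * k + c ≤ ∑ i ∈ Finset.range k, X (i + 1) ω} := by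
    ext ω; simp
  rw [hFeq]
  exact MeasurableSet.iUnion fun k => MeasurableSet.iUnion fun _ =>
    measurableSet_le measurable_const (Finset.measurable_sum _ fun i _ => hYm i)

lemma tail_bound_N [IsProbabilityMeasure μ] (x : ℝ) (hx : 1 / 2 ≤ x) (N : ℕ) :
    ∀ (X : ℕ → Ω → ℝ), IsFairCoinSeq μ X → ∀ b : ℝ,
    μ {ω | ∃ k ≤ N, x * k + b ≤ ∑ i ∈ Finset.range k, X i ω}
      ≤ ENNReal.ofReal (Real.exp (-(4 * x - 2) * b)) := by
  induction N with
  | zero =>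
    intro X hX b
    by_cases hb : b ≤ 0
    · exact le_trans prob_le_one (one_le_ofReal_exp hx hb)
    · have hempty : {ω | ∃ k ≤ 0, x * k + b ≤ ∑ i ∈ Finset.range k, X i ω} = ∅ := by
        ext ω
        simp only [Set.mem_setOf_eq, Set.mem_empty_iff_false, iff_false, not_exists]
        rintro k ⟨hk, hsum⟩
        obtain rfl : k = 0 := Nat.le_zero.mp hk
        simp only [Finset.range_zero, Finset.sum_empty, Nat.cast_zero, mul_zero,
          zero_add] at hsum
        exact hb (by linarith)
      rw [hempty]; simp
  | succ N ih =>
    intro X hX b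
    by_cases hb : b ≤ 0
    · exact le_trans prob_le_one (one_le_ofReal_exp hx hb)
    push_neg at hb
    obtain ⟨hm, hv, hp, hi⟩ := id hX
    set Y : ℕ → Ω → ℝ := fun i => X (i + 1) with hYdef
    set F : ℝ → Set Ω := fun v =>
      {ω | ∃ k ≤ N, x * k + (b + x - v) ≤ ∑ i ∈ Finset.range k, Y i ω} with hFdef
    have hdecomp : {ω | ∃ k ≤ N + 1, x * k + b ≤ ∑ i ∈ Finset.range k, X i ω}
        ⊆ ((X 0 ⁻¹' {1}) ∩ F 1) ∪ ((X 0 ⁻¹' {0}) ∩ F 0) := by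
      rintro ω ⟨k, hk, hsum⟩
      match k with
      | 0 =>
        exfalso
        simp only [Finset.range_zero, Finset.sum_empty, Nat.cast_zero, mul_zero,
          zero_add] at hsum
        linarith
      | (k' + 1) =>
        have hk' : k' ≤ N := by omega
        rw [Finset.sum_range_succ'] at hsum
        push_cast at hsum
        rcases hv 0 ω with h0 | h0
        · right
          refine ⟨h0, k', hk', ?_⟩
          rw [h0] at hsum
          show x * k' + (b + x - 0) ≤ ∑ i ∈ Finset.range k', Y i ω
          simp only [hYdef]
          linarith
        · left
          refine ⟨h0, k', hk', ?_⟩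
          rw [h0] at hsum
          show x * k' + (b + x - 1) ≤ ∑ i ∈ Finset.range k', Y i ω
          simp only [hYdef]
          linarith
    have hmul : ∀ v : ℝ, μ (X 0 ⁻¹' {v} ∩ F v) = μ (X 0 ⁻¹' {v}) * μ (F v) := by
      intro v
      exact fair_meas_inter hX ⟨{v}, measurableSet_singleton v, rfl⟩ (F_meas x (b + x - v) N)
    have hhalf1 : μ (X 0 ⁻¹' {1}) = 1 / 2 := by
      have h : X 0 ⁻¹' {1} = {ω | X 0 ω = 1} := rfl
      rw [h, hp 0]
    have hhalf0 : μ (X 0 ⁻¹' {0}) = 1 / 2 := by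
      have hcompl : X 0 ⁻¹' {0} = (X 0 ⁻¹' {1})ᶜ := by
        ext ω
        simp only [Set.mem_preimage, Set.mem_singleton_iff, Set.mem_compl_iff]
        rcases hv 0 ω with h | h <;> simp [h]
      rw [hcompl, prob_compl_eq_one_sub ((hm 0) (measurableSet_singleton 1)), hhalf1]
      exact ENNReal.sub_eq_of_eq_add (by norm_num) (ENNReal.add_halves 1).symm
    have hIH1 : μ (F 1) ≤ ENNReal.ofReal (Real.exp (-(4 * x - 2) * (b + x - 1))) :=
      ih Y hX.shift (b + x - 1)
    have hIH0 : μ (F 0) ≤ ENNReal.ofReal (Real.exp (-(4 * x - 2) * (b + x - 0))) :=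
      ih Y hX.shift (b + x - 0)
    refine le_trans (measure_mono hdecomp) (le_trans (measure_union_le _ _) ?_)
    rw [hmul 1, hmul 0, hhalf1, hhalf0]
    calc 1 / 2 * μ (F 1) + 1 / 2 * μ (F 0)
        ≤ 1 / 2 * ENNReal.ofReal (Real.exp (-(4 * x - 2) * (b + x - 1)))
          + 1 / 2 * ENNReal.ofReal (Real.exp (-(4 * x - 2) * (b + x - 0))) := by
          gcongr
      _ ≤ ENNReal.ofReal (Real.exp (-(4 * x - 2) * b)) := by
          have h2 : (1 / 2 : ℝ≥0∞) = ENNReal.ofReal (1 / 2) := by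
            rw [ENNReal.ofReal_div_of_pos (by norm_num)]
            norm_num
          rw [h2, ← ENNReal.ofReal_mul (by norm_num), ← ENNReal.ofReal_mul (by norm_num),
            ← ENNReal.ofReal_add (by positivity) (by positivity)]
          apply ENNReal.ofReal_le_ofReal
          have hs := step_ineq x b
          have heq : b + x - 0 = b + x := by ring
          rw [heq]
          linarith

lemma tail_bound [IsProbabilityMeasure μ] (hX : IsFairCoinSeq μ X)
    (x b : ℝ) (hx : 1 / 2 ≤ x) :
    μ {ω | ∃ k : ℕ, x * k + b ≤ ∑ i ∈ Finset.range k, X i ω}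
      ≤ ENNReal.ofReal (Real.exp (-(4 * x - 2) * b)) := by
  have hunion : {ω | ∃ k : ℕ, x * k + b ≤ ∑ i ∈ Finset.range k, X i ω}
      = ⋃ N : ℕ, {ω | ∃ k ≤ N, x * k + b ≤ ∑ i ∈ Finset.range k, X i ω} := by
    ext ω
    simp only [Set.mem_setOf_eq, Set.mem_iUnion]
    constructor
    · rintro ⟨k, hk⟩; exact ⟨k, k, le_rfl, hk⟩
    · rintro ⟨N, k, _, hk⟩; exact ⟨k, hk⟩
  rw [hunion]
  have hmono : Monotone fun N : ℕ =>
      {ω | ∃ k ≤ N, x * k + b ≤ ∑ i ∈ Finset.range k, X i ω} := by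
    intro N M hNM ω ⟨k, hk, hs⟩
    exact ⟨k, hk.trans hNM, hs⟩
  rw [hmono.directed_le.measure_iUnion]
  exact iSup_le fun N => tail_bound_N x hx N X hX b

end Auxiliary

/-- `Ṽ(a,n) ≤ max(a/n, 1/2) + (1/2)·∫_{max((2a−n)/n,0)}^1 exp(−(1+t)·t·n + 2a·t) dt`. -/
theorem clairvoyant_le_add_integral_exp {Ω : Type*} [MeasurableSpace Ω] (μ : Measure Ω)
    [IsProbabilityMeasure μ] (X : ℕ → Ω → ℝ) (hX : IsFairCoinSeq μ X)
    (a n : ℕ) (hn : 1 ≤ n) (han : a ≤ n) :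
    clairvoyantValue μ X a n ≤
      max ((a : ℝ) / n) (1 / 2) +
        (1 / 2) * ∫ t in (max ((2 * (a : ℝ) - n) / n) 0)..1,
          Real.exp (-((1 + t) * t * n) + 2 * a * t) := by
  obtain ⟨hm, hv, hp, hi⟩ := id hX
  have hn0 : (0:ℝ) < n := by exact_mod_cast Nat.lt_of_lt_of_le Nat.zero_lt_one hn
  set c : ℝ := max ((a : ℝ) / n) (1 / 2) with hcdef
  have hc_half : (1:ℝ)/2 ≤ c := le_max_right _ _
  have hc0 : (0:ℝ) ≤ c := le_trans (by norm_num) hc_half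
  have hc1 : c ≤ 1 := max_le (by rw [div_le_one hn0]; exact_mod_cast han) (by norm_num)
  have hXnn : ∀ i ω, 0 ≤ X i ω := fun i ω => by rcases hv i ω with h | h <;> rw [h] <;> norm_num
  have hX1 : ∀ i ω, X i ω ≤ 1 := fun i ω => by rcases hv i ω with h | h <;> rw [h] <;> norm_num
  have hdenom : ∀ k : ℕ, (0:ℝ) < n + k := fun k => by positivity
  have hR0 : ∀ (k : ℕ) ω, 0 ≤ headsProp X a n k ω := fun k ω =>
    div_nonneg (add_nonneg (Nat.cast_nonneg a) (Finset.sum_nonneg fun i _ => hXnn i ω))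
      (le_of_lt (hdenom k))
  have hR1 : ∀ (k : ℕ) ω, headsProp X a n k ω ≤ 1 := by
    intro k ω
    rw [headsProp, div_le_one (hdenom k)]
    have hsum : ∑ i ∈ Finset.range k, X i ω ≤ k := by
      calc ∑ i ∈ Finset.range k, X i ω ≤ ∑ i ∈ Finset.range k, 1 :=
            Finset.sum_le_sum fun i _ => hX1 i ω
        _ = k := by simp
    have han' : (a:ℝ) ≤ n := by exact_mod_cast han
    linarith
  have hbdd : ∀ ω, BddAbove (Set.range fun k : ℕ => headsProp X a n k ω) := fun ω =>
    ⟨1, by rintro y ⟨k, rfl⟩; exact hR1 k ω⟩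
  set M : Ω → ℝ := fun ω => ⨆ k : ℕ, headsProp X a n k ω with hMdef
  have hM1 : ∀ ω, M ω ≤ 1 := fun ω => ciSup_le fun k => hR1 k ω
  have hM0 : ∀ ω, 0 ≤ M ω := fun ω => le_trans (hR0 0 ω) (le_ciSup (hbdd ω) 0)
  have hRmeas : ∀ k : ℕ, Measurable fun ω => headsProp X a n k ω := by
    intro k
    simp only [headsProp]
    exact (measurable_const.add (Finset.measurable_sum _ fun i _ => hm i)).div_const _
  have hMmeas : Measurable M := Measurable.iSup hRmeas
  have hMint : Integrable M μ := by
    refine Integrable.mono' (integrable_const (1:ℝ)) hMmeas.aestronglyMeasurable ?_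
    refine ae_of_all _ fun ω => ?_
    rw [Real.norm_eq_abs, abs_le]
    exact ⟨by linarith [hM0 ω], hM1 ω⟩
  set g : Ω → ℝ := fun ω => max (M ω - c) 0 with hgdef
  have hgmeas : Measurable g := (hMmeas.sub measurable_const).max measurable_const
  have hg0 : ∀ ω, 0 ≤ g ω := fun ω => le_max_right _ _
  have hg1 : ∀ ω, g ω ≤ 1 := fun ω => max_le (by linarith [hM1 ω]) (by norm_num)
  have hgint : Integrable g μ := by
    refine Integrable.mono' (integrable_const (1:ℝ)) hgmeas.aestronglyMeasurable ?_
    refine ae_of_all _ fun ω => ?_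
    rw [Real.norm_eq_abs, abs_le]
    exact ⟨by linarith [hg0 ω], hg1 ω⟩
  have step1 : clairvoyantValue μ X a n ≤ c + ∫ ω, g ω ∂μ := by
    rw [clairvoyantValue]
    have hpt : ∀ ω, (⨆ k : ℕ, headsProp X a n k ω) ≤ c + g ω := by
      intro ω
      have h1 : M ω - c ≤ g ω := le_max_left _ _
      have h2 : (⨆ k : ℕ, headsProp X a n k ω) = M ω := rfl
      rw [h2]; linarith
    calc ∫ ω, (⨆ k : ℕ, headsProp X a n k ω) ∂μ
        ≤ ∫ ω, (c + g ω) ∂μ := integral_mono hMint ((integrable_const c).add hgint) hpt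
      _ = c + ∫ ω, g ω ∂μ := by
          rw [integral_add (integrable_const c) hgint, integral_const, probReal_univ,
            one_smul]
  have step2 : ∫ ω, g ω ∂μ = ∫ s in Set.Ioi (0:ℝ), (μ {ω | s < g ω}).toReal :=
    hgint.integral_eq_integral_meas_lt (ae_of_all μ fun ω => hg0 ω)
  set f : ℝ → ℝ := fun s => Real.exp (-(4 * (c + s) - 2) * ((c + s) * n - a)) with hfdef
  have hfcont : Continuous f := by fun_prop
  set H : ℝ → ℝ := (Set.Ioc (0:ℝ) (1 - c)).indicator f with hHdef
  have hHint : Integrable H (volume.restrict (Set.Ioi (0:ℝ))) := by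
    have h1 : IntegrableOn f (Set.Ioc 0 (1 - c)) := hfcont.integrableOn_Ioc
    exact (h1.integrable_indicator measurableSet_Ioc).restrict
  have step3 : ∫ s in Set.Ioi (0:ℝ), (μ {ω | s < g ω}).toReal
      ≤ ∫ s in Set.Ioi (0:ℝ), H s := by
    refine integral_mono_of_nonneg (ae_of_all _ fun s => ENNReal.toReal_nonneg) hHint ?_
    filter_upwards [ae_restrict_mem measurableSet_Ioi] with s hs
    have hs0 : (0:ℝ) < s := hs
    by_cases hs1 : s ≤ 1 - c
    · rw [hHdef, Set.indicator_of_mem (Set.mem_Ioc.mpr ⟨hs0, hs1⟩)]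
      have hsub : {ω | s < g ω} ⊆
          {ω | ∃ k : ℕ, (c + s) * k + ((c + s) * n - a) ≤ ∑ i ∈ Finset.range k, X i ω} := by
        intro ω hω
        have hgω : s < g ω := hω
        have hMx : c + s < M ω := by
          rcases le_or_gt (M ω - c) 0 with h | h
          · exfalso; rw [hgdef] at hgω; simp only at hgω
            rw [max_eq_right h] at hgω; linarith
          · rw [hgdef] at hgω; simp only at hgω
            rw [max_eq_left h.le] at hgω; linarith
        obtain ⟨k, hk⟩ := (lt_ciSup_iff (hbdd ω)).mp hMx
        refine ⟨k, ?_⟩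
        rw [headsProp, lt_div_iff₀ (hdenom k)] at hk
        have hexp : (c + s) * ((n:ℝ) + k) = (c + s) * n + (c + s) * k := by ring
        rw [hexp] at hk
        linarith
      calc (μ {ω | s < g ω}).toReal
          ≤ (μ {ω | ∃ k : ℕ, (c + s) * k + ((c + s) * n - a)
              ≤ ∑ i ∈ Finset.range k, X i ω}).toReal :=
            ENNReal.toReal_mono (measure_ne_top μ _) (measure_mono hsub)
        _ ≤ Real.exp (-(4 * (c + s) - 2) * ((c + s) * n - a)) := by
            refine ENNReal.toReal_le_of_le_ofReal (Real.exp_nonneg _) ?_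
            exact tail_bound hX (c + s) ((c + s) * n - a) (by linarith)
        _ = f s := rfl
    · push_neg at hs1
      rw [hHdef, Set.indicator_of_notMem (fun hmem => absurd hmem.2 (not_le.mpr hs1))]
      have hempty : {ω | s < g ω} = ∅ := by
        ext ω
        simp only [Set.mem_setOf_eq, Set.mem_empty_iff_false, iff_false, not_lt]
        show max (M ω - c) 0 ≤ s
        exact max_le (by linarith [hM1 ω]) (le_of_lt hs0)
      rw [hempty]
      simp
  have hend : 2 * c - 1 = max ((2 * (a:ℝ) - n) / n) 0 := by
    have hq : (2 * (a:ℝ) - n) / n = 2 * ((a:ℝ) / n) - 1 := by field_simp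
    rw [hq, hcdef]
    rcases le_total ((a:ℝ)/n) (1/2) with h | h
    · rw [max_eq_right h, max_eq_right (by linarith)]; norm_num
    · rw [max_eq_left h, max_eq_left (by linarith)]
  have step4 : ∫ s in Set.Ioi (0:ℝ), H s
      = (1/2) * ∫ t in (max ((2 * (a:ℝ) - n) / n) 0)..1,
          Real.exp (-((1 + t) * t * n) + 2 * a * t) := by
    rw [hHdef, integral_indicator measurableSet_Ioc,
      Measure.restrict_restrict measurableSet_Ioc,
      Set.inter_eq_self_of_subset_left Set.Ioc_subset_Ioi_self,
      ← intervalIntegral.integral_of_le (by linarith : (0:ℝ) ≤ 1 - c)]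
    have hie : ∀ s ∈ Set.uIcc (0:ℝ) (1 - c), f s
        = (fun t => Real.exp (-((1 + t) * t * n) + 2 * a * t)) (2 * s + (2 * c - 1)) := by
      intro s _
      rw [hfdef]
      simp only []
      congr 1
      ring
    rw [intervalIntegral.integral_congr hie,
      intervalIntegral.integral_comp_mul_add
        (fun t => Real.exp (-((1 + t) * t * n) + 2 * a * t)) two_ne_zero (2 * c - 1)]
    have he1 : 2 * (0:ℝ) + (2 * c - 1) = 2 * c - 1 := by ring
    have he2 : 2 * (1 - c) + (2 * c - 1) = 1 := by ring
    rw [he1, he2, hend, smul_eq_mul]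
    norm_num
  calc clairvoyantValue μ X a n ≤ c + ∫ ω, g ω ∂μ := step1
    _ = c + ∫ s in Set.Ioi (0:ℝ), (μ {ω | s < g ω}).toReal := by rw [step2]
    _ ≤ c + ∫ s in Set.Ioi (0:ℝ), H s := by linarith [step3]
    _ = c + (1/2) * ∫ t in (max ((2 * (a:ℝ) - n) / n) 0)..1,
          Real.exp (-((1 + t) * t * n) + 2 * a * t) := by rw [step4]
end

section
/- For every position (a,n), the clairvoyant value satisfies Ṽ(a,n) ≤ max(a/n, 1/2) + (1/(2√n))·∫₀^∞ exp(−u² − (|2a−n|/√n)·u) du. -/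
set_option maxHeartbeats 1000000
open scoped ENNReal


open MeasureTheory ProbabilityTheory Real

namespace CRaux

noncomputable def bval (x : Bool) : ℝ := if x then 1 else 0

def walkEv (Y : Bool → ℝ) (N : ℕ) (b : ℝ) (σ : ℕ → Bool) : Prop :=
  ∃ k ≤ N, b ≤ ∑ i ∈ Finset.range k, Y (σ i)

def ext (N : ℕ) (τ : Fin N → Bool) : ℕ → Bool := fun i => if h : i < N then τ ⟨i, h⟩ else false

open scoped Classical in
lemma core (Y : Bool → ℝ) (lam : ℝ) (hlam : 0 ≤ lam)
    (h2 : Real.exp (lam * Y true) + Real.exp (lam * Y false) ≤ 2) :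
    ∀ (N : ℕ) (b : ℝ),
      (∑ τ : Fin N → Bool, if walkEv Y N b (ext N τ) then (1:ℝ) else 0)
        ≤ 2 ^ N * Real.exp (-(lam * b)) := by
  intro N
  induction N with
  | zero =>
    intro b
    have h1 : ∀ τ : Fin 0 → Bool, (if walkEv Y 0 b (ext 0 τ) then (1:ℝ) else 0)
        ≤ Real.exp (-(lam * b)) := by
      intro τ
      by_cases h : walkEv Y 0 b (ext 0 τ)
      · obtain ⟨k, hk, hsum⟩ := h
        interval_cases k
        simp only [Finset.range_zero, Finset.sum_empty] at hsum
        rw [if_pos ⟨0, le_refl 0, by simpa⟩]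
        have : 0 ≤ -(lam * b) := by nlinarith
        simpa using Real.one_le_exp this
      · rw [if_neg h]; positivity
    calc (∑ τ : Fin 0 → Bool, if walkEv Y 0 b (ext 0 τ) then (1:ℝ) else 0)
        ≤ ∑ _τ : Fin 0 → Bool, Real.exp (-(lam * b)) := Finset.sum_le_sum fun τ _ => h1 τ
      _ = 2 ^ 0 * Real.exp (-(lam * b)) := by simp
  | succ N ih =>
    intro b
    by_cases hb : b ≤ 0
    · have h1 : ∀ τ : Fin (N+1) → Bool, (if walkEv Y (N+1) b (ext (N+1) τ) then (1:ℝ) else 0)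
          ≤ Real.exp (-(lam * b)) := by
        intro τ
        by_cases h : walkEv Y (N+1) b (ext (N+1) τ)
        · rw [if_pos h]
          have : 0 ≤ -(lam * b) := by nlinarith
          simpa using Real.one_le_exp this
        · rw [if_neg h]; positivity
      calc (∑ τ : Fin (N+1) → Bool, if walkEv Y (N+1) b (ext (N+1) τ) then (1:ℝ) else 0)
          ≤ ∑ _τ : Fin (N+1) → Bool, Real.exp (-(lam * b)) :=
            Finset.sum_le_sum fun τ _ => h1 τ
        _ = 2 ^ (N+1) * Real.exp (-(lam * b)) := by
            rw [Finset.sum_const, Finset.card_univ, Fintype.card_fun]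
            simp [nsmul_eq_mul]
    · push_neg at hb
      -- rewrite the sum via the cons equivalence
      have key : ∀ (x : Bool) (τ : Fin N → Bool),
          walkEv Y (N+1) b (ext (N+1) (Fin.cons x τ)) ↔ walkEv Y N (b - Y x) (ext N τ) := by
        intro x τ
        have hshift : ∀ i : ℕ, ext (N+1) (Fin.cons x τ) (i+1) = ext N τ i := by
          intro i
          by_cases h : i < N
          · simp only [ext, dif_pos (Nat.succ_lt_succ h), dif_pos h]
            exact congrArg _ rfl
          · simp only [ext, dif_neg (fun hh => h (Nat.lt_of_succ_lt_succ hh)), dif_neg h]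
        have hzero : ext (N+1) (Fin.cons x τ) 0 = x := by
          simp [ext]
        constructor
        · rintro ⟨k, hk, hsum⟩
          rcases k with _ | j
          · simp only [Finset.range_zero, Finset.sum_empty] at hsum; linarith
          · refine ⟨j, Nat.lt_succ_iff.mp hk, ?_⟩
            rw [Finset.sum_range_succ'] at hsum
            have : ∑ i ∈ Finset.range j, Y (ext (N+1) (Fin.cons x τ) (i+1))
                = ∑ i ∈ Finset.range j, Y (ext N τ i) :=
              Finset.sum_congr rfl fun i _ => by rw [hshift]
            rw [this, hzero] at hsum
            linarith
        · rintro ⟨j, hj, hsum⟩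
          refine ⟨j+1, Nat.succ_le_succ hj, ?_⟩
          rw [Finset.sum_range_succ', hzero]
          have : ∑ i ∈ Finset.range j, Y (ext (N+1) (Fin.cons x τ) (i+1))
              = ∑ i ∈ Finset.range j, Y (ext N τ i) :=
            Finset.sum_congr rfl fun i _ => by rw [hshift]
          rw [this]
          linarith
      calc (∑ τ : Fin (N+1) → Bool, if walkEv Y (N+1) b (ext (N+1) τ) then (1:ℝ) else 0)
          = ∑ p : Bool × (Fin N → Bool),
              (if walkEv Y (N+1) b (ext (N+1) (Fin.cons p.1 p.2)) then (1:ℝ) else 0) := by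
            rw [← Equiv.sum_comp (Fin.consEquiv (fun _ => Bool))
              (fun σ => if walkEv Y (N+1) b (ext (N+1) σ) then (1:ℝ) else 0)]
            rfl
        _ = ∑ x : Bool, ∑ τ : Fin N → Bool,
              (if walkEv Y N (b - Y x) (ext N τ) then (1:ℝ) else 0) := by
            rw [Fintype.sum_prod_type]
            exact Finset.sum_congr rfl fun x _ => Finset.sum_congr rfl fun τ _ => by
              rw [if_congr (key x τ) rfl rfl]
        _ ≤ ∑ x : Bool, 2 ^ N * Real.exp (-(lam * (b - Y x))) :=
            Finset.sum_le_sum fun x _ => ih (b - Y x)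
        _ = 2 ^ N * Real.exp (-(lam * b)) *
              (Real.exp (lam * Y true) + Real.exp (lam * Y false)) := by
            rw [Fintype.sum_bool]
            have e1 : -(lam * (b - Y true)) = -(lam * b) + lam * Y true := by ring
            have e2 : -(lam * (b - Y false)) = -(lam * b) + lam * Y false := by ring
            rw [e1, e2, Real.exp_add, Real.exp_add]
            ring
        _ ≤ 2 ^ N * Real.exp (-(lam * b)) * 2 := by
            apply mul_le_mul_of_nonneg_left h2; positivity
        _ = 2 ^ (N+1) * Real.exp (-(lam * b)) := by ring

variable {Ω : Type*} [MeasurableSpace Ω] (μ : Measure Ω) [IsProbabilityMeasure μ]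
  (X : ℕ → Ω → ℝ)

open scoped Classical in
lemma measB (hmeas : ∀ i, Measurable (X i)) (hval : ∀ i ω, X i ω = 0 ∨ X i ω = 1)
    (hhalf : ∀ i, μ {ω | X i ω = 1} = 1/2)
    (hindep : iIndepFun X μ)
    (s b lam : ℝ) (hlam : 0 ≤ lam)
    (h2 : Real.exp (lam * (1/2 - s)) + Real.exp (lam * (-(1/2) - s)) ≤ 2) (N : ℕ) :
    μ {ω | ∃ k ≤ N, b + (1/2 + s) * k ≤ ∑ i ∈ Finset.range k, X i ω}
      ≤ ENNReal.ofReal (Real.exp (-(lam * b))) := by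
  set Y : Bool → ℝ := fun x => bval x - (1/2 + s) with hY
  have hYt : Y true = 1/2 - s := by simp [hY, bval]; ring
  have hYf : Y false = -(1/2) - s := by simp [hY, bval]; ring
  -- the atoms
  set E : (Fin N → Bool) → Set Ω :=
    fun τ => ⋂ i ∈ Finset.range N, X i ⁻¹' {bval (ext N τ i)} with hE
  have hEmem : ∀ τ ω, ω ∈ E τ ↔ ∀ i < N, X i ω = bval (ext N τ i) := by
    intro τ ω
    simp [hE, Set.mem_iInter, Finset.mem_range]
  have hEmeas : ∀ τ, MeasurableSet (E τ) :=
    fun τ => MeasurableSet.biInter (Set.to_countable _)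
      (fun i _ => (hmeas i) (measurableSet_singleton _))
  -- half probabilities
  have hzero : ∀ i, μ {ω | X i ω = 0} = 1/2 := by
    intro i
    have hc : {ω | X i ω = 0} = {ω | X i ω = 1}ᶜ := by
      ext ω
      simp only [Set.mem_setOf_eq, Set.mem_compl_iff]
      constructor
      · intro h h1; rw [h] at h1; norm_num at h1
      · intro h; rcases hval i ω with h0 | h1; exact h0; exact absurd h1 h
    rw [hc, measure_compl (show MeasurableSet {ω | X i ω = 1} from
      (hmeas i) (measurableSet_singleton 1)) (measure_ne_top μ _), hhalf i, measure_univ]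
    exact ENNReal.sub_half ENNReal.one_ne_top
  have hsingle : ∀ (i : ℕ) (x : Bool), μ (X i ⁻¹' {bval x}) = 1/2 := by
    intro i x
    cases x
    · have : X i ⁻¹' {bval false} = {ω | X i ω = 0} := by
        ext ω; simp [bval]
      rw [this]; exact hzero i
    · have : X i ⁻¹' {bval true} = {ω | X i ω = 1} := by
        ext ω; simp [bval]
      rw [this]; exact hhalf i
  have hatom : ∀ τ, μ (E τ) = (1/2 : ℝ≥0∞) ^ N := by
    intro τ
    rw [hE]
    rw [hindep.measure_inter_preimage_eq_mul (Finset.range N)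
      (sets := fun i => {bval (ext N τ i)}) (fun i _ => measurableSet_singleton _)]
    rw [Finset.prod_congr rfl (fun i _ => hsingle i (ext N τ i)), Finset.prod_const,
      Finset.card_range]
  -- atoms cover and are disjoint
  have hcover : ∀ ω : Ω, ∃ τ, ω ∈ E τ := by
    intro ω
    refine ⟨fun i => if X (i : ℕ) ω = 1 then true else false, ?_⟩
    rw [hEmem]
    intro i hi
    simp only [ext, dif_pos hi]
    rcases hval i ω with h0 | h1
    · rw [if_neg (by rw [h0]; norm_num), h0]; simp [bval]
    · rw [if_pos h1, h1]; simp [bval]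
  have hdisj : Pairwise (Function.onFun Disjoint E) := by
    intro τ τ' hne
    rw [Function.onFun, Set.disjoint_left]
    intro ω hω hω'
    apply hne
    funext i
    have h1 := (hEmem τ ω).mp hω i i.isLt
    have h2 := (hEmem τ' ω).mp hω' i i.isLt
    have hext1 : ext N τ (i : ℕ) = τ i := by simp [ext, i.isLt]
    have hext2 : ext N τ' (i : ℕ) = τ' i := by simp [ext, i.isLt]
    rw [hext1] at h1; rw [hext2] at h2
    have hb : bval (τ i) = bval (τ' i) := by rw [← h1, ← h2]
    have hinj : ∀ x y : Bool, bval x = bval y → x = y := by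
      intro x y; cases x <;> cases y <;> norm_num [bval]
    exact hinj _ _ hb
  -- the event
  set A : Set Ω := {ω | ∃ k ≤ N, b + (1/2 + s) * k ≤ ∑ i ∈ Finset.range k, X i ω} with hA
  have hAmeas : MeasurableSet A := by
    have : A = ⋃ k, ⋃ (_ : k ≤ N), {ω | b + (1/2 + s) * k ≤ ∑ i ∈ Finset.range k, X i ω} := by
      ext ω; simp [hA]
    rw [this]
    refine MeasurableSet.iUnion fun k => MeasurableSet.iUnion fun _ => ?_
    exact measurableSet_le measurable_const (Finset.measurable_sum _ fun i _ => hmeas i)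
  -- key: A ∩ E τ
  have hkey : ∀ τ, A ∩ E τ = if walkEv Y N b (ext N τ) then E τ else ∅ := by
    intro τ
    have hiff : ∀ ω, ω ∈ E τ → (ω ∈ A ↔ walkEv Y N b (ext N τ)) := by
      intro ω hω
      have hsum : ∀ k, k ≤ N → ∑ i ∈ Finset.range k, X i ω
          = (∑ i ∈ Finset.range k, Y (ext N τ i)) + (1/2 + s) * k := by
        intro k hk
        have : ∀ i ∈ Finset.range k, X i ω = Y (ext N τ i) + (1/2 + s) := by
          intro i hi
          rw [(hEmem τ ω).mp hω i (lt_of_lt_of_le (Finset.mem_range.mp hi) hk)]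
          simp [hY]
        rw [Finset.sum_congr rfl this, Finset.sum_add_distrib, Finset.sum_const,
          Finset.card_range, nsmul_eq_mul, mul_comm]
      constructor
      · rintro ⟨k, hk, hle⟩
        exact ⟨k, hk, by rw [hsum k hk] at hle; linarith⟩
      · rintro ⟨k, hk, hle⟩
        exact ⟨k, hk, by rw [hsum k hk]; linarith⟩
    by_cases h : walkEv Y N b (ext N τ)
    · rw [if_pos h]
      ext ω
      exact ⟨fun hh => hh.2, fun hh => ⟨(hiff ω hh).mpr h, hh⟩⟩
    · rw [if_neg h]
      ext ω
      simp only [Set.mem_inter_iff, Set.mem_empty_iff_false, iff_false]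
      rintro ⟨h1, h2⟩
      exact h ((hiff ω h2).mp h1)
  -- decompose
  have hdecomp : μ A = ∑ τ : Fin N → Bool, μ (A ∩ E τ) := by
    have hU : A = ⋃ τ, A ∩ E τ := by
      ext ω
      simp only [Set.mem_iUnion, Set.mem_inter_iff]
      constructor
      · intro h; obtain ⟨τ, hτ⟩ := hcover ω; exact ⟨τ, h, hτ⟩
      · rintro ⟨τ, h, _⟩; exact h
    calc μ A = μ (⋃ τ, A ∩ E τ) := by rw [← hU]
      _ = ∑' τ, μ (A ∩ E τ) := measure_iUnion (fun τ τ' hne => (hdisj hne).mono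
            Set.inter_subset_right Set.inter_subset_right)
          (fun τ => hAmeas.inter (hEmeas τ))
      _ = ∑ τ : Fin N → Bool, μ (A ∩ E τ) := tsum_fintype _
  rw [hdecomp]
  have hterm : ∀ τ, μ (A ∩ E τ)
      = ENNReal.ofReal (if walkEv Y N b (ext N τ) then (1/2 : ℝ)^N else 0) := by
    intro τ
    rw [hkey τ]
    by_cases h : walkEv Y N b (ext N τ)
    · rw [if_pos h, if_pos h, hatom τ]
      rw [ENNReal.ofReal_pow (by norm_num)]
      congr 1
      rw [ENNReal.ofReal_div_of_pos (by norm_num), ENNReal.ofReal_one, ENNReal.ofReal_ofNat]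
    · rw [if_neg h, if_neg h, ENNReal.ofReal_zero, measure_empty]
  rw [Finset.sum_congr rfl (fun τ _ => hterm τ),
    ← ENNReal.ofReal_sum_of_nonneg (fun τ _ => by positivity)]
  apply ENNReal.ofReal_le_ofReal
  have hcore := core Y lam hlam (by rw [hYt, hYf]; exact h2) N b
  calc (∑ τ : Fin N → Bool, if walkEv Y N b (ext N τ) then (1/2:ℝ)^N else 0)
      = (∑ τ : Fin N → Bool, if walkEv Y N b (ext N τ) then (1:ℝ) else 0) * (1/2)^N := by
        rw [Finset.sum_mul]
        exact Finset.sum_congr rfl fun τ _ => by rw [ite_mul, one_mul, zero_mul]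
    _ ≤ (2 ^ N * Real.exp (-(lam * b))) * (1/2)^N := by
        apply mul_le_mul_of_nonneg_right hcore; positivity
    _ = Real.exp (-(lam * b)) := by
        rw [show (2:ℝ)^N * Real.exp (-(lam * b)) * (1/2)^N
          = (2 * (1/2))^N * Real.exp (-(lam * b)) by rw [mul_pow]; ring]
        norm_num

open scoped Classical in
lemma measC (hmeas : ∀ i, Measurable (X i)) (hval : ∀ i ω, X i ω = 0 ∨ X i ω = 1)
    (hhalf : ∀ i, μ {ω | X i ω = 1} = 1/2)
    (hindep : iIndepFun X μ)
    (s b lam : ℝ) (hlam : 0 ≤ lam)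
    (h2 : Real.exp (lam * (1/2 - s)) + Real.exp (lam * (-(1/2) - s)) ≤ 2) :
    μ {ω | ∃ k, b + (1/2 + s) * k ≤ ∑ i ∈ Finset.range k, X i ω}
      ≤ ENNReal.ofReal (Real.exp (-(lam * b))) := by
  have hU : {ω | ∃ k, b + (1/2 + s) * k ≤ ∑ i ∈ Finset.range k, X i ω}
      = ⋃ N, {ω | ∃ k ≤ N, b + (1/2 + s) * k ≤ ∑ i ∈ Finset.range k, X i ω} := by
    ext ω
    simp only [Set.mem_setOf_eq, Set.mem_iUnion]
    constructor
    · rintro ⟨k, hk⟩; exact ⟨k, k, le_refl k, hk⟩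
    · rintro ⟨N, k, _, hk⟩; exact ⟨k, hk⟩
  rw [hU]
  have hmono : Monotone (fun N => {ω | ∃ k ≤ N, b + (1/2 + s) * k
      ≤ ∑ i ∈ Finset.range k, X i ω}) := by
    intro N M hNM ω
    rintro ⟨k, hk, h⟩
    exact ⟨k, le_trans hk hNM, h⟩
  rw [hmono.measure_iUnion]
  exact iSup_le fun N => measB μ X hmeas hval hhalf hindep s b lam hlam h2 N

/-- the tail bound -/
lemma tailBound (hmeas : ∀ i, Measurable (X i)) (hval : ∀ i ω, X i ω = 0 ∨ X i ω = 1)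
    (hhalf : ∀ i, μ {ω | X i ω = 1} = 1/2)
    (hindep : iIndepFun X μ)
    (a n : ℕ) (hn : 1 ≤ n) (han : a ≤ n) (t : ℝ) (ht : 0 < t) :
    μ {ω | max ((a:ℝ)/n) (1/2) + t < ⨆ k, headsProp X a n k ω}
      ≤ ENNReal.ofReal (Real.exp (-(4*n*t^2 + 2*|2*(a:ℝ) - n| * t))) := by
  have hnpos : (0:ℝ) < n := by exact_mod_cast hn
  set M : ℝ := max ((a:ℝ)/n) (1/2) with hM
  have hM2 : (1:ℝ)/2 ≤ M := le_max_right _ _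
  set s : ℝ := M + t - 1/2 with hs
  have hspos : 0 < s := by simp only [hs]; linarith
  set b : ℝ := M*n - a + t*n with hb
  set lam : ℝ := 4*s with hlam'
  have hlam : 0 ≤ lam := by positivity
  -- the exponential moment condition
  have h2 : Real.exp (lam * (1/2 - s)) + Real.exp (lam * (-(1/2) - s)) ≤ 2 := by
    have e1 : lam * (1/2 - s) = -(4*s^2) + 2*s := by rw [hlam']; ring
    have e2 : lam * (-(1/2) - s) = -(4*s^2) + -(2*s) := by rw [hlam']; ring
    rw [e1, e2, Real.exp_add, Real.exp_add, ← mul_add]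
    have hcosh : Real.exp (2*s) + Real.exp (-(2*s)) ≤ 2 * Real.exp (2*s^2) := by
      have h := Real.cosh_le_exp_half_sq (2*s)
      rw [Real.cosh_eq] at h
      have : (2*s)^2/2 = 2*s^2 := by ring
      rw [this] at h
      linarith
    calc Real.exp (-(4*s^2)) * (Real.exp (2*s) + Real.exp (-(2*s)))
        ≤ Real.exp (-(4*s^2)) * (2 * Real.exp (2*s^2)) := by
          apply mul_le_mul_of_nonneg_left hcosh; positivity
      _ = 2 * Real.exp (-(2*s^2)) := by
          rw [show Real.exp (-(4*s^2)) * (2 * Real.exp (2*s^2))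
            = 2 * (Real.exp (-(4*s^2)) * Real.exp (2*s^2)) by ring, ← Real.exp_add]
          ring_nf
      _ ≤ 2 * 1 := by
          apply mul_le_mul_of_nonneg_left _ (by norm_num)
          rw [Real.exp_le_one_iff]; nlinarith
      _ = 2 := by norm_num
  -- inclusion into the walk event
  have hincl : {ω | M + t < ⨆ k, headsProp X a n k ω}
      ⊆ {ω | ∃ k, b + (1/2 + s) * k ≤ ∑ i ∈ Finset.range k, X i ω} := by
    intro ω hω
    simp only [Set.mem_setOf_eq] at hω ⊢
    have hbdd : BddAbove (Set.range fun k => headsProp X a n k ω) := by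
      refine ⟨1, ?_⟩
      rintro x ⟨k, rfl⟩
      have hden : (0:ℝ) < n + k := by positivity
      simp only [headsProp]
      rw [div_le_one hden]
      have hSk : ∑ i ∈ Finset.range k, X i ω ≤ k := by
        calc ∑ i ∈ Finset.range k, X i ω ≤ ∑ i ∈ Finset.range k, 1 := by
              apply Finset.sum_le_sum
              intro i _
              rcases hval i ω with h | h <;> rw [h] <;> norm_num
          _ = k := by simp
      have : (a:ℝ) ≤ n := by exact_mod_cast han
      linarith
    obtain ⟨k, hk⟩ := (lt_ciSup_iff hbdd).mp hω
    refine ⟨k, ?_⟩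
    have hden : (0:ℝ) < n + k := by positivity
    simp only [headsProp] at hk
    rw [lt_div_iff₀ hden] at hk
    have he : b + (1/2 + s) * k = (M + t) * ((n:ℝ) + k) - a := by
      simp only [hb, hs]; ring
    linarith
  calc μ {ω | M + t < ⨆ k, headsProp X a n k ω}
      ≤ μ {ω | ∃ k, b + (1/2 + s) * k ≤ ∑ i ∈ Finset.range k, X i ω} := measure_mono hincl
    _ ≤ ENNReal.ofReal (Real.exp (-(lam * b))) :=
        measC μ X hmeas hval hhalf hindep s b lam hlam h2
    _ ≤ ENNReal.ofReal (Real.exp (-(4*n*t^2 + 2*|2*(a:ℝ) - n| * t))) := by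
        apply ENNReal.ofReal_le_ofReal
        apply Real.exp_le_exp.mpr
        rw [neg_le_neg_iff]
        -- show 4nt² + 2ct ≤ lam * b
        have hn' : (n:ℝ) ≠ 0 := ne_of_gt hnpos
        rcases max_cases ((a:ℝ)/n) (1/2) with ⟨hMeq, hge⟩ | ⟨hMeq, hlt⟩
        · -- M = a/n, a/n ≥ 1/2, so 2a - n ≥ 0
          have h2an : (0:ℝ) ≤ 2*(a:ℝ) - n := by
            rw [le_div_iff₀ hnpos] at hge
            linarith
          rw [abs_of_nonneg h2an]
          have key : lam * b = 4*n*t^2 + 2*(2*(a:ℝ)-n)*t := by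
            rw [hlam', hs, hb, hM, hMeq]
            field_simp
            ring
          linarith [key]
        · -- M = 1/2, a/n < 1/2, so 2a - n ≤ 0
          have h2an : 2*(a:ℝ) - n ≤ 0 := by
            rw [div_lt_iff₀ hnpos] at hlt
            linarith
          rw [abs_of_nonpos h2an]
          have key : lam * b = 4*n*t^2 + 2*((n:ℝ)-2*a)*t := by
            rw [hlam', hs, hb, hM, hMeq]
            ring
          linarith [key]

end CRaux

open CRaux in
/-- `Ṽ(a,n) ≤ max(a/n, 1/2) + (1/(2√n))·∫₀^∞ exp(−u² − (|2a−n|/√n)·u) du`. -/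
theorem clairvoyant_le_add_gaussian_integral {Ω : Type*} [MeasurableSpace Ω] (μ : Measure Ω)
    [IsProbabilityMeasure μ] (X : ℕ → Ω → ℝ) (hX : IsFairCoinSeq μ X)
    (a n : ℕ) (hn : 1 ≤ n) (han : a ≤ n) :
    clairvoyantValue μ X a n ≤
      max ((a : ℝ) / n) (1 / 2) +
        (1 / (2 * Real.sqrt n)) *
          ∫ u in Set.Ioi (0 : ℝ),
            Real.exp (-u ^ 2 - (|2 * (a : ℝ) - n| / Real.sqrt n) * u) := by
  obtain ⟨hmeas, hval, hhalf, hindep⟩ := hX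
  have hnpos : (0:ℝ) < n := by exact_mod_cast hn
  set M : ℝ := max ((a:ℝ)/n) (1/2) with hM
  set c : ℝ := |2*(a:ℝ) - n| with hc
  have hc0 : 0 ≤ c := abs_nonneg _
  set G : Ω → ℝ := fun ω => ⨆ k : ℕ, headsProp X a n k ω with hG
  -- pointwise bounds on headsProp
  have hR0 : ∀ k ω, 0 ≤ headsProp X a n k ω := by
    intro k ω
    apply div_nonneg _ (by positivity)
    have : 0 ≤ ∑ i ∈ Finset.range k, X i ω :=
      Finset.sum_nonneg fun i _ => by rcases hval i ω with h | h <;> rw [h] <;> norm_num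
    positivity
  have hR1 : ∀ k ω, headsProp X a n k ω ≤ 1 := by
    intro k ω
    have hden : (0:ℝ) < n + k := by positivity
    rw [headsProp, div_le_one hden]
    have hSk : ∑ i ∈ Finset.range k, X i ω ≤ k := by
      calc ∑ i ∈ Finset.range k, X i ω ≤ ∑ i ∈ Finset.range k, 1 :=
            Finset.sum_le_sum fun i _ => by rcases hval i ω with h | h <;> rw [h] <;> norm_num
        _ = k := by simp
    have : (a:ℝ) ≤ n := by exact_mod_cast han
    linarith
  have hbdd : ∀ ω, BddAbove (Set.range fun k => headsProp X a n k ω) := by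
    intro ω
    exact ⟨1, by rintro x ⟨k, rfl⟩; exact hR1 k ω⟩
  have hG0 : ∀ ω, 0 ≤ G ω := fun ω =>
    le_trans (hR0 0 ω) (le_ciSup (hbdd ω) 0)
  have hG1 : ∀ ω, G ω ≤ 1 := fun ω => ciSup_le fun k => hR1 k ω
  have hGmeas : Measurable G := by
    apply Measurable.iSup
    intro k
    apply Measurable.div_const
    exact measurable_const.add (Finset.measurable_sum _ fun i _ => hmeas i)
  have hGint : Integrable G μ := by
    apply Integrable.mono' (integrable_const (1:ℝ)) hGmeas.aestronglyMeasurable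
    filter_upwards with ω
    rw [Real.norm_eq_abs, abs_of_nonneg (hG0 ω)]
    exact hG1 ω
  -- the positive part F
  set F : Ω → ℝ := fun ω => max (G ω - M) 0 with hF
  have hM0 : 0 < M := lt_of_lt_of_le (by norm_num) (le_max_right _ _)
  have hFmeas : Measurable F := (hGmeas.sub measurable_const).max measurable_const
  have hF0 : ∀ ω, 0 ≤ F ω := fun ω => le_max_right _ _
  have hFle : ∀ ω, F ω ≤ 1 := fun ω => by
    rw [hF]
    apply max_le _ (by norm_num)
    have := hG1 ω
    linarith
  have hFint : Integrable F μ := by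
    apply Integrable.mono' (integrable_const (1:ℝ)) hFmeas.aestronglyMeasurable
    filter_upwards with ω
    rw [Real.norm_eq_abs, abs_of_nonneg (hF0 ω)]
    exact hFle ω
  -- step 1: ∫ G ≤ M + ∫ F
  have step1 : clairvoyantValue μ X a n ≤ M + ∫ ω, F ω ∂μ := by
    rw [clairvoyantValue]
    have h1 : ∫ ω, (⨆ k : ℕ, headsProp X a n k ω) ∂μ ≤ ∫ ω, (M + F ω) ∂μ := by
      apply integral_mono hGint ((integrable_const M).add hFint)
      intro ω
      simp only [Pi.add_apply]
      have : G ω - M ≤ F ω := le_max_left _ _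
      show G ω ≤ M + F ω
      linarith
    rwa [integral_add (integrable_const M) hFint, integral_const, probReal_univ,
      one_smul] at h1
  -- step 2: layer cake
  have step2 : ∫ ω, F ω ∂μ
      = ∫ t in Set.Ioi (0:ℝ), ENNReal.toReal (μ {ω | t < F ω}) :=
    hFint.integral_eq_integral_meas_lt (Filter.Eventually.of_forall hF0)
  -- step 3: tail domination
  set g : ℝ → ℝ := fun t => Real.exp (-(4*n*t^2 + 2*c*t)) with hg
  have hgcont : Continuous g := by
    apply Real.continuous_exp.comp
    have : Continuous fun t : ℝ => 4*(n:ℝ)*t^2 + 2*c*t :=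
      ((continuous_const.mul (continuous_pow 2)).add (continuous_const.mul continuous_id))
    exact this.neg
  have hgint : IntegrableOn g (Set.Ioi 0) := by
    apply Integrable.mono' ((integrable_exp_neg_mul_sq (show (0:ℝ) < 4*n by positivity)).restrict
      (s := Set.Ioi 0)) hgcont.aestronglyMeasurable
    rw [ae_restrict_iff' measurableSet_Ioi]
    filter_upwards with t ht
    rw [Real.norm_eq_abs, abs_of_nonneg (le_of_lt (Real.exp_pos _))]
    apply Real.exp_le_exp.mpr
    have ht' : 0 < t := Set.mem_Ioi.mp ht
    have : 0 ≤ 2*c*t := mul_nonneg (mul_nonneg (by norm_num) hc0) (le_of_lt ht')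
    nlinarith
  have htail : ∀ t ∈ Set.Ioi (0:ℝ), ENNReal.toReal (μ {ω | t < F ω}) ≤ g t := by
    intro t ht
    rw [Set.mem_Ioi] at ht
    have hset : {ω | t < F ω} = {ω | M + t < ⨆ k, headsProp X a n k ω} := by
      ext ω
      simp only [Set.mem_setOf_eq, hF, lt_max_iff]
      constructor
      · rintro (h | h)
        · show M + t < G ω; linarith
        · linarith
      · intro h; left; show t < G ω - M; linarith
    rw [hset]
    have := tailBound μ X hmeas hval hhalf hindep a n hn han t ht
    apply ENNReal.toReal_le_of_le_ofReal (le_of_lt (Real.exp_pos _))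
    exact this
  have hmeasF : Measurable fun t : ℝ => ENNReal.toReal (μ {ω | t < F ω}) := by
    apply Measurable.ennreal_toReal
    exact Antitone.measurable fun u v huv => measure_mono fun ω h => lt_of_le_of_lt huv h
  have hFtint : IntegrableOn (fun t : ℝ => ENNReal.toReal (μ {ω | t < F ω})) (Set.Ioi 0) := by
    apply Integrable.mono' hgint hmeasF.aestronglyMeasurable
    rw [ae_restrict_iff' measurableSet_Ioi]
    filter_upwards with t ht
    rw [Real.norm_eq_abs, abs_of_nonneg ENNReal.toReal_nonneg]
    exact htail t ht
  have step3 : ∫ t in Set.Ioi (0:ℝ), ENNReal.toReal (μ {ω | t < F ω})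
      ≤ ∫ t in Set.Ioi (0:ℝ), g t :=
    setIntegral_mono_on hFtint hgint measurableSet_Ioi htail
  -- step 4: change of variables u = 2√n t
  have hsq : Real.sqrt n > 0 := Real.sqrt_pos.mpr hnpos
  set r : ℝ := 2 * Real.sqrt n with hr
  have hrpos : 0 < r := by positivity
  have step4 : ∫ t in Set.Ioi (0:ℝ), g t
      = (1 / (2 * Real.sqrt n)) * ∫ u in Set.Ioi (0:ℝ),
          Real.exp (-u ^ 2 - (c / Real.sqrt n) * u) := by
    have hgu : ∀ t : ℝ, g t = Real.exp (-(r*t) ^ 2 - (c / Real.sqrt n) * (r*t)) := by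
      intro t
      have h1 : (r*t)^2 = 4*n*t^2 := by
        rw [hr, mul_pow, mul_pow, Real.sq_sqrt (le_of_lt hnpos)]
        ring
      have h2 : (c / Real.sqrt n) * (r*t) = 2*c*t := by
        rw [hr]
        field_simp
      simp only [hg]
      rw [h1, h2]
      congr 1
      ring
    calc ∫ t in Set.Ioi (0:ℝ), g t
        = ∫ t in Set.Ioi (0:ℝ),
            Real.exp (-(r*t) ^ 2 - (c / Real.sqrt n) * (r*t)) := by
          exact setIntegral_congr_fun measurableSet_Ioi fun t _ => hgu t
      _ = r⁻¹ • ∫ u in Set.Ioi (r*0), Real.exp (-u ^ 2 - (c / Real.sqrt n) * u) :=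
          integral_comp_mul_left_Ioi (fun u => Real.exp (-u ^ 2 - (c / Real.sqrt n) * u)) 0 hrpos
      _ = (1 / (2 * Real.sqrt n)) * ∫ u in Set.Ioi (0:ℝ),
            Real.exp (-u ^ 2 - (c / Real.sqrt n) * u) := by
          rw [mul_zero, smul_eq_mul, hr, one_div]
  calc clairvoyantValue μ X a n
      ≤ M + ∫ ω, F ω ∂μ := step1
    _ = M + ∫ t in Set.Ioi (0:ℝ), ENNReal.toReal (μ {ω | t < F ω}) := by rw [step2]
    _ ≤ M + ∫ t in Set.Ioi (0:ℝ), g t := by linarith [step3]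
    _ = M + (1 / (2 * Real.sqrt n)) * ∫ u in Set.Ioi (0:ℝ),
          Real.exp (-u ^ 2 - (c / Real.sqrt n) * u) := by rw [step4]
end
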